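/- arXiv:0908.0171 — 8 statements merged into one kernel-verified Lean document; each statement's English description precedes it below -/
import Mathlib

section
/- For real s > -1, ∫₀¹ (2 sin πθ)^s dθ = Γ(s+1)/Γ(s/2+1)². -/
open Real MeasureTheory Set intervalIntegral

private lemma phi_deriv (θ : ℝ) :
    HasDerivAt (fun t : ℝ => Real.sin (π * t) ^ 2)
      (2 * π * Real.sin (π * θ) * Real.cos (π * θ)) θ := by
  have h1 : HasDerivAt (fun t : ℝ => π * t) π θ := by
    simpa using (hasDerivAt_id θ).const_mul π
  have h2 : HasDerivAt (fun t : ℝ => Real.sin (π * t)) (Real.cos (π * θ) * π) θ :=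
    (Real.hasDerivAt_sin (π * θ)).comp θ h1
  have h3 := h2.fun_pow 2
  exact h3.congr_deriv (by ring)

private lemma phi_inj : InjOn (fun t : ℝ => Real.sin (π * t) ^ 2) (Ioo (0:ℝ) (1/2)) := by
  have hmono : StrictMonoOn (fun t : ℝ => Real.sin (π * t) ^ 2) (Ioo (0:ℝ) (1/2)) := by
    intro a ha b hb hab
    have hpa : π * a ∈ Icc (-(π/2)) (π/2) := by
      constructor
      · nlinarith [pi_pos, ha.1]
      · nlinarith [pi_pos, ha.2]
    have hpb : π * b ∈ Icc (-(π/2)) (π/2) := by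
      constructor
      · nlinarith [pi_pos, hb.1]
      · nlinarith [pi_pos, hb.2]
    have hlt : Real.sin (π * a) < Real.sin (π * b) :=
      Real.strictMonoOn_sin hpa hpb (by nlinarith [pi_pos])
    have h0 : 0 ≤ Real.sin (π * a) :=
      Real.sin_nonneg_of_nonneg_of_le_pi (by nlinarith [pi_pos, ha.1]) (by nlinarith [pi_pos, ha.2])
    exact pow_lt_pow_left₀ hlt h0 two_ne_zero
  exact hmono.injOn

private lemma phi_img : (fun t : ℝ => Real.sin (π * t) ^ 2) '' (Ioo (0:ℝ) (1/2)) = Ioo (0:ℝ) 1 := by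
  ext y
  simp only [mem_image, mem_Ioo]
  constructor
  · rintro ⟨θ, ⟨h0, h1⟩, rfl⟩
    have hm1 : π * θ ∈ Icc (-(π/2)) (π/2) :=
      ⟨by nlinarith [pi_pos], by nlinarith [pi_pos]⟩
    have hm2 : π / 2 ∈ Icc (-(π/2)) (π/2) := ⟨by nlinarith [pi_pos], le_refl _⟩
    have hs0 : 0 < Real.sin (π * θ) :=
      Real.sin_pos_of_pos_of_lt_pi (by positivity) (by nlinarith [pi_pos])
    have hs1 : Real.sin (π * θ) < 1 := by
      have := Real.strictMonoOn_sin hm1 hm2 (by nlinarith [pi_pos])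
      simpa using this
    exact ⟨by positivity, by nlinarith⟩
  · rintro ⟨hy0, hy1⟩
    have hsy0 : 0 < Real.sqrt y := Real.sqrt_pos.mpr hy0
    have hsy1 : Real.sqrt y < 1 := by
      have h := Real.sqrt_lt_sqrt hy0.le hy1
      simpa using h
    have ha0 : 0 < Real.arcsin (Real.sqrt y) := Real.arcsin_pos.mpr hsy0
    have ha1 : Real.arcsin (Real.sqrt y) < π / 2 := Real.arcsin_lt_pi_div_two.mpr hsy1
    refine ⟨Real.arcsin (Real.sqrt y) / π, ⟨by positivity, ?_⟩, ?_⟩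
    · rw [div_lt_iff₀ pi_pos]
      nlinarith [pi_pos]
    · have hcanc : π * (Real.arcsin (Real.sqrt y) / π) = Real.arcsin (Real.sqrt y) := by
        field_simp
      rw [hcanc, Real.sin_arcsin (by linarith [Real.sqrt_nonneg y]) hsy1.le]
      exact Real.sq_sqrt hy0.le

private lemma cpow_eq_ofReal (s : ℝ) {x : ℝ} (hx : x ∈ Icc (0:ℝ) 1) :
    (x : ℂ) ^ ((((s+1)/2 : ℝ) : ℂ) - 1) * (1 - (x : ℂ)) ^ ((((1:ℝ)/2 : ℝ) : ℂ) - 1)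
      = ((x ^ ((s-1)/2) * (1-x) ^ (-(1:ℝ)/2) : ℝ) : ℂ) := by
  have h1 : (x : ℂ) ^ ((((s+1)/2 : ℝ) : ℂ) - 1) = ((x ^ ((s-1)/2) : ℝ) : ℂ) := by
    rw [Complex.ofReal_cpow hx.1]
    congr 1
    push_cast
    ring
  have h2 : (1 - (x : ℂ)) ^ ((((1:ℝ)/2 : ℝ) : ℂ) - 1) = (((1-x) ^ (-(1:ℝ)/2) : ℝ) : ℂ) := by
    rw [show (1 - (x:ℂ)) = (((1-x : ℝ)) : ℂ) by push_cast; ring,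
      Complex.ofReal_cpow (by linarith [hx.2])]
    congr 1
    push_cast
    ring
  rw [h1, h2, Complex.ofReal_mul]

/-- The real Beta integral value. -/
private lemma beta_value (s : ℝ) (hs : -1 < s) :
    ∫ x in (0:ℝ)..1, x ^ ((s-1)/2) * (1-x) ^ (-(1:ℝ)/2)
      = Real.Gamma ((s+1)/2) * Real.sqrt π / Real.Gamma (s/2+1) := by
  have hu : (0:ℝ) < (s+1)/2 := by linarith
  have hv : (0:ℝ) < 1/2 := by norm_num
  have hbeta := Complex.Gamma_mul_Gamma_eq_betaIntegral
    (s := (((s+1)/2 : ℝ) : ℂ)) (t := (((1:ℝ)/2 : ℝ) : ℂ))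
    (by simpa using hu) (by norm_num)
  have hBI : Complex.betaIntegral (((s+1)/2 : ℝ) : ℂ) (((1:ℝ)/2 : ℝ) : ℂ)
      = ((∫ x in (0:ℝ)..1, x ^ ((s-1)/2) * (1-x) ^ (-(1:ℝ)/2) : ℝ) : ℂ) := by
    rw [Complex.betaIntegral, ← intervalIntegral.integral_ofReal]
    apply intervalIntegral.integral_congr
    intro x hx
    rw [uIcc_of_le (by norm_num : (0:ℝ) ≤ 1)] at hx
    exact cpow_eq_ofReal s hx
  rw [hBI, Complex.Gamma_ofReal, Complex.Gamma_ofReal, ← Complex.ofReal_mul] at hbeta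
  rw [show (((s+1)/2 : ℝ) : ℂ) + (((1:ℝ)/2 : ℝ) : ℂ) = ((s/2 + 1 : ℝ) : ℂ) by push_cast; ring,
    Complex.Gamma_ofReal, ← Complex.ofReal_mul] at hbeta
  have hreal : Real.Gamma ((s+1)/2) * Real.Gamma (1/2)
      = Real.Gamma (s/2+1) * ∫ x in (0:ℝ)..1, x ^ ((s-1)/2) * (1-x) ^ (-(1:ℝ)/2) :=
    Complex.ofReal_inj.mp hbeta
  have hΓpos : 0 < Real.Gamma (s/2+1) := Real.Gamma_pos_of_pos (by linarith)
  rw [Real.Gamma_one_half_eq] at hreal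
  rw [eq_div_iff hΓpos.ne']
  linear_combination -hreal

theorem zeta_mahler_x_minus_one (s : ℝ) (hs : -1 < s) :
    ∫ θ in (0:ℝ)..1, (2 * Real.sin (π * θ)) ^ s
      = Real.Gamma (s + 1) / (Real.Gamma (s / 2 + 1)) ^ 2 := by
  set G : ℝ → ℝ := fun x => x ^ ((s-1)/2) * (1-x) ^ (-(1:ℝ)/2) with hG
  set φ : ℝ → ℝ := fun t => Real.sin (π * t) ^ 2 with hφ
  set φ' : ℝ → ℝ := fun t => 2 * π * Real.sin (π * t) * Real.cos (π * t) with hφ'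
  have hderiv : ∀ θ ∈ Ioo (0:ℝ) (1/2), HasDerivWithinAt φ (φ' θ) (Ioo (0:ℝ) (1/2)) θ :=
    fun θ _ => (phi_deriv θ).hasDerivWithinAt
  -- pointwise identity on Ioo 0 (1/2)
  have hpt : ∀ θ ∈ Ioo (0:ℝ) (1/2),
      |φ' θ| * G (φ θ) = 2 * π * Real.sin (π * θ) ^ s := by
    intro θ hθ
    obtain ⟨h0, h1⟩ := hθ
    have hsin : 0 < Real.sin (π * θ) :=
      Real.sin_pos_of_pos_of_lt_pi (by positivity) (by nlinarith [pi_pos])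
    have hcos : 0 < Real.cos (π * θ) :=
      Real.cos_pos_of_mem_Ioo ⟨by nlinarith [pi_pos], by nlinarith [pi_pos]⟩
    have habs : |φ' θ| = 2 * π * Real.sin (π * θ) * Real.cos (π * θ) := by
      rw [hφ']; exact abs_of_pos (by positivity)
    have hsq : (1:ℝ) - Real.sin (π * θ) ^ 2 = Real.cos (π * θ) ^ 2 := by
      rw [Real.cos_sq']
    have e1 : (Real.sin (π * θ) ^ 2) ^ ((s-1)/2) = Real.sin (π * θ) ^ (s-1) := by
      rw [← Real.rpow_natCast (Real.sin (π * θ)) 2, ← Real.rpow_mul hsin.le]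
      norm_num
      congr 1
      ring
    have e2 : (Real.cos (π * θ) ^ 2) ^ (-(1:ℝ)/2) = (Real.cos (π * θ))⁻¹ := by
      rw [← Real.rpow_natCast (Real.cos (π * θ)) 2, ← Real.rpow_mul hcos.le]
      norm_num
      rw [Real.rpow_neg_one]
    rw [habs, hG, hφ]
    simp only
    rw [hsq, e1, e2]
    rw [show s = (s - 1) + 1 by ring, Real.rpow_add hsin, Real.rpow_one]
    field_simp
    ring
  -- integrability of G on Ioo 0 1
  have hGint : IntegrableOn G (Ioo (0:ℝ) 1) := by
    have hc := Complex.betaIntegral_convergent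
      (u := (((s+1)/2 : ℝ) : ℂ)) (v := (((1:ℝ)/2 : ℝ) : ℂ))
      (by simp; linarith) (by norm_num)
    rw [intervalIntegrable_iff_integrableOn_Ioo_of_le (by norm_num : (0:ℝ) ≤ 1)] at hc
    have hre := hc.re
    refine MeasureTheory.IntegrableOn.congr_fun hre ?_ measurableSet_Ioo
    intro x hx
    have hx2 := cpow_eq_ofReal s ⟨hx.1.le, hx.2.le⟩
    simp only [hx2]
    simp
    rfl
  -- substitution
  have hsub : ∫ x in Ioo (0:ℝ) 1, G x = ∫ θ in Ioo (0:ℝ) (1/2), 2 * π * Real.sin (π * θ) ^ s := by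
    rw [← phi_img, integral_image_eq_integral_abs_deriv_smul measurableSet_Ioo hderiv phi_inj]
    apply setIntegral_congr_fun measurableSet_Ioo
    intro θ hθ
    simpa using hpt θ hθ
  have hsubint : IntegrableOn (fun θ => 2 * π * Real.sin (π * θ) ^ s) (Ioo (0:ℝ) (1/2)) := by
    have := (integrableOn_image_iff_integrableOn_abs_deriv_smul measurableSet_Ioo hderiv phi_inj
      G).mp (by rwa [phi_img])
    apply this.congr_fun ?_ measurableSet_Ioo
    intro θ hθ
    simpa using hpt θ hθ
  -- the function f
  set f : ℝ → ℝ := fun θ => (2 * Real.sin (π * θ)) ^ s with hf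
  have hfsym : ∀ x : ℝ, f (1 - x) = f x := by
    intro x
    simp only [hf]
    rw [show π * (1 - x) = π - π * x by ring, Real.sin_pi_sub]
  -- f equals 2^s * sin^s on [0,1]
  have hfeq : ∀ θ ∈ Icc (0:ℝ) 1, f θ = 2 ^ s * Real.sin (π * θ) ^ s := by
    intro θ hθ
    have : 0 ≤ Real.sin (π * θ) :=
      Real.sin_nonneg_of_nonneg_of_le_pi (mul_nonneg pi_pos.le hθ.1)
        (by nlinarith [pi_pos, hθ.2])
    rw [hf]
    exact Real.mul_rpow (by norm_num) this
  -- integrability of f on [0, 1/2]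
  have hInt1 : IntervalIntegrable f volume 0 (1/2) := by
    rw [intervalIntegrable_iff_integrableOn_Ioo_of_le (by norm_num : (0:ℝ) ≤ 1/2)]
    have h2 : IntegrableOn (fun θ => (2^s / (2*π)) * (2 * π * Real.sin (π * θ) ^ s))
        (Ioo (0:ℝ) (1/2)) := hsubint.const_mul _
    apply h2.congr_fun ?_ measurableSet_Ioo
    intro θ hθ
    have := hfeq θ ⟨hθ.1.le, by linarith [hθ.2]⟩
    rw [this]
    field_simp
  have hInt2 : IntervalIntegrable f volume (1/2) 1 := by
    have := (hInt1.comp_sub_left 1)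
    simp only [hfsym] at this
    norm_num at this
    exact this.symm
  -- symmetry
  have hhalf : ∫ θ in (1/2:ℝ)..1, f θ = ∫ θ in (0:ℝ)..(1/2), f θ := by
    have := intervalIntegral.integral_comp_sub_left (a := (0:ℝ)) (b := 1/2) f 1
    simp only [hfsym] at this
    norm_num at this
    rw [this]
  have hsplit : ∫ θ in (0:ℝ)..1, f θ = 2 * ∫ θ in (0:ℝ)..(1/2), f θ := by
    rw [← intervalIntegral.integral_add_adjacent_intervals hInt1 hInt2, hhalf]
    ring
  -- compute ∫ 0..1/2 f
  have hval : ∫ θ in (0:ℝ)..(1/2), f θ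
      = 2^s / (2*π) * ∫ x in (0:ℝ)..1, G x := by
    rw [intervalIntegral.integral_of_le (by norm_num : (0:ℝ) ≤ 1/2),
      MeasureTheory.integral_Ioc_eq_integral_Ioo,
      intervalIntegral.integral_of_le (by norm_num : (0:ℝ) ≤ 1),
      MeasureTheory.integral_Ioc_eq_integral_Ioo, hsub]
    rw [show ∫ θ in Ioo (0:ℝ) (1/2), f θ
        = ∫ θ in Ioo (0:ℝ) (1/2), (2^s/(2*π)) * (2 * π * Real.sin (π * θ) ^ s) from
      setIntegral_congr_fun measurableSet_Ioo (fun θ hθ => by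
        rw [hfeq θ ⟨hθ.1.le, by linarith [hθ.2]⟩]; field_simp)]
    rw [MeasureTheory.integral_const_mul]
  -- assemble
  rw [show (∫ θ in (0:ℝ)..1, (2 * Real.sin (π * θ)) ^ s) = ∫ θ in (0:ℝ)..1, f θ from rfl,
    hsplit, hval, beta_value s hs]
  -- Legendre duplication
  have hdup := Real.Gamma_mul_Gamma_add_half ((s+1)/2)
  rw [show (s+1)/2 + 1/2 = s/2 + 1 by ring, show 2 * ((s+1)/2) = s + 1 by ring] at hdup
  have hΓpos : 0 < Real.Gamma (s/2+1) := Real.Gamma_pos_of_pos (by linarith)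
  have hπ : 0 < Real.sqrt π := Real.sqrt_pos.mpr pi_pos
  have hsq : Real.sqrt π * Real.sqrt π = π := Real.mul_self_sqrt pi_pos.le
  have h2s : (2:ℝ) ^ s * (2:ℝ) ^ (-s) = 1 := by
    rw [← Real.rpow_add (by norm_num : (0:ℝ) < 2)]; simp
  have hdup2 : (2:ℝ)^s * (Real.Gamma ((s+1)/2) * Real.Gamma (s/2+1))
      = Real.Gamma (s+1) * Real.sqrt π := by
    rw [hdup, show (1 - (s+1)) = -s by ring]
    linear_combination Real.Gamma (s+1) * Real.sqrt π * h2s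
  have key : (2:ℝ)^s * Real.Gamma ((s+1)/2) * Real.sqrt π * Real.Gamma (s/2+1)
      = Real.Gamma (s+1) * π := by
    linear_combination Real.sqrt π * hdup2 + Real.Gamma (s+1) * hsq
  have hneπ : (π : ℝ) ≠ 0 := pi_ne_zero
  have hneΓ : Real.Gamma (s/2+1) ≠ 0 := hΓpos.ne'
  have lhs_eq : 2 * ((2:ℝ)^s/(2*π) * (Real.Gamma ((s+1)/2) * Real.sqrt π / Real.Gamma (s/2+1)))
      = (2^s * Real.Gamma ((s+1)/2) * Real.sqrt π) / (π * Real.Gamma (s/2+1)) := by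
    field_simp
  rw [lhs_eq, div_eq_div_iff (mul_ne_zero hneπ hneΓ) (pow_ne_zero 2 hneΓ)]
  linear_combination Real.Gamma (s/2+1) * key
end

section
/- For s and t in a neighborhood of 0 (real, with s, t > -1 and s + t > -1), ∫₀¹ |2 sin πθ|^s · |2 cos πθ|^t dθ = Γ(s+1)Γ(t+1) / (Γ(s/2+1)·Γ(t/2+1)·Γ((s+t)/2+1)). -/
open Real MeasureTheory Set


lemma betaReal_eq {a b : ℝ} (ha : 0 < a) (hb : 0 < b) :
    ∫ x in (0:ℝ)..1, x ^ (a - 1) * (1 - x) ^ (b - 1)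
      = Real.Gamma a * Real.Gamma b / Real.Gamma (a + b) := by
  have hab : (0:ℝ) < a + b := by linarith
  have hcast : Complex.betaIntegral a b
      = ((∫ x in (0:ℝ)..1, x ^ (a - 1) * (1 - x) ^ (b - 1) : ℝ) : ℂ) := by
    rw [Complex.betaIntegral, ← intervalIntegral.integral_ofReal]
    apply intervalIntegral.integral_congr
    intro x hx
    rw [Set.uIcc_of_le (by norm_num : (0:ℝ) ≤ 1)] at hx
    obtain ⟨hx0, hx1⟩ := hx
    simp only
    rw [show ((a:ℂ) - 1) = ((a-1:ℝ):ℂ) by push_cast; ring,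
      show ((b:ℂ) - 1) = ((b-1:ℝ):ℂ) by push_cast; ring,
      show ((1:ℂ) - (x:ℂ)) = ((1-x:ℝ):ℂ) by push_cast; ring,
      ← Complex.ofReal_cpow hx0 (a-1),
      ← Complex.ofReal_cpow (by linarith : (0:ℝ) ≤ 1 - x) (b-1)]
    push_cast
    ring
  have hC := Complex.Gamma_mul_Gamma_eq_betaIntegral
      (s := (a:ℂ)) (t := (b:ℂ)) (by simpa using ha) (by simpa using hb)
  rw [hcast, show ((a:ℂ) + b) = ((a+b:ℝ):ℂ) by push_cast; ring,
    Complex.Gamma_ofReal, Complex.Gamma_ofReal, Complex.Gamma_ofReal,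
    ← Complex.ofReal_mul, ← Complex.ofReal_mul] at hC
  have hR : Real.Gamma a * Real.Gamma b
      = Real.Gamma (a+b) * ∫ x in (0:ℝ)..1, x ^ (a - 1) * (1 - x) ^ (b - 1) := by
    exact_mod_cast hC
  rw [hR]
  field_simp [(Real.Gamma_pos_of_pos hab).ne']


lemma betaIntegrable {a b : ℝ} (ha : 0 < a) (hb : 0 < b) :
    IntegrableOn (fun x : ℝ => x ^ (a - 1) * (1 - x) ^ (b - 1)) (Ioo (0:ℝ) 1) := by
  have h := (Complex.betaIntegral_convergent (u := (a:ℂ)) (v := (b:ℂ))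
      (by simpa using ha) (by simpa using hb)).1
  have h2 := (h.mono_set Ioo_subset_Ioc_self).re
  apply MeasureTheory.IntegrableOn.congr_fun h2 ?_ measurableSet_Ioo
  intro x hx
  obtain ⟨hx0, hx1⟩ := hx
  simp only [Function.comp]
  rw [show ((a:ℂ) - 1) = ((a-1:ℝ):ℂ) by push_cast; ring,
    show ((b:ℂ) - 1) = ((b-1:ℝ):ℂ) by push_cast; ring,
    show ((1:ℂ) - (x:ℂ)) = ((1-x:ℝ):ℂ) by push_cast; ring,
    ← Complex.ofReal_cpow hx0.le (a-1),
    ← Complex.ofReal_cpow (by linarith : (0:ℝ) ≤ 1 - x) (b-1)]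
  simp

lemma image_sinsq : (fun θ : ℝ => Real.sin (π * θ) ^ 2) '' Ioo (0:ℝ) (1/2) = Ioo (0:ℝ) 1 := by
  ext u
  constructor
  · rintro ⟨θ, ⟨h0, h1⟩, rfl⟩
    have hπθ0 : 0 < π * θ := by positivity
    have hπθ1 : π * θ < π / 2 := by nlinarith [pi_pos]
    have hsin0 : 0 < Real.sin (π * θ) := Real.sin_pos_of_pos_of_lt_pi hπθ0 (by linarith [pi_pos])
    have hsin1 : Real.sin (π * θ) < 1 := by
      have := Real.strictMonoOn_sin (a := π * θ) (b := π / 2)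
        ⟨by linarith [pi_pos], by linarith⟩ ⟨by linarith [pi_pos], le_refl _⟩ hπθ1
      simpa using this
    refine ⟨by positivity, ?_⟩
    simp only
    nlinarith
  · rintro ⟨h0, h1⟩
    have hsq0 : 0 < Real.sqrt u := Real.sqrt_pos.mpr h0
    have hsq1 : Real.sqrt u < 1 := by
      rw [show (1:ℝ) = Real.sqrt 1 by simp]
      exact Real.sqrt_lt_sqrt h0.le h1
    refine ⟨Real.arcsin (Real.sqrt u) / π, ⟨?_, ?_⟩, ?_⟩
    · have : 0 < Real.arcsin (Real.sqrt u) := Real.arcsin_pos.mpr hsq0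
      positivity
    · have h2 : Real.arcsin (Real.sqrt u) < π / 2 := Real.arcsin_lt_pi_div_two.mpr hsq1
      rw [div_lt_iff₀ pi_pos]
      linarith [pi_pos]
    · simp only
      rw [show π * (Real.arcsin (Real.sqrt u) / π) = Real.arcsin (Real.sqrt u) by
          field_simp,
        Real.sin_arcsin (by linarith) (by linarith), Real.sq_sqrt h0.le]


lemma sinsq_hasDeriv (θ : ℝ) :
    HasDerivAt (fun θ : ℝ => Real.sin (π * θ) ^ 2)
      (π * (2 * Real.sin (π * θ) * Real.cos (π * θ))) θ := by
  have h1 : HasDerivAt (fun θ : ℝ => Real.sin (π * θ)) (Real.cos (π * θ) * π) θ := by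
    simpa [Function.comp_def] using (Real.hasDerivAt_sin (π * θ)).comp θ ((hasDerivAt_id θ).const_mul π)
  have h2 : HasDerivAt (fun θ : ℝ => Real.sin (π * θ) ^ 2) _ θ := h1.pow 2
  convert h2 using 1
  ring

lemma injOn_sinsq : InjOn (fun θ : ℝ => Real.sin (π * θ) ^ 2) (Ioo (0:ℝ) (1/2)) := by
  intro x ⟨hx0, hx1⟩ y ⟨hy0, hy1⟩ hxy
  simp only at hxy
  have hx' : π * x ∈ Icc (-(π/2)) (π/2) :=
    ⟨by nlinarith [pi_pos], by nlinarith [pi_pos]⟩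
  have hy' : π * y ∈ Icc (-(π/2)) (π/2) :=
    ⟨by nlinarith [pi_pos], by nlinarith [pi_pos]⟩
  have hsx : 0 ≤ Real.sin (π * x) :=
    (Real.sin_pos_of_pos_of_lt_pi (by positivity) (by nlinarith [pi_pos])).le
  have hsy : 0 ≤ Real.sin (π * y) :=
    (Real.sin_pos_of_pos_of_lt_pi (by positivity) (by nlinarith [pi_pos])).le
  have hsin : Real.sin (π * x) = Real.sin (π * y) := by
    have := congrArg Real.sqrt hxy
    rwa [Real.sqrt_sq hsx, Real.sqrt_sq hsy] at this
  have := Real.injOn_sin hx' hy' hsin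
  exact mul_left_cancel₀ (ne_of_gt pi_pos) this

lemma pointwise_eq (s t : ℝ) {θ : ℝ} (h1 : 0 < Real.sin (π * θ)) (h2 : Real.cos (π * θ) ≠ 0) :
    |π * (2 * Real.sin (π * θ) * Real.cos (π * θ))| *
      ((Real.sin (π * θ) ^ 2) ^ ((s+1)/2 - 1) * (1 - Real.sin (π * θ) ^ 2) ^ ((t+1)/2 - 1))
    = (2 * π / (2:ℝ) ^ (s + t)) * (|2 * Real.sin (π * θ)| ^ s * |2 * Real.cos (π * θ)| ^ t) := by
  set A := Real.sin (π * θ) with hA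
  set B := |Real.cos (π * θ)| with hB
  have hB0 : 0 < B := abs_pos.mpr h2
  have e1 : 1 - A ^ 2 = B ^ 2 := by rw [hB, sq_abs]; rw [hA]; rw [Real.cos_sq']
  have e2 : |π * (2 * A * Real.cos (π * θ))| = π * (2 * A * B) := by
    rw [abs_mul, abs_of_pos pi_pos, abs_mul, abs_mul, abs_of_pos h1]
    norm_num
    exact Or.inl hB.symm
  have e3 : ∀ (X : ℝ), 0 < X → ∀ (u : ℝ), (X ^ 2) ^ ((u+1)/2 - 1) = X ^ (u - 1) := by
    intro X hX u
    rw [← Real.rpow_natCast X 2, ← Real.rpow_mul hX.le]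
    norm_num
    ring_nf
  have e4 : |2 * A| ^ s = (2:ℝ) ^ s * A ^ s := by
    rw [abs_of_pos (by positivity : (0:ℝ) < 2 * A), Real.mul_rpow (by norm_num) h1.le]
  have e5 : |2 * Real.cos (π * θ)| ^ t = (2:ℝ) ^ t * B ^ t := by
    rw [abs_mul, ← hB, abs_of_pos (by norm_num : (0:ℝ) < (2:ℝ)),
      Real.mul_rpow (by norm_num) hB0.le]
  rw [e1, e2, e3 A h1 s, e3 B hB0 t, e4, e5]
  have hAs : A ^ s = A ^ (s - 1) * A := by
    rw [← Real.rpow_add_one (ne_of_gt h1)]; ring_nf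
  have hBt : B ^ t = B ^ (t - 1) * B := by
    rw [← Real.rpow_add_one (ne_of_gt hB0)]; ring_nf
  have h2st : (2:ℝ) ^ s * (2:ℝ) ^ t = (2:ℝ) ^ (s + t) := by
    rw [← Real.rpow_add (by norm_num)]
  have h2st0 : (0:ℝ) < (2:ℝ) ^ (s + t) := Real.rpow_pos_of_pos (by norm_num) _
  field_simp
  calc A * B * A ^ (s - 1) * B ^ (t - 1) * (2:ℝ) ^ (s+t)
      = ((2:ℝ)^s * (2:ℝ)^t) * ((A ^ (s-1) * A) * (B ^ (t-1) * B)) := by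
        rw [h2st]; ring
    _ = (2:ℝ) ^ s * A ^ s * (2:ℝ) ^ t * B ^ t := by rw [← hAs, ← hBt]; ring

theorem zeta_mahler_two (s t : ℝ) (hs : -1 < s) (ht : -1 < t) (hst : -1 < s + t) :
    ∫ θ in (0:ℝ)..1, |2 * Real.sin (π * θ)| ^ s * |2 * Real.cos (π * θ)| ^ t
      = Real.Gamma (s + 1) * Real.Gamma (t + 1) /
        (Real.Gamma (s / 2 + 1) * Real.Gamma (t / 2 + 1) * Real.Gamma ((s + t) / 2 + 1)) := by
  set F : ℝ → ℝ := fun θ => |2 * Real.sin (π * θ)| ^ s * |2 * Real.cos (π * θ)| ^ t with hF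
  set g : ℝ → ℝ := fun x => x ^ ((s+1)/2 - 1) * (1 - x) ^ ((t+1)/2 - 1) with hg
  have ha : (0:ℝ) < (s+1)/2 := by linarith
  have hb : (0:ℝ) < (t+1)/2 := by linarith
  have hc : (0:ℝ) < (2:ℝ) ^ (s+t) := Real.rpow_pos_of_pos (by norm_num) _
  -- basic trig positivity on (0, 1/2)
  have htrig : ∀ θ ∈ Ioo (0:ℝ) (1/2),
      0 < Real.sin (π * θ) ∧ 0 < Real.cos (π * θ) := by
    rintro θ ⟨h0, h1⟩
    constructor
    · exact Real.sin_pos_of_pos_of_lt_pi (by positivity) (by nlinarith [pi_pos])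
    · exact Real.cos_pos_of_mem_Ioo ⟨by nlinarith [pi_pos], by nlinarith [pi_pos]⟩
  have hD : ∀ x ∈ Ioo (0:ℝ) (1/2),
      HasDerivWithinAt (fun θ : ℝ => Real.sin (π * θ) ^ 2)
        (π * (2 * Real.sin (π * x) * Real.cos (π * x))) (Ioo (0:ℝ) (1/2)) x :=
    fun x _ => (sinsq_hasDeriv x).hasDerivWithinAt
  -- change of variables
  have hsub := integral_image_eq_integral_abs_deriv_smul measurableSet_Ioo hD injOn_sinsq g
  rw [image_sinsq] at hsub
  have hcongr : ∀ θ ∈ Ioo (0:ℝ) (1/2),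
      |π * (2 * Real.sin (π * θ) * Real.cos (π * θ))| • g (Real.sin (π * θ) ^ 2)
        = (2 * π / (2:ℝ) ^ (s + t)) * F θ := by
    intro θ hθ
    obtain ⟨h1, h2⟩ := htrig θ hθ
    rw [smul_eq_mul, hg, hF]
    exact pointwise_eq s t h1 h2.ne'
  rw [setIntegral_congr_fun measurableSet_Ioo hcongr, integral_const_mul] at hsub
  -- integrability of F on Ioo 0 (1/2)
  have hgi : IntegrableOn g (Ioo (0:ℝ) 1) := betaIntegrable ha hb
  have hFi : IntegrableOn F (Ioo (0:ℝ) (1/2)) := by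
    have := (integrableOn_image_iff_integrableOn_abs_deriv_smul measurableSet_Ioo hD
      injOn_sinsq g).mp (by rwa [image_sinsq])
    have h2 := (this.congr_fun hcongr measurableSet_Ioo).const_mul ((2:ℝ) ^ (s+t) / (2 * π))
    apply MeasureTheory.IntegrableOn.congr_fun h2 ?_ measurableSet_Ioo
    intro x _
    field_simp
  have hF1 : IntervalIntegrable F volume 0 (1/2) := by
    rwa [intervalIntegrable_iff_integrableOn_Ioo_of_le (by norm_num)]
  -- symmetry
  have hFsym : ∀ x : ℝ, F (1 - x) = F x := by
    intro x
    rw [hF]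
    simp only
    rw [show π * (1 - x) = π - π * x by ring, Real.sin_pi_sub, Real.cos_pi_sub,
      show 2 * -Real.cos (π * x) = -(2 * Real.cos (π * x)) by ring, abs_neg]
  have hF2 : IntervalIntegrable F volume (1/2) 1 := by
    have h3 := hF1.comp_sub_left 1
    rw [show (fun x => F (1 - x)) = F from funext hFsym] at h3
    norm_num at h3
    exact h3.symm
  have hsplit : ∫ θ in (0:ℝ)..1, F θ = (∫ θ in (0:ℝ)..(1/2:ℝ), F θ) + ∫ θ in (1/2:ℝ)..1, F θ :=
    (intervalIntegral.integral_add_adjacent_intervals hF1 hF2).symm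
  have hrefl : ∫ θ in (1/2:ℝ)..1, F θ = ∫ θ in (0:ℝ)..(1/2:ℝ), F θ := by
    have h4 := intervalIntegral.integral_comp_sub_left F 1 (a := (0:ℝ)) (b := (1/2:ℝ))
    rw [show (1:ℝ) - 1/2 = 1/2 by norm_num, show (1:ℝ) - 0 = 1 by norm_num] at h4
    rw [← h4]
    exact intervalIntegral.integral_congr fun x _ => hFsym x
  have hIoo : ∫ θ in (0:ℝ)..(1/2:ℝ), F θ = ∫ θ in Ioo (0:ℝ) (1/2), F θ := by
    rw [intervalIntegral.integral_of_le (by norm_num), integral_Ioc_eq_integral_Ioo]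
  have hbeta : ∫ x in Ioo (0:ℝ) 1, g x
      = Real.Gamma ((s+1)/2) * Real.Gamma ((t+1)/2) / Real.Gamma ((s+t)/2 + 1) := by
    rw [← integral_Ioc_eq_integral_Ioo, ← intervalIntegral.integral_of_le (by norm_num : (0:ℝ) ≤ 1)]
    rw [hg]
    rw [betaReal_eq ha hb, show (s+1)/2 + (t+1)/2 = (s+t)/2 + 1 by ring]
  -- put together
  have hval : ∫ θ in Ioo (0:ℝ) (1/2), F θ
      = ((2:ℝ) ^ (s+t) / (2 * π)) *
        (Real.Gamma ((s+1)/2) * Real.Gamma ((t+1)/2) / Real.Gamma ((s+t)/2 + 1)) := by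
    rw [← hbeta, hsub]
    field_simp
  rw [hsplit, hrefl, hIoo, hval]
  -- Gamma gymnastics
  have dup : ∀ u : ℝ, -1 < u →
      Real.Gamma ((u+1)/2) * Real.Gamma (u/2 + 1)
        = Real.Gamma (u+1) * (2:ℝ) ^ (-u) * Real.sqrt π := by
    intro u hu
    have h := Real.Gamma_mul_Gamma_add_half ((u+1)/2)
    rw [show (u+1)/2 + 1/2 = u/2 + 1 by ring, show 2*((u+1)/2) = u+1 by ring,
      show (1:ℝ) - (u+1) = -u by ring] at h
    exact h
  have hs2 : (0:ℝ) < Real.Gamma (s/2 + 1) := Real.Gamma_pos_of_pos (by linarith)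
  have ht2 : (0:ℝ) < Real.Gamma (t/2 + 1) := Real.Gamma_pos_of_pos (by linarith)
  have hst2 : (0:ℝ) < Real.Gamma ((s+t)/2 + 1) := Real.Gamma_pos_of_pos (by linarith)
  have hπ : Real.sqrt π * Real.sqrt π = π := Real.mul_self_sqrt pi_pos.le
  have hpow : (2:ℝ) ^ (-s) * (2:ℝ) ^ (-t) * (2:ℝ) ^ (s+t) = 1 := by
    rw [← Real.rpow_add (by norm_num), ← Real.rpow_add (by norm_num),
      show -s + -t + (s + t) = 0 by ring, Real.rpow_zero]
  have hGa : Real.Gamma ((s+1)/2) = Real.Gamma (s+1) * (2:ℝ) ^ (-s) * Real.sqrt π /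
      Real.Gamma (s/2 + 1) := by
    rw [eq_div_iff hs2.ne']; exact dup s hs
  have hGb : Real.Gamma ((t+1)/2) = Real.Gamma (t+1) * (2:ℝ) ^ (-t) * Real.sqrt π /
      Real.Gamma (t/2 + 1) := by
    rw [eq_div_iff ht2.ne']; exact dup t ht
  have e : Real.Gamma ((s+1)/2) * Real.Gamma ((t+1)/2) * (2:ℝ)^(s+t) *
      (Real.Gamma (s/2+1) * Real.Gamma (t/2+1))
      = π * (Real.Gamma (s+1) * Real.Gamma (t+1)) := by
    calc Real.Gamma ((s+1)/2) * Real.Gamma ((t+1)/2) * (2:ℝ)^(s+t) *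
        (Real.Gamma (s/2+1) * Real.Gamma (t/2+1))
        = (Real.Gamma ((s+1)/2) * Real.Gamma (s/2+1)) *
          (Real.Gamma ((t+1)/2) * Real.Gamma (t/2+1)) * (2:ℝ)^(s+t) := by ring
      _ = (Real.Gamma (s+1) * (2:ℝ)^(-s) * Real.sqrt π) *
          (Real.Gamma (t+1) * (2:ℝ)^(-t) * Real.sqrt π) * (2:ℝ)^(s+t) := by
            rw [dup s hs, dup t ht]
      _ = (Real.sqrt π * Real.sqrt π) * ((2:ℝ)^(-s) * (2:ℝ)^(-t) * (2:ℝ)^(s+t)) *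
          (Real.Gamma (s+1) * Real.Gamma (t+1)) := by ring
      _ = π * (Real.Gamma (s+1) * Real.Gamma (t+1)) := by rw [hπ, hpow]; ring
  have h5 : (2:ℝ)^(s+t)/(2*π) * (Real.Gamma ((s+1)/2) * Real.Gamma ((t+1)/2) /
        Real.Gamma ((s+t)/2+1)) + (2:ℝ)^(s+t)/(2*π) * (Real.Gamma ((s+1)/2) *
        Real.Gamma ((t+1)/2) / Real.Gamma ((s+t)/2+1))
      = (Real.Gamma ((s+1)/2) * Real.Gamma ((t+1)/2) * (2:ℝ)^(s+t)) /
        (π * Real.Gamma ((s+t)/2+1)) := by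
    field_simp
    ring
  rw [h5, div_eq_div_iff (by positivity) (by positivity)]
  linear_combination Real.Gamma ((s+t)/2+1) * e
end

section
/- The function s ↦ Γ(s+1)/Γ(s/2+1)² has the expansion exp(∑_{k≥2} (-1)^k (1 - 2^{1-k}) ζ(k) s^k / k) in a neighborhood of s = 0. -/
open Real Complex

open scoped Nat


noncomputable def Ck (s : ℝ) (k : ℕ) : ℝ :=
  (-1) ^ (k + 2) * (1 - (2:ℝ) ^ (-(k:ℤ) - 1)) * s ^ (k + 2) / ((k:ℝ) + 2)

lemma log1p_series {t : ℝ} (ht : |t| < 1) :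
    HasSum (fun K : ℕ => (-1) ^ K * t ^ (K + 1) / (K + 1)) (Real.log (1 + t)) := by
  have h := (hasSum_pow_div_log_of_abs_lt_one (x := -t) (by rwa [_root_.abs_neg])).neg
  rw [neg_neg, sub_neg_eq_add] at h
  refine h.congr_fun fun n => ?_
  rw [neg_pow]
  ring

lemma hasSum_L {s : ℝ} (hs : |s| < 1/2) (m : ℕ) :
    HasSum (fun k : ℕ => Ck s k * (1 / ((m:ℝ) + 1)) ^ (k + 2))
      (2 * Real.log (1 + s / (2 * ((m:ℝ) + 1))) - Real.log (1 + s / ((m:ℝ) + 1))) := by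
  have hm : (1:ℝ) ≤ (m:ℝ) + 1 := by
    have := Nat.cast_nonneg (α := ℝ) m; linarith
  have hm0 : (0:ℝ) < (m:ℝ) + 1 := by positivity
  set t : ℝ := s / ((m:ℝ) + 1) with htdef
  have hts : |t| ≤ |s| := by
    rw [htdef, _root_.abs_div, abs_of_pos hm0]
    exact div_le_self (abs_nonneg s) hm
  have ht : |t| < 1 := lt_of_le_of_lt hts (hs.trans (by norm_num))
  have ht2 : |t/2| < 1 := by
    rw [_root_.abs_div, _root_.abs_two]
    linarith [abs_nonneg t]
  have hrw : s / (2 * ((m:ℝ) + 1)) = t / 2 := by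
    rw [htdef, div_div]; ring_nf
  rw [hrw]
  have H := ((log1p_series ht2).mul_left 2).sub (log1p_series ht)
  set f : ℕ → ℝ := fun K => 2 * ((-1) ^ K * (t/2) ^ (K + 1) / (K + 1)) -
      (-1) ^ K * t ^ (K + 1) / (K + 1) with hfdef
  have h0 : f 0 = 0 := by simp [hfdef]; ring
  have H1 : HasSum (fun k : ℕ => f (k + 1))
      (2 * Real.log (1 + t/2) - Real.log (1 + t)) := by
    rw [hasSum_nat_add_iff 1]
    simpa [h0] using H
  refine H1.congr_fun fun k => ?_
  have hk2 : ((k:ℝ) + 1 + 1) ≠ 0 := by positivity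
  have h2k : ((2:ℝ) ^ (k+1)) ≠ 0 := by positivity
  have hz : ((2:ℝ):ℝ) ^ (-(k:ℤ) - 1) = ((2:ℝ) ^ (k+1))⁻¹ := by
    have : (-(k:ℤ) - 1) = -((k+1 : ℕ) : ℤ) := by push_cast; ring
    rw [this, zpow_neg, zpow_natCast]
  have e1 : s ^ (k+2) * (1/((m:ℝ)+1))^(k+2) = t^(k+2) := by
    rw [← mul_pow, mul_one_div, htdef]
  have hk0 : ((k:ℝ) + 2) ≠ 0 := by positivity
  calc Ck s k * (1 / ((m:ℝ) + 1)) ^ (k + 2)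
      = (-1) ^ (k + 2) * (1 - (2:ℝ) ^ (-(k:ℤ) - 1)) *
          (s ^ (k+2) * (1/((m:ℝ)+1))^(k+2)) / ((k:ℝ) + 2) := by
        rw [Ck]; ring
    _ = (-1) ^ (k + 2) * (1 - ((2:ℝ) ^ (k+1))⁻¹) * t ^ (k+2) / ((k:ℝ) + 2) := by
        rw [e1, hz]
    _ = f (k + 1) := by
        simp only [hfdef, div_pow]
        push_cast
        field_simp
        ring

set_option maxHeartbeats 2000000 in
lemma summable_F {s : ℝ} (hs : |s| < 1/2) :
    Summable (fun p : ℕ × ℕ => Ck s p.1 * (1 / ((p.2:ℝ) + 1)) ^ (p.1 + 2)) := by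
  have h1 : Summable (fun k : ℕ => (1/2 : ℝ) ^ (k + 2)) :=
    (summable_geometric_of_lt_one (by norm_num) (by norm_num)).comp_injective
      (add_left_injective 2)
  have h2 : Summable (fun m : ℕ => (1 / ((m:ℝ) + 1)) ^ 2) := by
    have := Real.summable_one_div_nat_pow.mpr (le_refl 2)
    rw [← summable_nat_add_iff 1] at this
    refine this.congr fun m => ?_
    push_cast
    rw [div_pow, one_pow]
  have hb : Summable (fun p : ℕ × ℕ => (1/2 : ℝ) ^ (p.1 + 2) * (1 / ((p.2:ℝ) + 1)) ^ 2) :=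
    h1.mul_of_nonneg h2 (fun k => by positivity) (fun m => by positivity)
  refine Summable.of_norm_bounded hb ?_
  rintro ⟨k, m⟩
  have hm0 : (0:ℝ) < (m:ℝ) + 1 := by positivity
  have hm1 : (1 / ((m:ℝ) + 1)) ≤ 1 := by
    rw [div_le_one hm0]; linarith [Nat.cast_nonneg (α := ℝ) m]
  have hCk : |Ck s k| ≤ (1/2 : ℝ) ^ (k + 2) := by
    rw [Ck, _root_.abs_div, _root_.abs_mul, _root_.abs_mul, _root_.abs_pow, _root_.abs_neg, _root_.abs_one, one_pow, one_mul]
    have hz : (0:ℝ) < (2:ℝ) ^ (-(k:ℤ) - 1) := by positivity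
    have hz1 : (2:ℝ) ^ (-(k:ℤ) - 1) ≤ 1 := by
      apply zpow_le_one_of_nonpos₀ (by norm_num)
      omega
    have h1 : |1 - (2:ℝ) ^ (-(k:ℤ) - 1)| ≤ 1 := by
      rw [abs_le]; constructor <;> linarith
    have h2 : |s ^ (k+2)| ≤ (1/2:ℝ) ^ (k+2) := by
      rw [_root_.abs_pow]
      exact pow_le_pow_left₀ (abs_nonneg s) hs.le _
    have h3 : (1:ℝ) ≤ |(k:ℝ) + 2| := by
      rw [abs_of_pos (by positivity)]; linarith [Nat.cast_nonneg (α := ℝ) k]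
    calc |1 - (2:ℝ) ^ (-(k:ℤ) - 1)| * |s ^ (k+2)| / |(k:ℝ) + 2|
        ≤ 1 * (1/2:ℝ)^(k+2) / 1 := by
          gcongr
      _ = (1/2:ℝ)^(k+2) := by ring
  calc ‖Ck s k * (1 / ((m:ℝ) + 1)) ^ (k + 2)‖
      = |Ck s k| * (1 / ((m:ℝ) + 1)) ^ (k + 2) := by
        rw [norm_mul, Real.norm_eq_abs, Real.norm_eq_abs, _root_.abs_pow,
          abs_of_pos (show (0:ℝ) < 1/((m:ℝ)+1) by positivity)]
    _ ≤ (1/2:ℝ) ^ (k+2) * (1 / ((m:ℝ) + 1)) ^ 2 := by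
        apply mul_le_mul hCk ?_ (by positivity) (by positivity)
        calc (1 / ((m:ℝ) + 1)) ^ (k + 2) ≤ (1 / ((m:ℝ) + 1)) ^ 2 :=
          pow_le_pow_of_le_one (by positivity) hm1 (by omega)

lemma prod_a_eq {s : ℝ} (hs : |s| < 1/2) (n : ℕ) (hn : 1 ≤ n) :
    ∏ j ∈ Finset.range (n+1), (1 + s/(2*((j:ℝ)+1)))^2 / (1 + s/((j:ℝ)+1))
      = (n:ℝ)/((n:ℝ)+1) * (Real.GammaSeq (s+1) n / (Real.GammaSeq (s/2+1) n)^2) := by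
  have hs1 : -(1/2 : ℝ) < s := (abs_lt.mp hs).1
  have hn0 : (0:ℝ) < (n:ℝ) := by exact_mod_cast hn
  have hp1 : ∀ j : ℕ, (0:ℝ) < s + 1 + j := fun j => by
    have := Nat.cast_nonneg (α := ℝ) j; linarith
  have hp2 : ∀ j : ℕ, (0:ℝ) < s/2 + 1 + j := fun j => by
    have := Nat.cast_nonneg (α := ℝ) j; linarith
  have hj1 : ∀ j : ℕ, (0:ℝ) < (j:ℝ) + 1 := fun j => by positivity
  have step1 : ∀ j ∈ Finset.range (n+1),
      (1 + s/(2*((j:ℝ)+1)))^2 / (1 + s/((j:ℝ)+1))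
        = (s/2 + 1 + j)^2 / (((j:ℝ)+1) * (s + 1 + j)) := by
    intro j _
    rw [div_eq_div_iff]
    · field_simp
      ring
    · have h := hp1 j
      have h2 := hj1 j
      have : (0:ℝ) < 1 + s/((j:ℝ)+1) := by
        rw [show (1 + s/((j:ℝ)+1)) = (s + 1 + j)/((j:ℝ)+1) by field_simp; ring]
        positivity
      exact this.ne'
    · exact (mul_pos (hj1 j) (hp1 j)).ne'
  rw [Finset.prod_congr rfl step1]
  have hP1 : (0:ℝ) < ∏ j ∈ Finset.range (n+1), (s + 1 + j) :=
    Finset.prod_pos fun j _ => hp1 j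
  have hP2 : (0:ℝ) < ∏ j ∈ Finset.range (n+1), (s/2 + 1 + j) :=
    Finset.prod_pos fun j _ => hp2 j
  have hfact : (∏ j ∈ Finset.range (n+1), ((j:ℝ)+1)) = ((n+1)! : ℝ) := by
    calc ∏ j ∈ Finset.range (n+1), ((j:ℝ)+1)
        = ((∏ j ∈ Finset.range (n+1), (j+1) : ℕ) : ℝ) := by push_cast; rfl
      _ = _ := by rw [Finset.prod_range_add_one_eq_factorial]
  have hprod : ∏ j ∈ Finset.range (n+1), (s/2 + 1 + (j:ℝ))^2 / (((j:ℝ)+1) * (s + 1 + j))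
      = (∏ j ∈ Finset.range (n+1), (s/2 + 1 + (j:ℝ)))^2
        / (((n+1)! : ℝ) * ∏ j ∈ Finset.range (n+1), (s + 1 + j)) := by
    rw [Finset.prod_div_distrib, Finset.prod_mul_distrib, Finset.prod_pow, hfact]
  rw [hprod]
  rw [Real.GammaSeq, Real.GammaSeq]
  have hrpow1 : (n:ℝ) ^ (s + 1) = (n:ℝ) ^ s * n := by
    rw [Real.rpow_add hn0, Real.rpow_one]
  have hrpow2 : ((n:ℝ) ^ (s/2 + 1))^2 = (n:ℝ) ^ s * (n:ℝ)^2 := by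
    rw [sq, ← Real.rpow_add hn0]
    rw [show (s/2 + 1 + (s/2 + 1)) = s + 2 by ring, Real.rpow_add hn0,
      Real.rpow_two]
  have hxs : (0:ℝ) < (n:ℝ) ^ s := Real.rpow_pos_of_pos hn0 s
  have hfac : (0:ℝ) < (n ! : ℝ) := by exact_mod_cast n.factorial_pos
  have hfacs : ((n+1)! : ℝ) = ((n:ℝ)+1) * (n ! : ℝ) := by
    rw [Nat.factorial_succ]; push_cast; ring
  rw [div_pow, mul_pow, hrpow1, hrpow2, hfacs]
  field_simp

set_option maxHeartbeats 2000000 in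
theorem gamma_ratio_exp_zeta :
    ∃ ε > (0:ℝ), ∀ s : ℝ, |s| < ε →
      ((Real.Gamma (s + 1) / (Real.Gamma (s / 2 + 1)) ^ 2 : ℝ) : ℂ)
        = Complex.exp (∑' k : ℕ,
            (-1) ^ (k + 2) * (1 - (2:ℂ) ^ (-(k:ℤ) - 1)) * riemannZeta (k + 2)
              * (s:ℂ) ^ (k + 2) / ((k:ℂ) + 2)) := by
  refine ⟨1/2, by norm_num, fun s hs => ?_⟩
  have hsumF := summable_F hs
  set F : ℕ × ℕ → ℝ := fun p => Ck s p.1 * (1 / ((p.2:ℝ) + 1)) ^ (p.1 + 2) with hF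
  set S : ℝ := ∑' p : ℕ × ℕ, F p with hSdef
  -- positivity facts
  have hpos : ∀ m : ℕ, (0:ℝ) < 1 + s / ((m:ℝ) + 1) ∧ (0:ℝ) < 1 + s / (2*((m:ℝ) + 1)) := by
    intro m
    have hm0 : (1:ℝ) ≤ (m:ℝ) + 1 := by
      have := Nat.cast_nonneg (α := ℝ) m; linarith
    have h1 : |s / ((m:ℝ)+1)| < 1 := by
      rw [_root_.abs_div, abs_of_pos (show (0:ℝ) < (m:ℝ)+1 by linarith)]
      have : |s| / ((m:ℝ)+1) ≤ |s| := div_le_self (abs_nonneg s) hm0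
      linarith
    have h2 : |s / (2*((m:ℝ)+1))| < 1 := by
      rw [_root_.abs_div, abs_of_pos (show (0:ℝ) < 2*((m:ℝ)+1) by linarith)]
      have : |s| / (2*((m:ℝ)+1)) ≤ |s| := div_le_self (abs_nonneg s) (by linarith)
      linarith
    constructor
    · have := (abs_lt.mp h1).1; linarith
    · have := (abs_lt.mp h2).1; linarith
  -- per-m hassum
  have hL : ∀ m : ℕ, HasSum (fun k => F (k, m))
      (2 * Real.log (1 + s/(2*((m:ℝ)+1))) - Real.log (1 + s/((m:ℝ)+1))) :=
    fun m => hasSum_L hs m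
  have hswap : HasSum (fun q : ℕ × ℕ => F (q.2, q.1)) S :=
    ((Equiv.prodComm ℕ ℕ).hasSum_iff).2 hsumF.hasSum
  have hLsum : HasSum (fun m : ℕ =>
      2 * Real.log (1 + s/(2*((m:ℝ)+1))) - Real.log (1 + s/((m:ℝ)+1))) S :=
    hswap.prod_fiberwise hL
  -- exp side
  have htendsto1 : Filter.Tendsto (fun N : ℕ => ∏ m ∈ Finset.range N,
      (1 + s/(2*((m:ℝ)+1)))^2 / (1 + s/((m:ℝ)+1))) Filter.atTop (nhds (Real.exp S)) := by
    have h1 := hLsum.tendsto_sum_nat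
    have h2 := (Real.continuous_exp.tendsto S).comp h1
    refine h2.congr fun N => ?_
    rw [Function.comp_apply, Real.exp_sum]
    refine Finset.prod_congr rfl fun m _ => ?_
    obtain ⟨hv, hu⟩ := hpos m
    rw [Real.exp_sub, two_mul, Real.exp_add, Real.exp_log hu, Real.exp_log hv]
    ring
  -- Gamma side
  have hΓpos : (0:ℝ) < Real.Gamma (s/2 + 1) := by
    apply Real.Gamma_pos_of_pos
    have := (abs_lt.mp hs).1; linarith
  have hG1 : Filter.Tendsto (fun n : ℕ => (n:ℝ)/((n:ℝ)+1) *
      (Real.GammaSeq (s+1) n / (Real.GammaSeq (s/2+1) n)^2)) Filter.atTop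
      (nhds (1 * (Real.Gamma (s+1) / (Real.Gamma (s/2+1))^2))) := by
    apply Filter.Tendsto.mul
    · exact_mod_cast tendsto_natCast_div_add_atTop (1:ℝ)
    · exact (Real.GammaSeq_tendsto_Gamma (s+1)).div
        ((Real.GammaSeq_tendsto_Gamma (s/2+1)).pow 2) (by positivity)
  rw [one_mul] at hG1
  have hG2 : Filter.Tendsto (fun n : ℕ => ∏ j ∈ Finset.range (n+1),
      (1 + s/(2*((j:ℝ)+1)))^2 / (1 + s/((j:ℝ)+1))) Filter.atTop
      (nhds (Real.Gamma (s+1) / (Real.Gamma (s/2+1))^2)) := by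
    apply hG1.congr'
    filter_upwards [Filter.eventually_ge_atTop 1] with n hn
    exact (prod_a_eq hs n hn).symm
  have hG3 : Filter.Tendsto (fun N : ℕ => ∏ j ∈ Finset.range N,
      (1 + s/(2*((j:ℝ)+1)))^2 / (1 + s/((j:ℝ)+1))) Filter.atTop
      (nhds (Real.Gamma (s+1) / (Real.Gamma (s/2+1))^2)) :=
    (Filter.tendsto_add_atTop_iff_nat 1).mp hG2
  have hRS : Real.exp S = Real.Gamma (s+1) / (Real.Gamma (s/2+1))^2 :=
    tendsto_nhds_unique htendsto1 hG3
  -- now the complex side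
  have hK : HasSum (fun k : ℕ => ∑' m : ℕ, F (k, m)) S :=
    hsumF.hasSum.prod_fiberwise (fun k => (hsumF.prod_factor k).hasSum)
  have hZ : ∀ k : ℕ, riemannZeta ((k:ℂ) + 2)
      = ((∑' m : ℕ, (1 / ((m:ℝ) + 1)) ^ (k + 2) : ℝ) : ℂ) := by
    intro k
    have harg : ((k:ℂ) + 2) = ((k + 2 : ℕ) : ℂ) := by push_cast; ring
    rw [harg, zeta_eq_tsum_one_div_nat_add_one_cpow (by
      rw [Complex.natCast_re]; exact_mod_cast (by omega : 1 < k + 2)),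
      Complex.ofReal_tsum]
    congr 1
    ext n
    rw [Complex.cpow_natCast]
    push_cast
    rw [div_pow, one_pow]
  have hterm : ∀ k : ℕ,
      (-1) ^ (k + 2) * (1 - (2:ℂ) ^ (-(k:ℤ) - 1)) * riemannZeta ((k:ℂ) + 2)
        * (s:ℂ) ^ (k + 2) / ((k:ℂ) + 2) = ((∑' m : ℕ, F (k, m) : ℝ) : ℂ) := by
    intro k
    have hmul : (∑' m : ℕ, F (k, m) : ℝ)
        = Ck s k * ∑' m : ℕ, (1 / ((m:ℝ) + 1)) ^ (k + 2) := by
      simp only [hF]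
      exact tsum_mul_left
    rw [hmul, hZ k, Ck]
    push_cast
    ring
  calc ((Real.Gamma (s + 1) / (Real.Gamma (s / 2 + 1)) ^ 2 : ℝ) : ℂ)
      = ((Real.exp S : ℝ) : ℂ) := by rw [hRS]
    _ = Complex.exp ((S : ℝ) : ℂ) := by rw [Complex.ofReal_exp]
    _ = _ := by
        congr 1
        rw [← hK.tsum_eq, Complex.ofReal_tsum]
        congr 1
        ext k
        exact (hterm k).symm
end

section
/- For real t with |t| ≤ 1/4, ∑_{k≥1} C(2k,k) t^k / k² = 2 Li₂((1 - √(1-4t))/2) - (log((1 + √(1-4t))/2))², where C(2k,k) is the central binomial coefficient and Li₂ the dilogarithm. -/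
open Real

/-- The real dilogarithm `Li₂(x) = ∑_{n ≥ 1} xⁿ / n²`. -/
noncomputable def Li2 (x : ℝ) : ℝ := ∑' n : ℕ, x ^ (n + 1) / ((n : ℝ) + 1) ^ 2

namespace CBD

noncomputable def cb (k : ℕ) : ℝ := (Nat.centralBinom k : ℝ)

lemma cb_nonneg (k : ℕ) : 0 ≤ cb k := Nat.cast_nonneg _

lemma cb_le (k : ℕ) : cb k ≤ 4 ^ k := by
  have h1 : Nat.centralBinom k ≤ 4 ^ k :=
    calc Nat.centralBinom k = (2*k).choose k := rfl
    _ ≤ (2*k+1).choose k := Nat.choose_le_choose k (by omega)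
    _ ≤ 4 ^ k := Nat.choose_middle_le_pow k
  unfold cb
  exact_mod_cast h1

lemma cb_rec (k : ℕ) : ((k:ℝ)+1) * cb (k+1) = (4*(k:ℝ)+2) * cb k := by
  have h : (((k+1) * Nat.centralBinom (k+1) : ℕ) : ℝ)
      = ((2*(2*k+1)*Nat.centralBinom k : ℕ) : ℝ) := by
    rw [Nat.succ_mul_centralBinom_succ]
  push_cast at h
  unfold cb
  linarith

lemma cb_one : cb 1 = 2 := by norm_num [cb, Nat.centralBinom]

lemma cb_zero : cb 0 = 1 := by norm_num [cb, Nat.centralBinom]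

lemma one_lt_sqrt2 : 1 < Real.sqrt 2 := by
  nlinarith [Real.sq_sqrt (by norm_num : (0:ℝ) ≤ 2), Real.sqrt_nonneg 2]

lemma sqrt2_lt_two : Real.sqrt 2 < 2 := by
  nlinarith [Real.sq_sqrt (by norm_num : (0:ℝ) ≤ 2), Real.sqrt_nonneg 2]

def Iv : Set ℝ := Set.Ioo ((1 - Real.sqrt 2)/2) (1/2)

lemma zero_mem_Iv : (0:ℝ) ∈ Iv :=
  ⟨by nlinarith [one_lt_sqrt2], by norm_num⟩

lemma Iv_pos1 {x : ℝ} (hx : x ∈ Iv) : 0 < 1 - 2*x := by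
  obtain ⟨h1, h2⟩ := hx; linarith

lemma Iv_pos2 {x : ℝ} (hx : x ∈ Iv) : 0 < 1 - x := by
  obtain ⟨h1, h2⟩ := hx; linarith

lemma Iv_abs_lt_one {x : ℝ} (hx : x ∈ Iv) : |x| < 1 := by
  obtain ⟨h1, h2⟩ := hx
  rw [abs_lt]
  constructor <;> nlinarith [sqrt2_lt_two, one_lt_sqrt2]

lemma abs_u_lt {x : ℝ} (hx : x ∈ Iv) : |x*(1-x)| < 1/4 := by
  obtain ⟨h1, h2⟩ := hx
  rw [abs_lt]
  constructor
  · nlinarith [Real.sq_sqrt (by norm_num : (0:ℝ) ≤ 2), Real.sqrt_nonneg 2]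
  · nlinarith

lemma u_le_u {x y : ℝ} (hxy : x ≤ y) (hy : y ≤ 1/2) : x*(1-x) ≤ y*(1-y) := by nlinarith

lemma abs_u_le {a b x : ℝ} (hb : b < 1/2) (hx : x ∈ Set.Ioo a b) :
    |x*(1-x)| ≤ max |a*(1-a)| |b*(1-b)| := by
  have h1 : x*(1-x) ≤ b*(1-b) := u_le_u hx.2.le hb.le
  have h2 : a*(1-a) ≤ x*(1-x) := u_le_u hx.1.le (by linarith [hx.2])
  rw [abs_le]
  constructor
  · calc -(max |a*(1-a)| |b*(1-b)|) ≤ -|a*(1-a)| := neg_le_neg (le_max_left _ _)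
      _ ≤ a*(1-a) := neg_abs_le _
      _ ≤ _ := h2
  · exact h1.trans ((le_abs_self _).trans (le_max_right _ _))

lemma summable_geom_aux {r : ℝ} (h0 : 0 ≤ r) (h1 : r < 1) :
    Summable (fun k : ℕ => ((k:ℝ)+1) * r^k) := by
  have h2 : ‖r‖ < 1 := by rwa [Real.norm_eq_abs, abs_of_nonneg h0]
  have := (summable_pow_mul_geometric_of_norm_lt_one 1 h2).add
    (summable_geometric_of_lt_one h0 h1)
  refine this.congr fun k => ?_
  ring

lemma summable_master {t : ℝ} (ht : |t| < 1/4) (v : ℕ → ℝ)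
    (hv : ∀ k, |v k| ≤ ((k:ℝ)+1) * 4^(k+1)) : Summable (fun k => v k * t^k) := by
  apply Summable.of_norm_bounded (g := fun k : ℕ => 4*(((k:ℝ)+1) * (4*|t|)^k))
    ((summable_geom_aux (by positivity) (by linarith [abs_nonneg t])).mul_left 4)
  intro k
  rw [Real.norm_eq_abs, abs_mul, abs_pow]
  calc |v k| * |t|^k ≤ (((k:ℝ)+1) * 4^(k+1)) * |t|^k := by
        gcongr
        exact hv k
    _ = 4*(((k:ℝ)+1) * (4*|t|)^k) := by rw [mul_pow]; ring


lemma summable_cb_w (w : ℕ → ℝ) (hw : ∀ k, |w k| ≤ 1) {t : ℝ} (ht : |t| < 1/4) :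
    Summable (fun k : ℕ => cb (k+1) * w k * t^(k+1)) := by
  apply Summable.of_norm_bounded (g := fun k : ℕ => (4*|t|) * (4*|t|)^k)
    ((summable_geometric_of_lt_one (by positivity) (by linarith [abs_nonneg t])).mul_left _)
  intro k
  rw [Real.norm_eq_abs, abs_mul, abs_mul, abs_pow]
  calc |cb (k+1)| * |w k| * |t|^(k+1) ≤ 4^(k+1) * 1 * |t|^(k+1) := by
        gcongr
        · rw [abs_of_nonneg (cb_nonneg _)]; exact cb_le _
        · exact hw k
    _ = (4*|t|) * (4*|t|)^k := by rw [mul_pow]; ring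

lemma hasDerivAt_uu (y : ℝ) : HasDerivAt (fun z : ℝ => z*(1-z)) (1-2*y) y := by
  have h := (hasDerivAt_id y).mul ((hasDerivAt_const y (1:ℝ)).sub (hasDerivAt_id y))
  refine h.congr_deriv (Eq.symm ?_)
  simp; ring

set_option maxHeartbeats 1000000 in
lemma hasDerivAt_tsum_cb (w : ℕ → ℝ) (hw : ∀ k, |w k| ≤ 1) {x : ℝ} (hx : x ∈ Iv) :
    HasDerivAt (fun y : ℝ => ∑' k : ℕ, cb (k+1) * w k * (y*(1-y))^(k+1))
      (∑' k : ℕ, cb (k+1) * w k * ((k:ℝ)+1) * (x*(1-x))^k * (1-2*x)) x := by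
  obtain ⟨hx1, hx2⟩ := hx
  have hs2 := one_lt_sqrt2
  have hs2' := sqrt2_lt_two
  set a := ((1 - Real.sqrt 2)/2 + x)/2 with ha_def
  set b := (x + 1/2)/2 with hb_def
  have ha : a ∈ Iv := ⟨by rw [ha_def]; linarith, by rw [ha_def]; linarith⟩
  have hb : b ∈ Iv := ⟨by rw [hb_def]; linarith, by rw [hb_def]; linarith⟩
  have hxab : x ∈ Set.Ioo a b := ⟨by rw [ha_def]; linarith, by rw [hb_def]; linarith⟩
  set ρ := max |a*(1-a)| |b*(1-b)| with hρ_def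
  have hρ0 : 0 ≤ ρ := le_trans (abs_nonneg _) (le_max_left _ _)
  have hρ : ρ < 1/4 := max_lt (abs_u_lt ha) (abs_u_lt hb)
  have hbound : ∀ y ∈ Set.Ioo a b, |y*(1-y)| ≤ ρ := fun y hy => abs_u_le hb.2 hy
  have h2y : ∀ y ∈ Set.Ioo a b, |1-2*y| ≤ 2 := by
    intro y hy
    obtain ⟨hy1, hy2⟩ := hy
    rw [abs_le]
    constructor
    · rw [hb_def] at hy2; linarith
    · rw [ha_def] at hy1; linarith
  have hsum : Summable (fun k : ℕ => 2*(((k:ℝ)+1) * 4^(k+1) * ρ^k)) := by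
    refine ((summable_geom_aux (r := 4*ρ) (by positivity) (by linarith)).mul_left 8).congr
      fun k => ?_
    rw [mul_pow]; ring
  apply hasDerivAt_tsum_of_isPreconnected
    (g := fun (k : ℕ) (y : ℝ) => cb (k+1) * w k * (y*(1-y))^(k+1))
    (g' := fun (k : ℕ) (y : ℝ) => cb (k+1) * w k * ((k:ℝ)+1) * (y*(1-y))^k * (1-2*y))
    hsum isOpen_Ioo (convex_Ioo a b).isPreconnected
    (fun k y _ => ?_) (fun k y hy => ?_) hxab (summable_cb_w w hw (abs_u_lt ⟨hx1, hx2⟩)) hxab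
  · -- HasDerivAt of each term
    have h := ((hasDerivAt_uu y).pow (k+1)).const_mul (cb (k+1) * w k)
    refine h.congr_deriv (Eq.symm ?_)
    rw [Nat.add_sub_cancel]
    push_cast
    ring
  · rw [Real.norm_eq_abs, abs_mul, abs_mul, abs_mul, abs_mul, abs_pow]
    calc |cb (k+1)| * |w k| * |((k:ℝ)+1)| * |y*(1-y)|^k * |1-2*y|
        ≤ 4^(k+1) * 1 * ((k:ℝ)+1) * ρ^k * 2 := by
          gcongr
          · rw [abs_of_nonneg (cb_nonneg _)]; exact cb_le _
          · exact hw k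
          · rw [abs_of_nonneg (by positivity)]
          · exact hbound y hy
          · exact h2y y hy
      _ = 2*(((k:ℝ)+1) * 4^(k+1) * ρ^k) := by ring

lemma eq_at_zero_of_hasDerivAt_zero {φ : ℝ → ℝ} (h : ∀ y ∈ Iv, HasDerivAt φ 0 y)
    {x : ℝ} (hx : x ∈ Iv) : φ x = φ 0 := by
  apply Convex.is_const_of_fderivWithin_eq_zero (𝕜 := ℝ) (convex_Ioo _ _)
    (fun z hz => ((h z hz).differentiableAt).differentiableWithinAt)
    (fun z hz => ?_) hx zero_mem_Iv
  have h0 : HasFDerivAt φ (0 : ℝ →L[ℝ] ℝ) z := by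
    have := (h z hz).hasFDerivAt
    rwa [show ContinuousLinearMap.toSpanSingleton ℝ (0:ℝ) = 0 by ext; simp] at this
  have hop : IsOpen Iv := isOpen_Ioo
  rw [fderivWithin_of_isOpen isOpen_Ioo hz]
  exact h0.fderiv


noncomputable def G0 (x : ℝ) : ℝ := ∑' k:ℕ, cb (k+1) * (x*(1-x))^(k+1)
noncomputable def G1 (x : ℝ) : ℝ := ∑' k:ℕ, cb (k+1) * (x*(1-x))^(k+1) / ((k:ℝ)+1)
noncomputable def G2 (x : ℝ) : ℝ := ∑' k:ℕ, cb (k+1) * (x*(1-x))^(k+1) / ((k:ℝ)+1)^2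

lemma G0_zero : G0 0 = 0 := by
  unfold G0
  norm_num

lemma G1_zero : G1 0 = 0 := by
  unfold G1
  norm_num

lemma G2_zero : G2 0 = 0 := by
  unfold G2
  norm_num

lemma hasDerivAt_G0 {x : ℝ} (hx : x ∈ Iv) :
    HasDerivAt G0 ((∑' k : ℕ, cb (k+1) * ((k:ℝ)+1) * (x*(1-x))^k) * (1-2*x)) x := by
  have h := hasDerivAt_tsum_cb (fun _ => 1) (fun k => by norm_num) hx
  have hfun : (fun y : ℝ => ∑' k : ℕ, cb (k+1) * 1 * (y*(1-y))^(k+1)) = G0 :=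
    funext fun y => tsum_congr fun k => by ring
  rw [hfun] at h
  convert h using 1
  rw [← tsum_mul_right]
  exact tsum_congr fun k => by ring

lemma G0_rel {x : ℝ} (hx : x ∈ Iv) :
    (1-2*x)^2 * (∑' k : ℕ, cb (k+1) * ((k:ℝ)+1) * (x*(1-x))^k) = 2 * (1 + G0 x) := by
  have ht : |x*(1-x)| < 1/4 := abs_u_lt hx
  have sA : Summable (fun k : ℕ => cb k * (k:ℝ) * (x*(1-x))^k) := by
    apply summable_master ht
    intro k
    rw [abs_of_nonneg (mul_nonneg (cb_nonneg k) (Nat.cast_nonneg k))]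
    calc cb k * (k:ℝ) ≤ 4^k * ((k:ℝ)+1) := by
          apply mul_le_mul (cb_le k) (by linarith) (Nat.cast_nonneg k) (by positivity)
      _ ≤ ((k:ℝ)+1) * 4^(k+1) := by rw [pow_succ]; nlinarith [pow_pos (by norm_num : (0:ℝ) < 4) k]
  have sB : Summable (fun k : ℕ => cb k * (x*(1-x))^k) := by
    apply summable_master ht
    intro k
    rw [abs_of_nonneg (cb_nonneg k)]
    calc cb k ≤ 4^k := cb_le k
      _ ≤ ((k:ℝ)+1) * 4^(k+1) := by
          rw [pow_succ]; nlinarith [pow_pos (by norm_num : (0:ℝ) < 4) k]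
  set t := x*(1-x) with ht_def
  set P := ∑' k : ℕ, cb (k+1) * ((k:ℝ)+1) * t^k with hP_def
  have hPAB : P = 4 * (∑' k : ℕ, cb k * (k:ℝ) * t^k) + 2 * (∑' k : ℕ, cb k * t^k) := by
    rw [hP_def, ← tsum_mul_left, ← tsum_mul_left, ← Summable.tsum_add (sA.mul_left 4) (sB.mul_left 2)]
    exact tsum_congr fun k => by
      have h := cb_rec k
      linear_combination t^k * h
  have hA : (∑' k : ℕ, cb k * (k:ℝ) * t^k) = t * P := by
    rw [Summable.tsum_eq_zero_add sA]
    simp only [Nat.cast_zero, mul_zero, zero_mul, zero_add, Nat.cast_add, Nat.cast_one]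
    rw [hP_def, ← tsum_mul_left]
    exact tsum_congr fun k => by ring
  have hB : (∑' k : ℕ, cb k * t^k) = 1 + G0 x := by
    rw [Summable.tsum_eq_zero_add sB, cb_zero]
    norm_num
    rfl
  rw [hA, hB] at hPAB
  have hsq : (1-2*x)^2 = 1 - 4*t := by rw [ht_def]; ring
  rw [hsq]
  linear_combination hPAB

lemma G0_eq {x : ℝ} (hx : x ∈ Iv) : G0 x = 1/(1-2*x) - 1 := by
  have hconst : ∀ y ∈ Iv, HasDerivAt (fun z : ℝ => (1 + G0 z) * (1-2*z)) 0 y := by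
    intro y hy
    have hG0 := hasDerivAt_G0 hy
    have h1 : HasDerivAt (fun z : ℝ => 1 + G0 z)
        ((∑' k : ℕ, cb (k+1) * ((k:ℝ)+1) * (y*(1-y))^k) * (1-2*y)) y := by
      exact hG0.const_add 1
    have h2 : HasDerivAt (fun z : ℝ => 1-2*z) (-2) y := by
      exact ((hasDerivAt_const y (1:ℝ)).sub ((hasDerivAt_id y).const_mul (2:ℝ))).congr_deriv (by ring)
    have h3 := h1.mul h2
    refine h3.congr_deriv (Eq.symm ?_)
    have hrel := G0_rel hy
    linear_combination -hrel
  have h0 := eq_at_zero_of_hasDerivAt_zero hconst hx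
  simp only [G0_zero] at h0
  norm_num at h0
  have h2x : (1:ℝ)-2*x ≠ 0 := ne_of_gt (Iv_pos1 hx)
  field_simp
  linear_combination h0

lemma hasDerivAt_G1 {x : ℝ} (hx : x ∈ Iv) :
    HasDerivAt G1 ((∑' k : ℕ, cb (k+1) * (x*(1-x))^k) * (1-2*x)) x := by
  have hw : ∀ k : ℕ, |1/((k:ℝ)+1)| ≤ 1 := by
    intro k
    rw [abs_of_nonneg (by positivity)]
    rw [div_le_one (by positivity)]
    linarith [Nat.cast_nonneg (α := ℝ) k]
  have h := hasDerivAt_tsum_cb (fun k => 1/((k:ℝ)+1)) hw hx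
  have hfun : (fun y : ℝ => ∑' k : ℕ, cb (k+1) * (1/((k:ℝ)+1)) * (y*(1-y))^(k+1)) = G1 :=
    funext fun y => tsum_congr fun k => by ring
  rw [hfun] at h
  convert h using 1
  rw [← tsum_mul_right]
  refine tsum_congr fun k => ?_
  have hk : ((k:ℝ)+1) ≠ 0 := by positivity
  field_simp

lemma hasDerivAt_log_one_sub {y : ℝ} (hy : (1:ℝ) - y ≠ 0) :
    HasDerivAt (fun z : ℝ => Real.log (1-z)) (-(1-y)⁻¹) y := by
  have h := (Real.hasDerivAt_log hy).comp y
    ((hasDerivAt_const y (1:ℝ)).sub (hasDerivAt_id y))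
  exact h.congr_deriv (by ring)

lemma E1_at_zero : (∑' k : ℕ, cb (k+1) * ((0:ℝ)*(1-0))^k) = 2 := by
  rw [tsum_eq_single 0 (fun k hk => by
    rw [show (0:ℝ)*(1-0) = 0 by ring, zero_pow hk, mul_zero])]
  norm_num [cb_one]

lemma G1_eq {x : ℝ} (hx : x ∈ Iv) : G1 x = -2 * Real.log (1-x) := by
  have hconst : ∀ y ∈ Iv, HasDerivAt (fun z : ℝ => G1 z + 2 * Real.log (1-z)) 0 y := by
    intro y hy
    have h1y : (1:ℝ) - y ≠ 0 := ne_of_gt (Iv_pos2 hy)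
    have h2y : (1:ℝ) - 2*y ≠ 0 := ne_of_gt (Iv_pos1 hy)
    have h := (hasDerivAt_G1 hy).add ((hasDerivAt_log_one_sub h1y).const_mul 2)
    refine h.congr_deriv (Eq.symm ?_)
    by_cases hy0 : y = 0
    · subst hy0
      rw [E1_at_zero]
      norm_num
    · have hE1 : (y*(1-y)) * (∑' k : ℕ, cb (k+1) * (y*(1-y))^k) = G0 y := by
        rw [← tsum_mul_left]
        exact tsum_congr fun k => by ring
      rw [G0_eq hy] at hE1
      set E := ∑' k : ℕ, cb (k+1) * (y*(1-y))^k with hE_def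
      field_simp at hE1 ⊢
      have hc : y * (E * (1-2*y) * (1-y)) = y * 2 := by
        have hinv : (1 - y * 2) * (1 - y * 2)⁻¹ = 1 := mul_inv_cancel₀ (by contrapose! h2y; linarith)
        linear_combination (1-y*2)*hE1 + hinv
      have hc2 := mul_left_cancel₀ hy0 hc
      linear_combination -hc2
  have h0 := eq_at_zero_of_hasDerivAt_zero hconst hx
  simp only [G1_zero] at h0
  norm_num [Real.log_one] at h0
  linarith [h0]

lemma Li2_def_eq : Li2 = fun x : ℝ => ∑' n : ℕ, x ^ (n + 1) / ((n : ℝ) + 1) ^ 2 := rfl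

lemma hasDerivAt_Li2 {x : ℝ} (hx : |x| < 1) :
    HasDerivAt Li2 (∑' n : ℕ, x^n/((n:ℝ)+1)) x := by
  set r := (|x|+1)/2 with hr_def
  have hr0 : 0 ≤ r := by positivity
  have hr1 : r < 1 := by rw [hr_def]; linarith
  have hxr : |x| < r := by rw [hr_def]; linarith
  have hmem : x ∈ Set.Ioo (-r) r := by
    rw [Set.mem_Ioo, ← abs_lt]; exact hxr
  have h0mem : (0:ℝ) ∈ Set.Ioo (-r) r := by
    constructor <;> [linarith [abs_nonneg x]; positivity]
  have h := hasDerivAt_tsum_of_isPreconnected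
    (g := fun (n : ℕ) (y : ℝ) => y^(n+1)/((n:ℝ)+1)^2)
    (g' := fun (n : ℕ) (y : ℝ) => ((n:ℝ)+1) * y^n/((n:ℝ)+1)^2)
    (summable_geometric_of_lt_one hr0 hr1) isOpen_Ioo (convex_Ioo _ _).isPreconnected
    (fun n y _ => ?_) (fun n y hy => ?_) h0mem ?_ hmem
  · rw [← Li2_def_eq] at h
    refine h.congr_deriv (Eq.symm ?_)
    refine tsum_congr fun n => ?_
    have hn : ((n:ℝ)+1) ≠ 0 := by positivity
    field_simp
  · have hd := (hasDerivAt_pow (n+1) y).div_const (((n:ℝ)+1)^2)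
    refine hd.congr_deriv (Eq.symm ?_)
    rw [Nat.add_sub_cancel]
    push_cast
    ring
  · have hy' : |y| ≤ r := by
      rw [abs_le]; exact ⟨hy.1.le, hy.2.le⟩
    have hn : ((n:ℝ)+1) ≠ 0 := by positivity
    rw [Real.norm_eq_abs, abs_div, abs_mul, abs_pow]
    rw [show |((n:ℝ)+1)| = ((n:ℝ)+1) from abs_of_nonneg (by positivity),
      show |((n:ℝ)+1)^2| = ((n:ℝ)+1)^2 from abs_of_nonneg (by positivity)]
    have he : ((n:ℝ)+1) * |y|^n/((n:ℝ)+1)^2 = |y|^n/((n:ℝ)+1) := by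
      field_simp
    rw [he]
    calc |y|^n/((n:ℝ)+1) ≤ |y|^n :=
          div_le_self (by positivity) (by linarith [Nat.cast_nonneg (α := ℝ) n])
      _ ≤ r^n := pow_le_pow_left₀ (abs_nonneg _) hy' n
  · refine summable_zero.congr fun n => ?_
    norm_num

lemma Li2_zero : Li2 0 = 0 := by
  unfold Li2; norm_num

lemma L_at_zero : (∑' n : ℕ, (0:ℝ)^n/((n:ℝ)+1)) = 1 := by
  rw [tsum_eq_single 0 (fun n hn => by rw [zero_pow hn, zero_div])]
  norm_num

lemma xL_eq {x : ℝ} (hx : |x| < 1) :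
    x * (∑' n : ℕ, x^n/((n:ℝ)+1)) = -Real.log (1-x) := by
  rw [← tsum_mul_left, ← (hasSum_pow_div_log_of_abs_lt_one hx).tsum_eq]
  exact tsum_congr fun n => by ring

lemma hasDerivAt_G2 {x : ℝ} (hx : x ∈ Iv) :
    HasDerivAt G2 ((∑' k : ℕ, cb (k+1) * (x*(1-x))^k / ((k:ℝ)+1)) * (1-2*x)) x := by
  have hw : ∀ k : ℕ, |1/((k:ℝ)+1)^2| ≤ 1 := by
    intro k
    rw [abs_of_nonneg (by positivity), div_le_one (by positivity)]
    nlinarith [Nat.cast_nonneg (α := ℝ) k]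
  have h := hasDerivAt_tsum_cb (fun k => 1/((k:ℝ)+1)^2) hw hx
  have hfun : (fun y : ℝ => ∑' k : ℕ, cb (k+1) * (1/((k:ℝ)+1)^2) * (y*(1-y))^(k+1)) = G2 :=
    funext fun y => tsum_congr fun k => by ring
  rw [hfun] at h
  convert h using 1
  rw [← tsum_mul_right]
  refine tsum_congr fun k => ?_
  have hk : ((k:ℝ)+1) ≠ 0 := by positivity
  field_simp

lemma E2_at_zero : (∑' k : ℕ, cb (k+1) * ((0:ℝ)*(1-0))^k / ((k:ℝ)+1)) = 2 := by
  rw [tsum_eq_single 0 (fun k hk => by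
    rw [show (0:ℝ)*(1-0) = 0 by ring, zero_pow hk, mul_zero, zero_div])]
  norm_num [cb_one]

lemma G2_eq {x : ℝ} (hx : x ∈ Iv) :
    G2 x = 2 * Li2 x - (Real.log (1-x))^2 := by
  have hconst : ∀ y ∈ Iv,
      HasDerivAt (fun z : ℝ => G2 z - (2 * Li2 z - (Real.log (1-z))^2)) 0 y := by
    intro y hy
    have h1y : (1:ℝ) - y ≠ 0 := ne_of_gt (Iv_pos2 hy)
    have h2y : (1:ℝ) - 2*y ≠ 0 := ne_of_gt (Iv_pos1 hy)
    have habs : |y| < 1 := Iv_abs_lt_one hy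
    have hlog2 : HasDerivAt (fun z : ℝ => (Real.log (1-z))^2)
        (2 * Real.log (1-y) * -(1-y)⁻¹) y := by
      have h := (hasDerivAt_log_one_sub h1y).pow 2
      refine h.congr_deriv (Eq.symm ?_)
      push_cast
      ring
    have hrhs := ((hasDerivAt_Li2 habs).const_mul 2).sub hlog2
    have h := (hasDerivAt_G2 hy).sub hrhs
    refine h.congr_deriv (Eq.symm ?_)
    by_cases hy0 : y = 0
    · subst hy0
      rw [E2_at_zero, L_at_zero]
      norm_num
    · have hE2 : (y*(1-y)) * (∑' k : ℕ, cb (k+1) * (y*(1-y))^k / ((k:ℝ)+1)) = G1 y := by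
        rw [← tsum_mul_left]
        exact tsum_congr fun k => by ring
      rw [G1_eq hy] at hE2
      have hLx := xL_eq habs
      set E := ∑' k : ℕ, cb (k+1) * (y*(1-y))^k / ((k:ℝ)+1) with hE_def
      set L := ∑' n : ℕ, y^n/((n:ℝ)+1) with hL_def
      set ℓ := Real.log (1-y) with hl_def
      field_simp at hE2 hLx ⊢
      have hc : y * (E * (1-2*y) * (1-y)) = y * (2*L*(1-y) + 2*ℓ) := by
        linear_combination (1-2*y)*hE2 - 2*(1-y)*hLx
      have hc2 := mul_left_cancel₀ hy0 hc
      linear_combination -hc2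
  have h0 := eq_at_zero_of_hasDerivAt_zero hconst hx
  simp only [G2_zero, Li2_zero] at h0
  norm_num [Real.log_one] at h0
  linarith [h0]

lemma interior_case {t : ℝ} (ht : |t| < 1/4) :
    ∑' k : ℕ, (Nat.centralBinom (k + 1) : ℝ) * t ^ (k + 1) / ((k : ℝ) + 1) ^ 2
      = 2 * Li2 ((1 - Real.sqrt (1 - 4 * t)) / 2)
        - (Real.log ((1 + Real.sqrt (1 - 4 * t)) / 2)) ^ 2 := by
  obtain ⟨htl, htr⟩ := abs_lt.mp ht
  have h4t : 0 < 1 - 4*t := by linarith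
  have hs2 : Real.sqrt (1-4*t)^2 = 1-4*t := Real.sq_sqrt h4t.le
  have hs0 : 0 < Real.sqrt (1-4*t) := Real.sqrt_pos.mpr h4t
  have hslt : Real.sqrt (1-4*t) < Real.sqrt 2 := Real.sqrt_lt_sqrt h4t.le (by linarith)
  have hxI : (1 - Real.sqrt (1-4*t))/2 ∈ Iv := ⟨by linarith, by linarith⟩
  have hux : ((1 - Real.sqrt (1-4*t))/2) * (1 - (1 - Real.sqrt (1-4*t))/2) = t := by
    linear_combination (-(1:ℝ)/4) * hs2
  have hLHS : (∑' k : ℕ, (Nat.centralBinom (k + 1) : ℝ) * t ^ (k + 1) / ((k : ℝ) + 1) ^ 2)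
      = G2 ((1 - Real.sqrt (1-4*t))/2) := by
    unfold G2
    exact tsum_congr fun k => by rw [hux]; rfl
  rw [hLHS, G2_eq hxI]
  have h1x : 1 - (1 - Real.sqrt (1-4*t))/2 = (1 + Real.sqrt (1-4*t))/2 := by ring
  rw [h1x]

lemma summable_inv_sq : Summable (fun k : ℕ => 1/((k:ℝ)+1)^2) := by
  have h := Real.summable_one_div_nat_pow.mpr (le_refl 2)
  have h2 := (summable_nat_add_iff 1).mpr h
  refine h2.congr fun k => ?_
  push_cast
  ring

lemma contOn_L : ContinuousOn
    (fun t : ℝ => ∑' k : ℕ, (Nat.centralBinom (k + 1) : ℝ) * t ^ (k + 1) / ((k : ℝ) + 1) ^ 2)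
    (Set.Icc (-(1/4)) (1/4)) := by
  refine (tendstoUniformlyOn_tsum (u := fun k : ℕ => 1/((k:ℝ)+1)^2) summable_inv_sq
    (fun k x hx => ?_)).continuousOn
    (Filter.Frequently.of_forall fun s => ?_)
  · obtain ⟨hx1, hx2⟩ := hx
    have habs : |x| ≤ 1/4 := abs_le.mpr ⟨by linarith, hx2⟩
    rw [Real.norm_eq_abs, abs_div, abs_mul, abs_pow]
    rw [show |((k:ℝ)+1)^2| = ((k:ℝ)+1)^2 from abs_of_nonneg (by positivity)]
    rw [show |(Nat.centralBinom (k+1) : ℝ)| = cb (k+1) from abs_of_nonneg (cb_nonneg _)]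
    rw [div_le_div_iff₀ (by positivity) (by positivity)]
    calc cb (k+1) * |x|^(k+1) * ((k:ℝ)+1)^2 ≤ 4^(k+1) * (1/4)^(k+1) * ((k:ℝ)+1)^2 := by
          gcongr
          exact cb_le _
      _ = 1 * ((k:ℝ)+1)^2 := by rw [← mul_pow]; norm_num
  · exact continuousOn_finset_sum s fun k _ => (Continuous.continuousOn (by continuity))

lemma contOn_Li2 : ContinuousOn Li2 (Set.Icc (-(9/10)) (9/10)) := by
  refine (tendstoUniformlyOn_tsum (u := fun n => (9/10:ℝ)^(n+1))
    ?_ (fun n x hx => ?_)).continuousOn (Filter.Frequently.of_forall fun s => ?_)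
  · refine ((summable_geometric_of_lt_one (r := 9/10) (by norm_num) (by norm_num)).mul_left
      (9/10)).congr fun n => ?_
    rw [pow_succ]
    ring
  · obtain ⟨hx1, hx2⟩ := hx
    have habs : |x| ≤ 9/10 := abs_le.mpr ⟨hx1, hx2⟩
    rw [Real.norm_eq_abs, abs_div, abs_pow]
    rw [show |((n:ℝ)+1)^2| = ((n:ℝ)+1)^2 from abs_of_nonneg (by positivity)]
    calc |x|^(n+1) / ((n:ℝ)+1)^2 ≤ |x|^(n+1) :=
          div_le_self (by positivity) (by nlinarith [Nat.cast_nonneg (α := ℝ) n])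
      _ ≤ (9/10)^(n+1) := pow_le_pow_left₀ (abs_nonneg _) habs _
  · exact continuousOn_finset_sum s fun k _ => (Continuous.continuousOn (by continuity))
end CBD

set_option maxHeartbeats 1000000 in
theorem centralBinom_dilog (t : ℝ) (ht : |t| ≤ 1/4) :
    ∑' k : ℕ, (Nat.centralBinom (k + 1) : ℝ) * t ^ (k + 1) / ((k : ℝ) + 1) ^ 2
      = 2 * Li2 ((1 - Real.sqrt (1 - 4 * t)) / 2)
        - (Real.log ((1 + Real.sqrt (1 - 4 * t)) / 2)) ^ 2 := by
  by_cases hlt : |t| < 1/4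
  · exact CBD.interior_case hlt
  · obtain ⟨htl, htr⟩ := abs_le.mp ht
    have htIcc : t ∈ Set.Icc (-(1/4):ℝ) (1/4) := ⟨by linarith, htr⟩
    set L := fun τ : ℝ =>
      ∑' k : ℕ, (Nat.centralBinom (k + 1) : ℝ) * τ ^ (k + 1) / ((k : ℝ) + 1) ^ 2 with hLdef
    set R := fun τ : ℝ => 2 * Li2 ((1 - Real.sqrt (1 - 4 * τ)) / 2)
        - (Real.log ((1 + Real.sqrt (1 - 4 * τ)) / 2)) ^ 2 with hRdef
    show L t = R t
    have hclos : t ∈ closure (Set.Ioo (-(1/4):ℝ) (1/4)) := by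
      rw [closure_Ioo (by norm_num : (-(1/4):ℝ) ≠ 1/4)]
      exact htIcc
    have hne : (nhdsWithin t (Set.Ioo (-(1/4):ℝ) (1/4))).NeBot :=
      mem_closure_iff_nhdsWithin_neBot.mp hclos
    have hLt : Filter.Tendsto L (nhdsWithin t (Set.Ioo (-(1/4):ℝ) (1/4))) (nhds (L t)) :=
      ((CBD.contOn_L t htIcc).mono Set.Ioo_subset_Icc_self)
    have hsq : Continuous (fun τ : ℝ => Real.sqrt (1 - 4*τ)) :=
      Real.continuous_sqrt.comp (continuous_const.sub (continuous_const.mul continuous_id))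
    have hxc : Continuous (fun τ : ℝ => (1 - Real.sqrt (1-4*τ))/2) :=
      (continuous_const.sub hsq).div_const 2
    have hmaps : Set.MapsTo (fun τ : ℝ => (1 - Real.sqrt (1-4*τ))/2)
        (Set.Icc (-(1/4):ℝ) (1/4)) (Set.Icc (-(9/10):ℝ) (9/10)) := by
      intro τ hτ
      obtain ⟨h1, h2⟩ := hτ
      have h0 : 0 ≤ Real.sqrt (1-4*τ) := Real.sqrt_nonneg _
      have hle : Real.sqrt (1-4*τ) ≤ Real.sqrt 2 := Real.sqrt_le_sqrt (by linarith)
      have h22 := CBD.sqrt2_lt_two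
      exact ⟨by linarith, by linarith⟩
    have hLi2 : ContinuousWithinAt (fun τ : ℝ => Li2 ((1 - Real.sqrt (1-4*τ))/2))
        (Set.Icc (-(1/4):ℝ) (1/4)) t :=
      (CBD.contOn_Li2.comp hxc.continuousOn hmaps) t htIcc
    have harg : ((1 + Real.sqrt (1-4*t))/2) ≠ 0 := by
      positivity
    have hlogc : ContinuousWithinAt (fun τ : ℝ => Real.log ((1 + Real.sqrt (1-4*τ))/2))
        (Set.Icc (-(1/4):ℝ) (1/4)) t := by
      have hg : ContinuousAt (fun τ : ℝ => (1 + Real.sqrt (1-4*τ))/2) t :=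
        ((continuous_const.add hsq).div_const 2).continuousAt
      exact (hg.log harg).continuousWithinAt
    have hRt : Filter.Tendsto R (nhdsWithin t (Set.Ioo (-(1/4):ℝ) (1/4))) (nhds (R t)) := by
      have hRc : ContinuousWithinAt R (Set.Icc (-(1/4):ℝ) (1/4)) t :=
        (continuousWithinAt_const.mul hLi2).sub (hlogc.pow 2)
      exact hRc.mono Set.Ioo_subset_Icc_self
    have heqF : L =ᶠ[nhdsWithin t (Set.Ioo (-(1/4):ℝ) (1/4))] R :=
      eventually_nhdsWithin_of_forall fun τ hτ =>
        CBD.interior_case (abs_lt.mpr ⟨by linarith [hτ.1], hτ.2⟩)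
    exact tendsto_nhds_unique (hLt.congr' heqF) hRt
end

section
/- ∑_{k≥1} C(2k,k) / (k² 4^k) = ζ(2) - 2(log 2)², where C(2k,k) is the central binomial coefficient. -/
open Real MeasureTheory Set Filter intervalIntegral Finset
open scoped Topology


noncomputable def cb (m : ℕ) : ℝ := (Nat.centralBinom m : ℝ) / 4 ^ m

lemma cb_zero : cb 0 = 1 := by simp [cb, Nat.centralBinom]

lemma cb_pos (m : ℕ) : 0 < cb m :=
  div_pos (by exact_mod_cast Nat.centralBinom_pos m) (by positivity)

lemma cb_rec (m : ℕ) : (2 * (m : ℝ) + 2) * cb (m + 1) = (2 * m + 1) * cb m := by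
  have h := Nat.succ_mul_centralBinom_succ m
  have h' : ((m : ℝ) + 1) * (Nat.centralBinom (m + 1) : ℝ)
      = 2 * (2 * m + 1) * (Nat.centralBinom m : ℝ) := by exact_mod_cast congrArg Nat.cast h
  have h4 : (4 : ℝ) ^ (m + 1) = 4 * 4 ^ m := by ring
  unfold cb
  rw [h4]
  field_simp
  nlinarith [h', pow_pos (show (0:ℝ) < 4 by norm_num) m]

lemma cb_le_one (m : ℕ) : cb m ≤ 1 := by
  induction m with
  | zero => rw [cb_zero]
  | succ n ih =>
    have h := cb_rec n
    have hp := cb_pos n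
    nlinarith [cb_pos (n + 1)]

lemma cb_conv (n : ℕ) : ∑ i ∈ range (n + 1), cb i * cb (n - i) = 1 := by
  induction n with
  | zero => simp [cb_zero]
  | succ n ih =>
    -- reflection lemma
    have refl : ∀ m : ℕ, 2 * ∑ i ∈ range (m + 1), (i : ℝ) * (cb i * cb (m - i))
        = m * ∑ i ∈ range (m + 1), cb i * cb (m - i) := by
      intro m
      have h1 : ∑ i ∈ range (m + 1), (i : ℝ) * (cb i * cb (m - i))
          = ∑ i ∈ range (m + 1), ((m - i : ℕ) : ℝ) * (cb (m - i) * cb (m - (m - i))) := by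
        rw [← Finset.sum_range_reflect (fun i => ((i : ℝ)) * (cb i * cb (m - i))) (m + 1)]
        apply Finset.sum_congr rfl
        intro i hi
        simp only [Finset.mem_range] at hi
        have : m + 1 - 1 - i = m - i := by omega
        simp [this]
      have h2 : ∀ i ∈ range (m + 1), ((m - i : ℕ) : ℝ) * (cb (m - i) * cb (m - (m - i)))
          = ((m : ℝ) - i) * (cb i * cb (m - i)) := by
        intro i hi
        simp only [Finset.mem_range] at hi
        have hle : i ≤ m := by omega
        have e1 : m - (m - i) = i := by omega
        rw [e1, Nat.cast_sub hle]
        ring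
      rw [two_mul]
      nth_rewrite 2 [h1]
      rw [Finset.sum_congr rfl h2, ← Finset.sum_add_distrib, Finset.mul_sum]
      apply Finset.sum_congr rfl
      intro i hi
      ring
    -- key step
    have key : ((n : ℝ) + 1) * ∑ i ∈ range (n + 2), cb i * cb (n + 1 - i)
        = ((n : ℝ) + 1) * ∑ i ∈ range (n + 1), cb i * cb (n - i) := by
      have hrefl1 := refl (n + 1)
      push_cast at hrefl1
      -- 2T = sum over shifted indices
      have hT : 2 * ∑ i ∈ range (n + 2), (i : ℝ) * (cb i * cb (n + 1 - i))
          = ∑ j ∈ range (n + 1), (2 * (j : ℝ) + 1) * (cb j * cb (n - j)) := by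
        have drop : ∑ i ∈ range (n + 2), (2 * (i : ℝ)) * (cb i * cb (n + 1 - i))
            = ∑ j ∈ range (n + 1), (2 * ((j : ℕ) : ℝ) + 2) * (cb (j + 1) * cb (n - j)) := by
          rw [Finset.sum_range_succ' (fun i => (2 * (i : ℝ)) * (cb i * cb (n + 1 - i))) (n + 1)]
          simp only [Nat.cast_zero, mul_zero, zero_mul, add_zero]
          apply Finset.sum_congr rfl
          intro j hj
          simp only [Finset.mem_range] at hj
          have : n + 1 - (j + 1) = n - j := by omega
          push_cast [this]
          ring
        calc 2 * ∑ i ∈ range (n + 2), (i : ℝ) * (cb i * cb (n + 1 - i))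
            = ∑ i ∈ range (n + 2), (2 * (i : ℝ)) * (cb i * cb (n + 1 - i)) := by
              rw [Finset.mul_sum]; apply Finset.sum_congr rfl; intros; ring
          _ = ∑ j ∈ range (n + 1), (2 * ((j : ℕ) : ℝ) + 2) * (cb (j + 1) * cb (n - j)) := drop
          _ = ∑ j ∈ range (n + 1), (2 * (j : ℝ) + 1) * (cb j * cb (n - j)) := by
              apply Finset.sum_congr rfl
              intro j hj
              have := cb_rec j
              nlinarith [cb_pos (n - j)]
      have hrefl2 := refl n
      -- combine
      have expand : ∑ j ∈ range (n + 1), (2 * (j : ℝ) + 1) * (cb j * cb (n - j))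
          = 2 * ∑ j ∈ range (n + 1), (j : ℝ) * (cb j * cb (n - j))
            + ∑ j ∈ range (n + 1), cb j * cb (n - j) := by
        rw [Finset.mul_sum, ← Finset.sum_add_distrib]
        apply Finset.sum_congr rfl
        intros; ring
      calc ((n : ℝ) + 1) * ∑ i ∈ range (n + 2), cb i * cb (n + 1 - i)
          = 2 * ∑ i ∈ range (n + 2), (i : ℝ) * (cb i * cb (n + 1 - i)) := by
            rw [hrefl1]
        _ = 2 * ∑ j ∈ range (n + 1), (j : ℝ) * (cb j * cb (n - j))
              + ∑ j ∈ range (n + 1), cb j * cb (n - j) := by rw [hT, expand]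
        _ = ((n : ℝ) + 1) * ∑ i ∈ range (n + 1), cb i * cb (n - i) := by
            rw [hrefl2]; ring
    have hne : ((n : ℝ) + 1) ≠ 0 := by positivity
    have := mul_left_cancel₀ hne key
    rw [this, ih]



lemma summable_cb_mul_pow {w : ℝ} (h0 : 0 ≤ w) (h1 : w < 1) :
    Summable (fun k : ℕ => cb k * w ^ k) := by
  apply Summable.of_nonneg_of_le (fun k => mul_nonneg (cb_pos k).le (pow_nonneg h0 k))
    (fun k => ?_) (summable_geometric_of_lt_one h0 h1)
  calc cb k * w ^ k ≤ 1 * w ^ k := by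
        apply mul_le_mul_of_nonneg_right (cb_le_one k) (by positivity)
    _ = w ^ k := one_mul _

lemma hasSum_cb {w : ℝ} (h0 : 0 ≤ w) (h1 : w < 1) :
    HasSum (fun k : ℕ => cb k * w ^ k) (1 / Real.sqrt (1 - w)) := by
  have hsum := summable_cb_mul_pow h0 h1
  have hnorm : Summable (fun k : ℕ => ‖cb k * w ^ k‖) := by
    apply Summable.of_nonneg_of_le (fun k => norm_nonneg _) (fun k => ?_)
      (summable_geometric_of_lt_one h0 h1)
    rw [Real.norm_eq_abs, abs_of_nonneg (mul_nonneg (cb_pos k).le (pow_nonneg h0 k))]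
    calc cb k * w ^ k ≤ 1 * w ^ k :=
          mul_le_mul_of_nonneg_right (cb_le_one k) (by positivity)
      _ = w ^ k := one_mul _
  set h := ∑' k : ℕ, cb k * w ^ k with hh
  have hsq : h * h = 1 / (1 - w) := by
    rw [hh, tsum_mul_tsum_eq_tsum_sum_range_of_summable_norm hnorm hnorm]
    have : ∀ n : ℕ, ∑ i ∈ range (n + 1), (cb i * w ^ i) * (cb (n - i) * w ^ (n - i))
        = w ^ n := by
      intro n
      have : ∀ i ∈ range (n + 1), (cb i * w ^ i) * (cb (n - i) * w ^ (n - i))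
          = (cb i * cb (n - i)) * w ^ n := by
        intro i hi
        simp only [Finset.mem_range] at hi
        have : w ^ i * w ^ (n - i) = w ^ n := by
          rw [← pow_add]; congr 1; omega
        calc (cb i * w ^ i) * (cb (n - i) * w ^ (n - i))
            = (cb i * cb (n - i)) * (w ^ i * w ^ (n - i)) := by ring
          _ = (cb i * cb (n - i)) * w ^ n := by rw [this]
      rw [Finset.sum_congr rfl this, ← Finset.sum_mul, cb_conv, one_mul]
    rw [tsum_congr this, tsum_geometric_of_lt_one h0 h1]
    exact (one_div _).symm
  have hpos : (0:ℝ) < 1 - w := by linarith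
  have hnn : 0 ≤ h := tsum_nonneg (fun k => mul_nonneg (cb_pos k).le (pow_nonneg h0 k))
  have hval : h = 1 / Real.sqrt (1 - w) := by
    have h1' : Real.sqrt (h * h) = h := Real.sqrt_mul_self hnn
    rw [hsq] at h1'
    rw [← h1', one_div, Real.sqrt_inv, one_div]
  exact hval ▸ hsum.hasSum


-- key elementary bound : -log(1-x) ≤ 2x for 0 ≤ x ≤ 1/2
lemma neg_log_one_sub_le {x : ℝ} (h0 : 0 ≤ x) (h2 : x ≤ 1/2) :
    -Real.log (1 - x) ≤ 2 * x := by
  have hx1 : (0:ℝ) < 1 - x := by linarith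
  have h := Real.log_le_sub_one_of_pos (inv_pos.2 hx1)
  rw [Real.log_inv] at h
  have : (1 - x)⁻¹ - 1 = x / (1 - x) := by field_simp; ring
  rw [this] at h
  have : x / (1 - x) ≤ 2 * x := by
    rw [div_le_iff₀ hx1]
    nlinarith
  linarith

-- -log t ≤ 2 * t ^ (-1/2 : ℝ) for t ∈ (0, 1]
lemma neg_log_le_rpow {t : ℝ} (h0 : 0 < t) :
    -Real.log t ≤ 2 * t ^ (-(1/2) : ℝ) := by
  have hs : 0 < Real.sqrt t := Real.sqrt_pos.2 h0
  have h := Real.log_le_sub_one_of_pos (inv_pos.2 hs)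
  rw [Real.log_inv] at h
  have hlog : Real.log (Real.sqrt t) = Real.log t / 2 := Real.log_sqrt h0.le
  have hr : t ^ (-(1/2) : ℝ) = (Real.sqrt t)⁻¹ := by
    rw [Real.rpow_neg h0.le, Real.sqrt_eq_rpow]
  rw [hlog] at h
  rw [hr]
  have hinv : 0 ≤ (Real.sqrt t)⁻¹ := inv_nonneg.2 hs.le
  linarith

lemma integrableOn_neg_log_one_sub :
    IntegrableOn (fun u : ℝ => -Real.log (1 - u)) (Ioo 0 1) volume := by
  have hrpow : IntervalIntegrable (fun x : ℝ => x ^ (-(1/2) : ℝ)) volume 0 1 :=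
    intervalIntegrable_rpow' (by norm_num)
  have hcomp : IntervalIntegrable (fun x : ℝ => (1 - x) ^ (-(1/2) : ℝ)) volume 0 1 := by
    have := (hrpow.comp_sub_left 1).symm
    simpa using this
  have hIoo : IntegrableOn (fun x : ℝ => 2 * (1 - x) ^ (-(1/2) : ℝ)) (Ioo 0 1) volume := by
    have := (hcomp.const_mul 2)
    rw [intervalIntegrable_iff_integrableOn_Ioo_of_le (by norm_num)] at this
    exact this
  apply Integrable.mono hIoo
  · apply (Measurable.aestronglyMeasurable ?_)
    exact (Real.measurable_log.comp (measurable_const.sub measurable_id)).neg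
  · filter_upwards [ae_restrict_mem measurableSet_Ioo] with u hu
    have h1 : (0:ℝ) < 1 - u := by linarith [hu.2]
    rw [Real.norm_eq_abs, Real.norm_eq_abs]
    have hpos : 0 ≤ -Real.log (1 - u) := by
      have : Real.log (1 - u) ≤ 0 := Real.log_nonpos h1.le (by linarith [hu.1])
      linarith
    rw [abs_of_nonneg hpos]
    have hb := neg_log_le_rpow h1
    have : |2 * (1 - u) ^ (-(1/2) : ℝ)| = 2 * (1 - u) ^ (-(1/2) : ℝ) := by
      rw [abs_of_nonneg]; positivity
    rw [this]
    exact hb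



lemma integrand_le {u : ℝ} (hu : u ∈ Ioo (0:ℝ) 1) (k : ℕ) :
    ‖2 * u * (1 - u^2)^k * (-Real.log (1 - u^2))‖ ≤ 2 * (-Real.log (1 - u)) := by
  obtain ⟨h0, h1⟩ := hu
  have hw : 0 < 1 - u^2 := by nlinarith
  have hw1 : 1 - u^2 ≤ 1 := by nlinarith
  have hlognn : 0 ≤ -Real.log (1 - u^2) := by
    have := Real.log_nonpos hw.le hw1
    linarith
  have hsplit : Real.log (1 - u^2) = Real.log (1 - u) + Real.log (1 + u) := by
    rw [← Real.log_mul (by linarith) (by linarith)]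
    congr 1; ring
  have hle1 : -Real.log (1 - u^2) ≤ -Real.log (1 - u) := by
    rw [hsplit]
    have : 0 ≤ Real.log (1 + u) := Real.log_nonneg (by linarith)
    linarith
  have hfac : 0 ≤ 2 * u * (1 - u^2)^k := by positivity
  have hfacle : 2 * u * (1 - u^2)^k ≤ 2 := by
    have h2 : (1 - u^2)^k ≤ 1 := pow_le_one₀ hw.le hw1
    nlinarith
  rw [Real.norm_eq_abs, abs_of_nonneg (by positivity)]
  calc 2 * u * (1 - u^2)^k * (-Real.log (1 - u^2))
      ≤ 2 * (-Real.log (1 - u^2)) := mul_le_mul_of_nonneg_right hfacle hlognn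
    _ ≤ 2 * (-Real.log (1 - u)) := by linarith
  
lemma integrableOn_term (k : ℕ) :
    IntegrableOn (fun u : ℝ => 2 * u * (1 - u^2)^k * (-Real.log (1 - u^2))) (Ioo 0 1) volume := by
  apply Integrable.mono (integrableOn_neg_log_one_sub.const_mul 2)
  · apply Measurable.aestronglyMeasurable
    have : Measurable fun u : ℝ => Real.log (1 - u^2) :=
      Real.measurable_log.comp (by fun_prop)
    fun_prop
  · filter_upwards [ae_restrict_mem measurableSet_Ioo] with u hu
    have := integrand_le hu k
    rw [Real.norm_eq_abs (2 * _)]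
    calc ‖2 * u * (1 - u^2)^k * (-Real.log (1 - u^2))‖ ≤ 2 * (-Real.log (1 - u)) := this
      _ ≤ |2 * (-Real.log (1 - u))| := le_abs_self _

lemma int_term (k : ℕ) :
    ∫ u in Ioo (0:ℝ) 1, 2 * u * (1 - u^2)^k * (-Real.log (1 - u^2))
      = 1 / ((k:ℝ)+1)^2 := by
  set c : ℝ := (k:ℝ) + 1 with hc
  have hcpos : 0 < c := by positivity
  set φ : ℝ → ℝ := fun u => (c * ((1-u^2)^(k+1) * Real.log (1-u^2)) - (1-u^2)^(k+1)) / c^2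
    with hφ
  have hderiv : ∀ u ∈ Ioo (0:ℝ) 1,
      HasDerivAt φ (2 * u * (1 - u^2)^k * (-Real.log (1 - u^2))) u := by
    intro u hu
    obtain ⟨h0, h1⟩ := hu
    have hw : 0 < 1 - u^2 := by nlinarith
    have hu2 : HasDerivAt (fun u:ℝ => 1 - u^2) (-(2*u)) u := by
      simpa using ((hasDerivAt_pow 2 u).const_sub 1)
    have hlogd : HasDerivAt (fun u:ℝ => Real.log (1-u^2)) ((1-u^2)⁻¹ * (-(2*u))) u := by
      simpa [Function.comp_def] using (Real.hasDerivAt_log hw.ne').comp u hu2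
    have hpowd : HasDerivAt (fun u:ℝ => (1-u^2)^(k+1))
        ((((k:ℕ)+1 : ℕ):ℝ) * (1-u^2)^k * (-(2*u))) u := by
      have := (hasDerivAt_pow (k+1) (1-u^2)).comp u hu2
      simpa [mul_assoc, Function.comp_def] using this
    have hprod := hpowd.mul hlogd
    have hfinal := ((hprod.const_mul c).sub hpowd).div_const (c^2)
    have hwne : (1 - u^2) ≠ 0 := hw.ne'
    refine hfinal.congr_deriv ?_
    push_cast
    rw [hc]
    field_simp
    ring
  have hint : IntervalIntegrable
      (fun u : ℝ => 2 * u * (1 - u^2)^k * (-Real.log (1 - u^2))) volume 0 1 := by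
    rw [intervalIntegrable_iff_integrableOn_Ioo_of_le (by norm_num)]
    exact integrableOn_term k
  have hlim0 : Tendsto φ (𝓝[>] (0:ℝ)) (𝓝 (-(1/c^2))) := by
    have hcont : ContinuousAt φ 0 := by
      have h1 : ContinuousAt (fun x:ℝ => 1 - x^2) 0 := by fun_prop
      have hl : ContinuousAt (fun x:ℝ => Real.log (1 - x^2)) 0 := by
        have h2 : ContinuousAt (Real.log ∘ (fun x:ℝ => 1 - x^2)) 0 :=
          ContinuousAt.comp (g := Real.log) (f := fun x:ℝ => 1 - x^2) (Real.continuousAt_log (by norm_num)) h1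
        simpa [Function.comp_def] using h2
      apply ContinuousAt.div_const
      apply ContinuousAt.sub
      · exact continuousAt_const.mul ((by fun_prop : ContinuousAt (fun x:ℝ => (1-x^2)^(k+1)) 0).mul hl)
      · fun_prop
    have : φ 0 = -(1/c^2) := by simp [hφ]; field_simp
    rw [← this]
    exact hcont.continuousWithinAt.tendsto
  have hlim1 : Tendsto φ (𝓝[<] (1:ℝ)) (𝓝 0) := by
    have hw : Tendsto (fun u:ℝ => 1 - u^2) (𝓝[<] (1:ℝ)) (𝓝[>] (0:ℝ)) := by
      apply tendsto_nhdsWithin_of_tendsto_nhds_of_eventually_within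
      · have : Tendsto (fun u:ℝ => 1 - u^2) (𝓝 (1:ℝ)) (𝓝 0) := by
          have hcont2 : Continuous (fun u:ℝ => 1 - u^2) := by fun_prop
          have h := hcont2.tendsto 1
          simp only [one_pow, sub_self] at h
          exact h
        exact this.mono_left nhdsWithin_le_nhds
      · filter_upwards [Ioo_mem_nhdsLT_of_mem (show (1:ℝ) ∈ Set.Ioc (0:ℝ) 1 from ⟨by norm_num, le_refl _⟩)]
          with u hu
        have : 0 < 1 - u^2 := by nlinarith [hu.1, hu.2]
        exact this
    have hpowlim : Tendsto (fun w:ℝ => w^(k+1)) (𝓝[>] (0:ℝ)) (𝓝 0) := by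
      have h := ((continuous_pow (k+1)).tendsto (0:ℝ)).mono_left
        (nhdsWithin_le_nhds (s := Set.Ioi (0:ℝ)))
      simpa using h
    have hloglim : Tendsto (fun w:ℝ => w^(k+1) * Real.log w) (𝓝[>] (0:ℝ)) (𝓝 0) := by
      have h := tendsto_log_mul_rpow_nhdsGT_zero (show (0:ℝ) < (k:ℝ)+1 by positivity)
      apply h.congr'
      filter_upwards [self_mem_nhdsWithin] with w hw
      have hwpos : (0:ℝ) < w := hw
      rw [show ((k:ℝ)+1) = (((k+1 : ℕ)):ℝ) by push_cast; ring, Real.rpow_natCast]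
      ring
    have : Tendsto φ (𝓝[<] (1:ℝ)) (𝓝 ((c * 0 - 0)/c^2)) := by
      apply Tendsto.div_const
      have t1 := ((hloglim.comp hw).const_mul c).sub (hpowlim.comp hw)
      apply t1.congr
      intro x
      simp [Function.comp]
    simpa using this
  have hftc := intervalIntegral.integral_eq_sub_of_hasDerivAt_of_tendsto
    (show (0:ℝ) < 1 by norm_num) hderiv hint hlim0 hlim1
  rw [← MeasureTheory.integral_Ioc_eq_integral_Ioo,
      ← intervalIntegral.integral_of_le (show (0:ℝ) ≤ 1 by norm_num), hftc]
  simp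



lemma summable_inv_sq : Summable (fun n : ℕ => 1 / ((n:ℝ)+1)^2) := by
  have h := Real.summable_one_div_nat_pow.2 (show 1 < 2 by norm_num)
  have h2 := (summable_nat_add_iff 1).2 h
  apply h2.congr
  intro n
  push_cast
  ring

lemma pointwise_sum {u : ℝ} (hu : u ∈ Ioo (0:ℝ) 1) :
    HasSum (fun k : ℕ => cb (k+1) * (2 * u * (1 - u^2)^k * (-Real.log (1 - u^2))))
      (-2 * Real.log (1 - u^2) / (1 + u)) := by
  obtain ⟨h0, h1⟩ := hu
  have hw : 0 < 1 - u^2 := by nlinarith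
  have hw1 : 1 - u^2 < 1 := by nlinarith
  have hbase := hasSum_cb (le_of_lt hw) hw1
  have hsqrt : Real.sqrt (1 - (1 - u^2)) = u := by
    rw [show (1 : ℝ) - (1 - u^2) = u^2 by ring, Real.sqrt_sq h0.le]
  rw [hsqrt] at hbase
  have h2 : HasSum (fun n : ℕ => cb (n+1) * (1 - u^2)^(n+1)) (1/u - 1) := by
    rw [hasSum_nat_add_iff (f := fun k : ℕ => cb k * (1 - u^2) ^ k) 1]
    simpa [cb_zero] using hbase
  have h3 : HasSum (fun n : ℕ => cb (n+1) * (1 - u^2)^n) ((1/u - 1)/(1 - u^2)) := by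
    have h' := h2.div_const (1 - u^2)
    have heq : (fun n : ℕ => cb (n+1) * (1 - u^2)^n)
        = fun n : ℕ => cb (n+1) * (1 - u^2)^(n+1) / (1 - u^2) := by
      funext n
      rw [eq_div_iff hw.ne', pow_succ]
      ring
    rw [heq]
    exact h'
  have h4 := h3.mul_right (2 * u * (-Real.log (1 - u^2)))
  have heq2 : (fun k : ℕ => cb (k+1) * (2 * u * (1 - u^2)^k * (-Real.log (1 - u^2))))
      = fun k : ℕ => (cb (k+1) * (1 - u^2)^k) * (2 * u * (-Real.log (1 - u^2))) := by
    funext k; ring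
  rw [heq2]
  convert h4 using 1
  · rfl
  have hu1 : (1:ℝ) + u ≠ 0 := by positivity
  field_simp
  ring

lemma sum_eq_int :
    ∑' k : ℕ, cb (k+1) / ((k:ℝ)+1)^2
      = ∫ u in Ioo (0:ℝ) 1, -2 * Real.log (1 - u^2) / (1 + u) := by
  set F : ℕ → ℝ → ℝ :=
    fun k u => cb (k+1) * (2 * u * (1 - u^2)^k * (-Real.log (1 - u^2))) with hF
  have hFint : ∀ k, Integrable (F k) (volume.restrict (Ioo 0 1)) := fun k =>
    (integrableOn_term k).const_mul _
  have hFval : ∀ k, ∫ u in Ioo (0:ℝ) 1, F k u = cb (k+1) / ((k:ℝ)+1)^2 := by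
    intro k
    rw [hF]
    simp only
    rw [MeasureTheory.integral_const_mul, int_term k, mul_one_div]
  have hFnonneg : ∀ k, ∀ u ∈ Ioo (0:ℝ) 1, 0 ≤ F k u := by
    intro k u hu
    obtain ⟨h0, h1⟩ := hu
    have hw : 0 < 1 - u^2 := by nlinarith
    have hlog : 0 ≤ -Real.log (1 - u^2) := by
      have := Real.log_nonpos hw.le (by nlinarith)
      linarith
    have := (cb_pos (k+1)).le
    positivity
  have hFnormval : ∀ k, ∫ u in Ioo (0:ℝ) 1, ‖F k u‖ = cb (k+1) / ((k:ℝ)+1)^2 := by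
    intro k
    rw [← hFval k]
    apply setIntegral_congr_fun measurableSet_Ioo
    intro u hu
    exact norm_of_nonneg (hFnonneg k u hu)
  have hFsum : Summable (fun k => ∫ u in Ioo (0:ℝ) 1, ‖F k u‖) := by
    apply Summable.congr _ (fun k => (hFnormval k).symm)
    apply Summable.of_nonneg_of_le
      (fun k => le_of_lt (div_pos (cb_pos (k+1)) (by positivity)))
      (fun k => ?_) summable_inv_sq
    gcongr
    exact cb_le_one (k+1)
  have hswap := MeasureTheory.integral_tsum_of_summable_integral_norm hFint hFsum
  calc ∑' k : ℕ, cb (k+1) / ((k:ℝ)+1)^2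
      = ∑' k : ℕ, ∫ u in Ioo (0:ℝ) 1, F k u := by
        exact (tsum_congr hFval).symm
    _ = ∫ u in Ioo (0:ℝ) 1, ∑' k : ℕ, F k u := hswap
    _ = ∫ u in Ioo (0:ℝ) 1, -2 * Real.log (1 - u^2) / (1 + u) := by
        apply setIntegral_congr_fun measurableSet_Ioo
        intro u hu
        exact (pointwise_sum hu).tsum_eq


noncomputable def Li2h : ℝ := ∑' n : ℕ, (1/2:ℝ)^(n+1) / ((n:ℝ)+1)^2

lemma summable_inv_sq' : Summable (fun n : ℕ => 1 / ((n:ℝ)+1)^2) := by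
  have h := Real.summable_one_div_nat_pow.2 (show 1 < 2 by norm_num)
  have h2 := (summable_nat_add_iff 1).2 h
  apply h2.congr
  intro n
  push_cast
  ring

lemma summable_li2h : Summable (fun n : ℕ => (1/2:ℝ)^(n+1) / ((n:ℝ)+1)^2) := by
  apply Summable.of_nonneg_of_le (fun n => by positivity) (fun n => ?_) summable_inv_sq'
  have h1 : ((1:ℝ)/2)^(n+1) ≤ 1 := pow_le_one₀ (by norm_num) (by norm_num)
  have h2 : (0:ℝ) < ((n:ℝ)+1)^2 := by positivity
  exact div_le_div_of_nonneg_right h1 h2.le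

lemma summable_li2c : Summable (fun n : ℕ => (1 - (1/2:ℝ)^(n+1)) / ((n:ℝ)+1)^2) := by
  apply Summable.of_nonneg_of_le (fun n => div_nonneg
    (sub_nonneg.2 (pow_le_one₀ (by norm_num) (by norm_num))) (by positivity))
    (fun n => ?_) summable_inv_sq'
  have h1 : (1 - (1/2:ℝ)^(n+1)) ≤ 1 := by
    have : (0:ℝ) ≤ (1/2:ℝ)^(n+1) := by positivity
    linarith
  have h2 : (0:ℝ) < ((n:ℝ)+1)^2 := by positivity
  exact div_le_div_of_nonneg_right h1 h2.le

-- (i)  ∫_{(0,1)} -log((1+u)/2)/(1-u) = Li2h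
lemma int_i : ∫ u in Ioo (0:ℝ) 1, -Real.log ((1+u)/2) / (1-u) = Li2h := by
  set F : ℕ → ℝ → ℝ := fun n u => (1-u)^n / (2^(n+1) * ((n:ℝ)+1)) with hF
  have hcont : ∀ n, Continuous (F n) := by
    intro n
    apply Continuous.div_const
    fun_prop
  have hFint : ∀ n, Integrable (F n) (volume.restrict (Ioo 0 1)) := by
    intro n
    exact ((hcont n).continuousOn.integrableOn_Icc).mono_set Ioo_subset_Icc_self
  have hFval : ∀ n : ℕ, ∫ u in Ioo (0:ℝ) 1, F n u = (1/2:ℝ)^(n+1) / ((n:ℝ)+1)^2 := by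
    intro n
    rw [hF]
    simp only
    rw [MeasureTheory.integral_div]
    rw [← MeasureTheory.integral_Ioc_eq_integral_Ioo,
        ← intervalIntegral.integral_of_le (show (0:ℝ) ≤ 1 by norm_num)]
    have : (∫ u in (0:ℝ)..1, (1-u)^n) = 1/((n:ℝ)+1) := by
      rw [show (fun u : ℝ => (1-u)^n) = (fun u : ℝ => ((fun x : ℝ => x^n) (1-u))) from rfl,
          intervalIntegral.integral_comp_sub_left (fun x : ℝ => x^n) 1]
      norm_num [integral_pow]
    rw [this, div_pow, one_pow, div_div, div_div, div_eq_div_iff (by positivity) (by positivity)]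
    ring
  have hFnonneg : ∀ n, ∀ u ∈ Ioo (0:ℝ) 1, 0 ≤ F n u := by
    intro n u hu
    have : (0:ℝ) ≤ 1 - u := by linarith [hu.2]
    positivity
  have hFnormval : ∀ n : ℕ, ∫ u in Ioo (0:ℝ) 1, ‖F n u‖ = (1/2:ℝ)^(n+1) / ((n:ℝ)+1)^2 := by
    intro n
    rw [← hFval n]
    exact setIntegral_congr_fun measurableSet_Ioo fun u hu => norm_of_nonneg (hFnonneg n u hu)
  have hFsum : Summable (fun n => ∫ u in Ioo (0:ℝ) 1, ‖F n u‖) :=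
    Summable.congr summable_li2h (fun n => (hFnormval n).symm)
  have hswap := MeasureTheory.integral_tsum_of_summable_integral_norm hFint hFsum
  have hpt : ∀ u ∈ Ioo (0:ℝ) 1, (∑' n, F n u) = -Real.log ((1+u)/2) / (1-u) := by
    intro u hu
    obtain ⟨h0, h1⟩ := hu
    have hx : |(1-u)/2| < 1 := by rw [abs_of_nonneg (by linarith)]; linarith
    have hs := (Real.hasSum_pow_div_log_of_abs_lt_one hx).div_const (1-u)
    have h1u : (1:ℝ) - (1-u)/2 = (1+u)/2 := by ring
    rw [h1u] at hs
    have heq : (fun n : ℕ => ((1-u)/2)^(n+1)/((n:ℝ)+1)/(1-u)) = fun n => F n u := by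
      funext n
      rw [hF]
      simp only [div_pow]
      have h3 : (1:ℝ) - u ≠ 0 := by linarith
      have h4 : ((n:ℝ)+1) ≠ 0 := by positivity
      field_simp
      ring
    rw [heq] at hs
    exact hs.tsum_eq
  rw [Li2h, ← tsum_congr hFval, hswap]
  exact setIntegral_congr_fun measurableSet_Ioo (fun u hu => (hpt u hu).symm)

-- (ii)  ∫_{(1/2,1)} -log t/(1-t) = Li2h
lemma int_ii : ∫ t in Ioo (1/2:ℝ) 1, -Real.log t / (1-t) = Li2h := by
  set F : ℕ → ℝ → ℝ := fun n t => (1-t)^n / ((n:ℝ)+1) with hF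
  have hcont : ∀ n, Continuous (F n) := fun n => Continuous.div_const (by fun_prop) _
  have hFint : ∀ n, Integrable (F n) (volume.restrict (Ioo (1/2) 1)) := fun n =>
    ((hcont n).continuousOn.integrableOn_Icc).mono_set Ioo_subset_Icc_self
  have hFval : ∀ n : ℕ, ∫ t in Ioo (1/2:ℝ) 1, F n t = (1/2:ℝ)^(n+1) / ((n:ℝ)+1)^2 := by
    intro n
    rw [hF]
    simp only
    rw [MeasureTheory.integral_div, ← MeasureTheory.integral_Ioc_eq_integral_Ioo,
        ← intervalIntegral.integral_of_le (show (1/2:ℝ) ≤ 1 by norm_num)]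
    have : (∫ t in (1/2:ℝ)..1, (1-t)^n) = (1/2:ℝ)^(n+1)/((n:ℝ)+1) := by
      rw [show (fun t : ℝ => (1-t)^n) = (fun t : ℝ => ((fun x : ℝ => x^n) (1-t))) from rfl,
          intervalIntegral.integral_comp_sub_left (fun x : ℝ => x^n) 1]
      norm_num [integral_pow]
    rw [this, div_div, sq]
  have hFnonneg : ∀ n, ∀ t ∈ Ioo (1/2:ℝ) 1, 0 ≤ F n t := by
    intro n t ht
    have : (0:ℝ) ≤ 1 - t := by linarith [ht.2]
    positivity
  have hFnormval : ∀ n : ℕ, ∫ t in Ioo (1/2:ℝ) 1, ‖F n t‖ = (1/2:ℝ)^(n+1) / ((n:ℝ)+1)^2 := by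
    intro n
    rw [← hFval n]
    exact setIntegral_congr_fun measurableSet_Ioo fun t ht => norm_of_nonneg (hFnonneg n t ht)
  have hFsum : Summable (fun n => ∫ t in Ioo (1/2:ℝ) 1, ‖F n t‖) :=
    Summable.congr summable_li2h (fun n => (hFnormval n).symm)
  have hswap := MeasureTheory.integral_tsum_of_summable_integral_norm hFint hFsum
  have hpt : ∀ t ∈ Ioo (1/2:ℝ) 1, (∑' n, F n t) = -Real.log t / (1-t) := by
    intro t ht
    obtain ⟨h0, h1⟩ := ht
    have hx : |1-t| < 1 := by rw [abs_of_nonneg (by linarith)]; linarith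
    have hs := (Real.hasSum_pow_div_log_of_abs_lt_one hx).div_const (1-t)
    have h1t : (1:ℝ) - (1-t) = t := by ring
    rw [h1t] at hs
    have heq : (fun n : ℕ => (1-t)^(n+1)/((n:ℝ)+1)/(1-t)) = fun n => F n t := by
      funext n
      rw [hF]
      simp only
      have h1t' : (1:ℝ) - t ≠ 0 := by intro h; linarith [h1, (by linarith : (1:ℝ) - t = 0)]
      have h4 : ((n:ℝ)+1) ≠ 0 := by positivity
      field_simp
      ring
    rw [heq] at hs
    exact hs.tsum_eq
  rw [Li2h, ← tsum_congr hFval, hswap]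
  exact setIntegral_congr_fun measurableSet_Ioo (fun t ht => (hpt t ht).symm)

-- (iii)  ∫_{(1/2,1)} -log(1-t)/t = ∑ (1-(1/2)^(n+1))/(n+1)^2
lemma int_iii : ∫ t in Ioo (1/2:ℝ) 1, -Real.log (1-t) / t
    = ∑' n : ℕ, (1 - (1/2:ℝ)^(n+1)) / ((n:ℝ)+1)^2 := by
  set F : ℕ → ℝ → ℝ := fun n t => t^n / ((n:ℝ)+1) with hF
  have hcont : ∀ n, Continuous (F n) := fun n => Continuous.div_const (by fun_prop) _
  have hFint : ∀ n, Integrable (F n) (volume.restrict (Ioo (1/2) 1)) := fun n =>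
    ((hcont n).continuousOn.integrableOn_Icc).mono_set Ioo_subset_Icc_self
  have hFval : ∀ n : ℕ, ∫ t in Ioo (1/2:ℝ) 1, F n t = (1 - (1/2:ℝ)^(n+1)) / ((n:ℝ)+1)^2 := by
    intro n
    rw [hF]
    simp only
    rw [MeasureTheory.integral_div, ← MeasureTheory.integral_Ioc_eq_integral_Ioo,
        ← intervalIntegral.integral_of_le (show (1/2:ℝ) ≤ 1 by norm_num), integral_pow]
    rw [one_pow, div_div, sq]
  have hFnonneg : ∀ n, ∀ t ∈ Ioo (1/2:ℝ) 1, 0 ≤ F n t := by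
    intro n t ht
    have : (0:ℝ) ≤ t := by linarith [ht.1]
    positivity
  have hFnormval : ∀ n : ℕ, ∫ t in Ioo (1/2:ℝ) 1, ‖F n t‖
      = (1 - (1/2:ℝ)^(n+1)) / ((n:ℝ)+1)^2 := by
    intro n
    rw [← hFval n]
    exact setIntegral_congr_fun measurableSet_Ioo fun t ht => norm_of_nonneg (hFnonneg n t ht)
  have hFsum : Summable (fun n => ∫ t in Ioo (1/2:ℝ) 1, ‖F n t‖) :=
    Summable.congr summable_li2c (fun n => (hFnormval n).symm)
  have hswap := MeasureTheory.integral_tsum_of_summable_integral_norm hFint hFsum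
  have hpt : ∀ t ∈ Ioo (1/2:ℝ) 1, (∑' n, F n t) = -Real.log (1-t) / t := by
    intro t ht
    obtain ⟨h0, h1⟩ := ht
    have hx : |t| < 1 := by rw [abs_of_nonneg (by linarith)]; linarith
    have hs := (Real.hasSum_pow_div_log_of_abs_lt_one hx).div_const t
    have heq : (fun n : ℕ => t^(n+1)/((n:ℝ)+1)/t) = fun n => F n t := by
      funext n
      rw [hF]
      simp only
      have ht0 : t ≠ 0 := by intro h; rw [h] at h0; norm_num at h0
      have h4 : ((n:ℝ)+1) ≠ 0 := by positivity
      field_simp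
      ring
    rw [heq] at hs
    exact hs.tsum_eq
  rw [← tsum_congr hFval, hswap]
  exact setIntegral_congr_fun measurableSet_Ioo (fun t ht => (hpt t ht).symm)

-- B : ∫_{(0,1)} -2 log(1+u)/(1+u) = -(log 2)^2
lemma int_B : ∫ u in Ioo (0:ℝ) 1, -2 * Real.log (1+u) / (1+u) = -(Real.log 2)^2 := by
  have hderiv : ∀ u ∈ uIcc (0:ℝ) 1,
      HasDerivAt (fun u : ℝ => -(Real.log (1+u))^2) (-2 * Real.log (1+u) / (1+u)) u := by
    intro u hu
    rw [Set.uIcc_of_le (by norm_num : (0:ℝ) ≤ 1)] at hu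
    have hpos : (0:ℝ) < 1 + u := by linarith [hu.1]
    have hlog : HasDerivAt (fun u : ℝ => Real.log (1+u)) ((1+u)⁻¹) u := by
      have h1 : HasDerivAt (fun u : ℝ => 1 + u) 1 u := by
        simpa using (hasDerivAt_id u).const_add 1
      have := (Real.hasDerivAt_log hpos.ne').comp u h1
      simpa [Function.comp_def] using this
    have hsq := (hlog.pow 2).neg
    refine hsq.congr_deriv ?_
    field_simp
    norm_num
  have hint : IntervalIntegrable (fun u : ℝ => -2 * Real.log (1+u) / (1+u)) volume 0 1 := by
    apply ContinuousOn.intervalIntegrable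
    rw [Set.uIcc_of_le (by norm_num : (0:ℝ) ≤ 1)]
    apply ContinuousOn.div
    · apply ContinuousOn.mul continuousOn_const
      intro u hu
      have hpos : (0:ℝ) < 1 + u := by linarith [hu.1]
      exact (Real.continuousAt_log hpos.ne').comp (by fun_prop) |>.continuousWithinAt
    · fun_prop
    · intro u hu
      have : (0:ℝ) < 1 + u := by linarith [hu.1]
      exact this.ne'
  have := intervalIntegral.integral_eq_sub_of_hasDerivAt hderiv hint
  rw [← MeasureTheory.integral_Ioc_eq_integral_Ioo,
      ← intervalIntegral.integral_of_le (show (0:ℝ) ≤ 1 by norm_num), this]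
  norm_num [Real.log_one]



-- the basic limit x log x → 0
lemma tendsto_log_mul_self : Tendsto (fun w : ℝ => Real.log w * w) (𝓝[>] (0:ℝ)) (𝓝 0) := by
  have h := tendsto_log_mul_rpow_nhdsGT_zero (show (0:ℝ) < 1 by norm_num)
  apply h.congr'
  filter_upwards [self_mem_nhdsWithin] with w hw
  rw [Real.rpow_one]

lemma tendsto_aux1 : Tendsto (fun u : ℝ => Real.log (1-u) * (1-u)) (𝓝[<] (1:ℝ)) (𝓝 0) := by
  have hw : Tendsto (fun u : ℝ => 1 - u) (𝓝[<] (1:ℝ)) (𝓝[>] (0:ℝ)) := by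
    apply tendsto_nhdsWithin_of_tendsto_nhds_of_eventually_within
    · have hc : Continuous (fun u : ℝ => 1 - u) := by fun_prop
      have := hc.tendsto 1
      simp only [sub_self] at this
      exact this.mono_left nhdsWithin_le_nhds
    · filter_upwards [self_mem_nhdsWithin] with u hu
      simp only [Set.mem_Iio] at hu
      exact sub_pos.2 hu
  exact tendsto_log_mul_self.comp hw

-- integration by parts for A
lemma int_A : ∫ u in Ioo (0:ℝ) 1, -2 * Real.log (1-u) / (1+u) = 2 * Li2h := by
  set Q : ℝ → ℝ := fun u => (-Real.log (1-u)) * Real.log ((1+u)/2) with hQ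
  set Q' : ℝ → ℝ := fun u => Real.log ((1+u)/2) / (1-u) + (-Real.log (1-u)) / (1+u) with hQ'
  have habs : ∀ u ∈ Ioo (0:ℝ) 1, |Real.log ((1+u)/2)| ≤ 1 - u := by
    intro u hu
    obtain ⟨h0, h1⟩ := hu
    have h2 : (1+u)/2 = 1 - (1-u)/2 := by ring
    have h3 : -Real.log (1 - (1-u)/2) ≤ 2 * ((1-u)/2) :=
      neg_log_one_sub_le (by linarith) (by linarith)
    have h4 : Real.log ((1+u)/2) ≤ 0 :=
      Real.log_nonpos (by linarith) (by linarith)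
    rw [abs_of_nonpos h4, h2]
    linarith
  have hQd : ∀ u ∈ Ioo (0:ℝ) 1, HasDerivAt Q (Q' u) u := by
    intro u hu
    obtain ⟨h0, h1⟩ := hu
    have h1u : (0:ℝ) < 1 - u := by linarith
    have h2u : (0:ℝ) < (1+u)/2 := by linarith
    have hd1 : HasDerivAt (fun u : ℝ => -Real.log (1-u)) ((1-u)⁻¹) u := by
      have ha : HasDerivAt (fun u : ℝ => 1 - u) (-1) u := by
        simpa using (hasDerivAt_id u).const_sub 1
      have := ((Real.hasDerivAt_log h1u.ne').comp u ha).neg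
      simpa [Function.comp_def, Pi.neg_def] using this
    have hd2 : HasDerivAt (fun u : ℝ => Real.log ((1+u)/2)) ((1+u)⁻¹) u := by
      have ha : HasDerivAt (fun u : ℝ => (1+u)/2) (1/2) u := by
        simpa using ((hasDerivAt_id u).const_add 1).div_const 2
      have hthis := (Real.hasDerivAt_log h2u.ne').comp u ha
      have h2 : ((1+u)/2)⁻¹ * (1/2) = (1+u)⁻¹ := by
        field_simp
      rw [h2] at hthis
      simpa [Function.comp_def] using hthis
    have := hd1.mul hd2
    refine this.congr_deriv ?_
    simp only [hQ', div_eq_mul_inv]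
    ring
  have hQ'memb : ∀ u ∈ Ioo (0:ℝ) 1, ‖Q' u‖ ≤ 1 + 2 * (-Real.log (1-u)) := by
    intro u hu
    obtain ⟨h0, h1⟩ := hu
    have h1u : (0:ℝ) < 1 - u := by linarith
    have hm : 0 ≤ -Real.log (1-u) := by
      have := Real.log_nonpos h1u.le (by linarith)
      linarith
    rw [hQ', Real.norm_eq_abs]
    have e1 : |Real.log ((1+u)/2) / (1-u)| ≤ 1 := by
      rw [abs_div, abs_of_pos h1u]
      rw [div_le_one h1u]
      exact habs u ⟨h0, h1⟩
    have e2 : |(-Real.log (1-u)) / (1+u)| ≤ 2 * (-Real.log (1-u)) := by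
      rw [abs_div, abs_of_nonneg hm, abs_of_pos (show (0:ℝ) < 1+u by linarith)]
      rw [div_le_iff₀ (show (0:ℝ) < 1+u by linarith)]
      nlinarith
    calc |Real.log ((1+u)/2) / (1-u) + (-Real.log (1-u)) / (1+u)|
        ≤ |Real.log ((1+u)/2) / (1-u)| + |(-Real.log (1-u)) / (1+u)| := abs_add_le _ _
      _ ≤ 1 + 2 * (-Real.log (1-u)) := add_le_add e1 e2
  have hmeas : AEStronglyMeasurable Q' (volume.restrict (Ioo 0 1)) := by
    apply Measurable.aestronglyMeasurable
    have m1 : Measurable fun u : ℝ => Real.log ((1+u)/2) :=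
      Real.measurable_log.comp (by fun_prop)
    have m2 : Measurable fun u : ℝ => Real.log (1-u) :=
      Real.measurable_log.comp (by fun_prop)
    fun_prop
  have hbnd_int : IntegrableOn (fun u : ℝ => 1 + 2 * (-Real.log (1-u))) (Ioo 0 1) volume := by
    exact (integrableOn_const measure_Ioo_lt_top.ne).add
      (integrableOn_neg_log_one_sub.const_mul 2)
  have hQ'int : IntegrableOn Q' (Ioo 0 1) volume := by
    apply Integrable.mono hbnd_int hmeas
    filter_upwards [ae_restrict_mem measurableSet_Ioo] with u hu
    refine (hQ'memb u hu).trans ?_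
    have h1u : (0:ℝ) < 1 - u := by linarith [hu.2]
    have hm : 0 ≤ -Real.log (1-u) := by
      have := Real.log_nonpos h1u.le (by linarith [hu.1])
      linarith
    rw [Real.norm_eq_abs, abs_of_nonneg (by linarith)]
  have hQint : IntervalIntegrable Q' volume 0 1 := by
    rw [intervalIntegrable_iff_integrableOn_Ioo_of_le (by norm_num)]
    exact hQ'int
  have hlim0 : Tendsto Q (𝓝[>] (0:ℝ)) (𝓝 0) := by
    have c1 : ContinuousAt (fun u : ℝ => 1 - u) 0 := by fun_prop
    have c1' : ContinuousAt (fun u : ℝ => (1+u)/2) 0 := by fun_prop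
    have c2 : ContinuousAt (fun u : ℝ => Real.log (1 - u)) 0 := by
      have := ContinuousAt.comp (g := Real.log) (f := fun u : ℝ => 1 - u)
        (Real.continuousAt_log (by norm_num)) c1
      simpa [Function.comp_def] using this
    have c3 : ContinuousAt (fun u : ℝ => Real.log ((1+u)/2)) 0 := by
      have := ContinuousAt.comp (g := Real.log) (f := fun u : ℝ => (1+u)/2)
        (Real.continuousAt_log (by norm_num)) c1'
      simpa [Function.comp_def] using this
    have hcont : ContinuousAt Q 0 := (c2.neg).mul c3
    have hQ0 : Q 0 = 0 := by simp [hQ]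
    have h := (hcont.continuousWithinAt (s := Set.Ioi (0:ℝ))).tendsto
    rw [hQ0] at h
    exact h
  have hlim1 : Tendsto Q (𝓝[<] (1:ℝ)) (𝓝 0) := by
    have habs0 : Tendsto (fun u : ℝ => |Real.log (1-u) * (1-u)|) (𝓝[<] (1:ℝ)) (𝓝 0) := by
      simpa using tendsto_aux1.abs
    refine squeeze_zero_norm' ?_ habs0
    · filter_upwards [Ioo_mem_nhdsLT_of_mem
        (show (1:ℝ) ∈ Set.Ioc (0:ℝ) 1 from ⟨by norm_num, le_refl _⟩)] with u hu
      obtain ⟨h0, h1⟩ := hu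
      rw [hQ, Real.norm_eq_abs, abs_mul, abs_mul, abs_neg]
      have h1u : (0:ℝ) ≤ 1 - u := by linarith
      rw [abs_of_nonneg h1u]
      exact mul_le_mul_of_nonneg_left (habs u ⟨h0, h1⟩) (abs_nonneg _)
  have hftc := intervalIntegral.integral_eq_sub_of_hasDerivAt_of_tendsto
    (show (0:ℝ) < 1 by norm_num) hQd hQint hlim0 hlim1
  have hQ'zero : ∫ u in Ioo (0:ℝ) 1, Q' u = 0 := by
    rw [← MeasureTheory.integral_Ioc_eq_integral_Ioo,
        ← intervalIntegral.integral_of_le (show (0:ℝ) ≤ 1 by norm_num), hftc]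
    ring
  -- integrand relation
  have hrel : ∀ u ∈ Ioo (0:ℝ) 1,
      -2 * Real.log (1-u) / (1+u) = 2 * Q' u + 2 * (-Real.log ((1+u)/2) / (1-u)) := by
    intro u hu
    rw [hQ']
    ring
  have hint2 : IntegrableOn (fun u : ℝ => -Real.log ((1+u)/2) / (1-u)) (Ioo 0 1) volume := by
    apply Measure.integrableOn_of_bounded (M := 1) measure_Ioo_lt_top.ne
    · apply Measurable.aestronglyMeasurable
      have m1 : Measurable fun u : ℝ => Real.log ((1+u)/2) :=
        Real.measurable_log.comp (by fun_prop)
      fun_prop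
    · filter_upwards [ae_restrict_mem measurableSet_Ioo] with u hu
      obtain ⟨h0, h1⟩ := hu
      have h1u : (0:ℝ) < 1 - u := by linarith
      rw [Real.norm_eq_abs, abs_div, abs_neg, abs_of_pos h1u, div_le_one h1u]
      exact habs u ⟨h0, h1⟩
  calc ∫ u in Ioo (0:ℝ) 1, -2 * Real.log (1-u) / (1+u)
      = ∫ u in Ioo (0:ℝ) 1, (2 * Q' u + 2 * (-Real.log ((1+u)/2) / (1-u))) :=
        setIntegral_congr_fun measurableSet_Ioo (fun u hu => hrel u hu)
    _ = (∫ u in Ioo (0:ℝ) 1, 2 * Q' u)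
          + ∫ u in Ioo (0:ℝ) 1, 2 * (-Real.log ((1+u)/2) / (1-u)) :=
        MeasureTheory.integral_add (hQ'int.const_mul 2) (hint2.const_mul 2)
    _ = 2 * Li2h := by
        rw [MeasureTheory.integral_const_mul, MeasureTheory.integral_const_mul, hQ'zero, int_i]
        ring

lemma tendsto_aux2 : Tendsto (fun t : ℝ => Real.log (1-t) * (1-t)) (𝓝[<] (1:ℝ)) (𝓝 0) :=
  tendsto_aux1

lemma int_iv : ∫ t in Ioo (1/2:ℝ) 1, -Real.log (1-t) / t = (Real.log 2)^2 + Li2h := by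
  set Q : ℝ → ℝ := fun t => (-Real.log (1-t)) * Real.log t with hQ
  set Q' : ℝ → ℝ := fun t => Real.log t / (1-t) + (-Real.log (1-t)) / t with hQ'
  have habs : ∀ t ∈ Ioo (1/2:ℝ) 1, |Real.log t| ≤ 2 * (1 - t) := by
    intro t ht
    obtain ⟨h0, h1⟩ := ht
    have h2 : t = 1 - (1-t) := by ring
    have h3 : -Real.log (1 - (1-t)) ≤ 2 * (1-t) :=
      neg_log_one_sub_le (by linarith) (by linarith)
    have h4 : Real.log t ≤ 0 := Real.log_nonpos (by linarith) (by linarith)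
    rw [abs_of_nonpos h4]
    rw [← h2] at h3
    linarith
  have hQd : ∀ t ∈ Ioo (1/2:ℝ) 1, HasDerivAt Q (Q' t) t := by
    intro t ht
    obtain ⟨h0, h1⟩ := ht
    have h1t : (0:ℝ) < 1 - t := by linarith
    have ht0 : (0:ℝ) < t := by linarith
    have hd1 : HasDerivAt (fun t : ℝ => -Real.log (1-t)) ((1-t)⁻¹) t := by
      have ha : HasDerivAt (fun t : ℝ => 1 - t) (-1) t := by
        simpa using (hasDerivAt_id t).const_sub 1
      have := ((Real.hasDerivAt_log h1t.ne').comp t ha).neg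
      simpa [Function.comp_def, Pi.neg_def] using this
    have hd2 : HasDerivAt Real.log t⁻¹ t := Real.hasDerivAt_log ht0.ne'
    have := hd1.mul hd2
    refine this.congr_deriv ?_
    simp only [hQ', div_eq_mul_inv]
    ring
  have hQ'memb : ∀ t ∈ Ioo (1/2:ℝ) 1, ‖Q' t‖ ≤ 2 + 2 * (-Real.log (1-t)) := by
    intro t ht
    obtain ⟨h0, h1⟩ := ht
    have h1t : (0:ℝ) < 1 - t := by linarith
    have ht0 : (0:ℝ) < t := by linarith
    have hm : 0 ≤ -Real.log (1-t) := by
      have := Real.log_nonpos h1t.le (by linarith)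
      linarith
    rw [hQ', Real.norm_eq_abs]
    have e1 : |Real.log t / (1-t)| ≤ 2 := by
      rw [abs_div, abs_of_pos h1t, div_le_iff₀ h1t]
      have := habs t ⟨h0, h1⟩
      linarith
    have e2 : |(-Real.log (1-t)) / t| ≤ 2 * (-Real.log (1-t)) := by
      rw [abs_div, abs_of_nonneg hm, abs_of_pos ht0, div_le_iff₀ ht0]
      nlinarith
    calc |Real.log t / (1-t) + (-Real.log (1-t)) / t|
        ≤ |Real.log t / (1-t)| + |(-Real.log (1-t)) / t| := abs_add_le _ _
      _ ≤ 2 + 2 * (-Real.log (1-t)) := add_le_add e1 e2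
  have hmeas : AEStronglyMeasurable Q' (volume.restrict (Ioo (1/2) 1)) := by
    apply Measurable.aestronglyMeasurable
    have m2 : Measurable fun t : ℝ => Real.log (1-t) :=
      Real.measurable_log.comp (by fun_prop)
    have m1 : Measurable (Real.log : ℝ → ℝ) := Real.measurable_log
    fun_prop
  have hbnd_int : IntegrableOn (fun t : ℝ => 2 + 2 * (-Real.log (1-t))) (Ioo (1/2) 1) volume := by
    apply Integrable.add (integrableOn_const measure_Ioo_lt_top.ne)
    exact ((integrableOn_neg_log_one_sub.mono_set
      (Set.Ioo_subset_Ioo (by norm_num) (le_refl 1))).const_mul 2)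
  have hQ'int : IntegrableOn Q' (Ioo (1/2) 1) volume := by
    apply Integrable.mono hbnd_int hmeas
    filter_upwards [ae_restrict_mem measurableSet_Ioo] with t ht
    refine (hQ'memb t ht).trans ?_
    have h1t : (0:ℝ) < 1 - t := by linarith [ht.2]
    have hm : 0 ≤ -Real.log (1-t) := by
      have := Real.log_nonpos h1t.le (by linarith [ht.1])
      linarith
    rw [Real.norm_eq_abs, abs_of_nonneg (by linarith)]
  have hQint : IntervalIntegrable Q' volume (1/2) 1 := by
    rw [intervalIntegrable_iff_integrableOn_Ioo_of_le (by norm_num)]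
    exact hQ'int
  have hlim0 : Tendsto Q (𝓝[>] (1/2:ℝ)) (𝓝 (-(Real.log 2)^2)) := by
    have c1 : ContinuousAt (fun t : ℝ => 1 - t) (1/2) := by fun_prop
    have c2 : ContinuousAt (fun t : ℝ => Real.log (1 - t)) (1/2) := by
      have := ContinuousAt.comp (g := Real.log) (f := fun t : ℝ => 1 - t)
        (Real.continuousAt_log (by norm_num)) c1
      simpa [Function.comp_def] using this
    have c3 : ContinuousAt (Real.log : ℝ → ℝ) ((1:ℝ)/2) := Real.continuousAt_log (by norm_num)
    have hcont : ContinuousAt Q (1/2) := (c2.neg).mul c3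
    have hQhalf : Q (1/2) = -(Real.log 2)^2 := by
      rw [hQ]
      simp only
      rw [show (1:ℝ) - 1/2 = 1/2 by norm_num, show Real.log (1/2) = -Real.log 2 by
        rw [one_div, Real.log_inv]]
      ring
    have h := (hcont.continuousWithinAt (s := Set.Ioi ((1:ℝ)/2))).tendsto
    rw [hQhalf] at h
    exact h
  have hlim1 : Tendsto Q (𝓝[<] (1:ℝ)) (𝓝 0) := by
    have habs0 : Tendsto (fun t : ℝ => 2 * |Real.log (1-t) * (1-t)|) (𝓝[<] (1:ℝ)) (𝓝 0) := by
      have := (tendsto_aux1.abs).const_mul (2:ℝ)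
      simpa using this
    refine squeeze_zero_norm' ?_ habs0
    filter_upwards [Ioo_mem_nhdsLT_of_mem
      (show (1:ℝ) ∈ Set.Ioc (1/2:ℝ) 1 from ⟨by norm_num, le_refl _⟩)] with t ht
    obtain ⟨h0, h1⟩ := ht
    rw [hQ, Real.norm_eq_abs, abs_mul, abs_mul, abs_neg]
    have h1t : (0:ℝ) ≤ 1 - t := by linarith
    rw [abs_of_nonneg h1t]
    calc |Real.log (1-t)| * |Real.log t| ≤ |Real.log (1-t)| * (2 * (1-t)) :=
          mul_le_mul_of_nonneg_left (habs t ⟨h0, h1⟩) (abs_nonneg _)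
      _ = 2 * (|Real.log (1-t)| * (1-t)) := by ring
  have hftc := intervalIntegral.integral_eq_sub_of_hasDerivAt_of_tendsto
    (show (1/2:ℝ) < 1 by norm_num) hQd hQint hlim0 hlim1
  have hQ'val : ∫ t in Ioo (1/2:ℝ) 1, Q' t = (Real.log 2)^2 := by
    rw [← MeasureTheory.integral_Ioc_eq_integral_Ioo,
        ← intervalIntegral.integral_of_le (show (1/2:ℝ) ≤ 1 by norm_num), hftc]
    ring
  have hrel : ∀ t ∈ Ioo (1/2:ℝ) 1,
      -Real.log (1-t) / t = Q' t + (-Real.log t / (1-t)) := by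
    intro t ht
    rw [hQ']
    ring
  have hint2 : IntegrableOn (fun t : ℝ => -Real.log t / (1-t)) (Ioo (1/2) 1) volume := by
    apply Measure.integrableOn_of_bounded (M := 2) measure_Ioo_lt_top.ne
    · apply Measurable.aestronglyMeasurable
      have m1 : Measurable (Real.log : ℝ → ℝ) := Real.measurable_log
      fun_prop
    · filter_upwards [ae_restrict_mem measurableSet_Ioo] with t ht
      obtain ⟨h0, h1⟩ := ht
      have h1t : (0:ℝ) < 1 - t := by linarith
      rw [Real.norm_eq_abs, abs_div, abs_neg, abs_of_pos h1t, div_le_iff₀ h1t]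
      have := habs t ⟨h0, h1⟩
      nlinarith
  calc ∫ t in Ioo (1/2:ℝ) 1, -Real.log (1-t) / t
      = ∫ t in Ioo (1/2:ℝ) 1, (Q' t + (-Real.log t / (1-t))) :=
        setIntegral_congr_fun measurableSet_Ioo (fun t ht => hrel t ht)
    _ = (∫ t in Ioo (1/2:ℝ) 1, Q' t) + ∫ t in Ioo (1/2:ℝ) 1, -Real.log t / (1-t) :=
        MeasureTheory.integral_add hQ'int hint2
    _ = (Real.log 2)^2 + Li2h := by rw [hQ'val, int_ii]

lemma zeta_rel : (π:ℝ)^2/6 = 2 * Li2h + (Real.log 2)^2 := by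
  have hb : HasSum (fun n : ℕ => 1/((n:ℝ)+1)^2) ((π:ℝ)^2/6) := by
    have h2 := (hasSum_nat_add_iff' (f := fun n : ℕ => (1:ℝ)/((n:ℝ))^2) 1).2 hasSum_zeta_two
    simp only [Finset.sum_range_one, Nat.cast_zero] at h2
    norm_num at h2
    have heq : (fun n : ℕ => 1/((n:ℝ)+1)^2) = fun n : ℕ => (((n:ℝ)+1)^2)⁻¹ := by
      funext n; rw [one_div]
    rw [heq]
    exact h2
  have hLi : Li2h = ∑' n : ℕ, (1/2:ℝ)^(n+1)/((n:ℝ)+1)^2 := rfl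
  calc (π:ℝ)^2/6 = ∑' n : ℕ, 1/((n:ℝ)+1)^2 := hb.tsum_eq.symm
    _ = ∑' n : ℕ, ((1/2:ℝ)^(n+1)/((n:ℝ)+1)^2 + (1 - (1/2:ℝ)^(n+1))/((n:ℝ)+1)^2) := by
        apply tsum_congr
        intro n
        rw [← add_div, show (1/2:ℝ)^(n+1) + (1 - (1/2:ℝ)^(n+1)) = 1 by ring]
    _ = (∑' n : ℕ, (1/2:ℝ)^(n+1)/((n:ℝ)+1)^2)
          + ∑' n : ℕ, (1 - (1/2:ℝ)^(n+1))/((n:ℝ)+1)^2 :=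
        Summable.tsum_add summable_li2h summable_li2c
    _ = Li2h + ((Real.log 2)^2 + Li2h) := by rw [← hLi, ← int_iii, int_iv]
    _ = 2 * Li2h + (Real.log 2)^2 := by ring



theorem centralBinom_sum_quarter :
    ((∑' k : ℕ, (Nat.centralBinom (k + 1) : ℝ) /
        (((k : ℝ) + 1) ^ 2 * 4 ^ (k + 1)) : ℝ) : ℂ)
      = riemannZeta 2 - 2 * (Real.log 2) ^ 2 := by
  have hcast : ∀ k : ℕ, (Nat.centralBinom (k+1) : ℝ) / (((k:ℝ)+1)^2 * 4^(k+1))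
      = cb (k+1) / ((k:ℝ)+1)^2 := by
    intro k
    rw [cb, div_div, mul_comm]
  have h2int : IntegrableOn (fun u : ℝ => -2 * Real.log (1+u) / (1+u)) (Ioo 0 1) volume := by
    apply (ContinuousOn.integrableOn_Icc ?_).mono_set Ioo_subset_Icc_self
    apply ContinuousOn.div
    · apply ContinuousOn.mul continuousOn_const
      intro u hu
      have hpos : (0:ℝ) < 1 + u := by linarith [hu.1]
      exact ((Real.continuousAt_log hpos.ne').comp (by fun_prop)).continuousWithinAt
    · fun_prop
    · intro u hu
      have : (0:ℝ) < 1 + u := by linarith [hu.1]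
      exact this.ne'
  have h1int : IntegrableOn (fun u : ℝ => -2 * Real.log (1-u) / (1+u)) (Ioo 0 1) volume := by
    apply Integrable.mono (integrableOn_neg_log_one_sub.const_mul 2)
    · apply Measurable.aestronglyMeasurable
      have m2 : Measurable fun u : ℝ => Real.log (1-u) :=
        Real.measurable_log.comp (by fun_prop)
      fun_prop
    · filter_upwards [ae_restrict_mem measurableSet_Ioo] with u hu
      obtain ⟨h0, h1⟩ := hu
      have h1u : (0:ℝ) < 1 - u := by linarith
      have hm : 0 ≤ -Real.log (1-u) := by
        have := Real.log_nonpos h1u.le (by linarith)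
        linarith
      rw [Real.norm_eq_abs, Real.norm_eq_abs, abs_div, abs_of_pos
        (show (0:ℝ) < 1 + u by linarith)]
      have e1 : |(-2) * Real.log (1-u)| = 2 * (-Real.log (1-u)) := by
        rw [abs_mul]
        rw [abs_of_nonpos (by linarith : Real.log (1-u) ≤ 0)]
        norm_num
      have e2 : |2 * (-Real.log (1-u))| = 2 * (-Real.log (1-u)) := by
        rw [abs_of_nonneg (by linarith)]
      rw [e1, e2, div_le_iff₀ (show (0:ℝ) < 1 + u by linarith)]
      nlinarith
  have hsplit : ∫ u in Ioo (0:ℝ) 1, -2 * Real.log (1 - u^2) / (1 + u)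
      = (∫ u in Ioo (0:ℝ) 1, -2 * Real.log (1-u) / (1+u))
        + ∫ u in Ioo (0:ℝ) 1, -2 * Real.log (1+u) / (1+u) := by
    rw [← MeasureTheory.integral_add h1int h2int]
    apply setIntegral_congr_fun measurableSet_Ioo
    intro u hu
    obtain ⟨h0, h1⟩ := hu
    have hl : Real.log (1 - u^2) = Real.log (1-u) + Real.log (1+u) := by
      rw [← Real.log_mul (by linarith : (1:ℝ) - u ≠ 0) (by positivity : (1:ℝ) + u ≠ 0)]
      congr 1
      ring
    simp only
    rw [hl]
    ring
  have hreal : (∑' k : ℕ, (Nat.centralBinom (k + 1) : ℝ) /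
      (((k : ℝ) + 1) ^ 2 * 4 ^ (k + 1))) = π^2/6 - 2*(Real.log 2)^2 := by
    rw [tsum_congr hcast, sum_eq_int, hsplit, int_A, int_B]
    have := zeta_rel
    linarith
  rw [hreal, riemannZeta_two]
  push_cast
  ring
end

section
/- ∑_{l≥0} 1/((2l+1)·C(2l,l)) = 2π√3/9, where C(2l,l) is the central binomial coefficient. -/
open Real MeasureTheory intervalIntegral
open scoped ENNReal


lemma beta_val (l : ℕ) :
    ∫ x in (0:ℝ)..1, x ^ l * (1 - x) ^ l
      = 1 / ((2 * (l : ℝ) + 1) * (Nat.centralBinom l : ℝ)) := by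
  have h1 : Complex.betaIntegral (l + 1) (l + 1)
      = ((∫ x in (0:ℝ)..1, x ^ l * (1 - x) ^ l : ℝ) : ℂ) := by
    rw [Complex.betaIntegral, ← intervalIntegral.integral_ofReal]
    refine intervalIntegral.integral_congr fun x hx => ?_
    push_cast
    rw [add_sub_cancel_right, Complex.cpow_natCast, Complex.cpow_natCast]
  have h2 := Complex.Gamma_mul_Gamma_eq_betaIntegral
    (s := (l : ℂ) + 1) (t := (l : ℂ) + 1) (by simp; positivity) (by simp; positivity)
  have h3 : ((l : ℂ) + 1) + ((l : ℂ) + 1) = ((2 * l + 1 : ℕ) : ℂ) + 1 := by push_cast; ring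
  rw [h3, Complex.Gamma_nat_eq_factorial, Complex.Gamma_nat_eq_factorial, h1] at h2
  have h4 : ((2 * l + 1).factorial : ℂ) ≠ 0 := by exact_mod_cast (Nat.factorial_pos _).ne'
  have h5 : (∫ x in (0:ℝ)..1, x ^ l * (1 - x) ^ l : ℝ)
      = ((l.factorial : ℝ) * l.factorial) / ((2 * l + 1).factorial : ℝ) := by
    have h6 : ((∫ x in (0:ℝ)..1, x ^ l * (1 - x) ^ l : ℝ) : ℂ)
        = ((l.factorial : ℂ) * l.factorial) / ((2 * l + 1).factorial : ℂ) := by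
      rw [eq_div_iff h4]
      linear_combination -h2
    have h7 : ((∫ x in (0:ℝ)..1, x ^ l * (1 - x) ^ l : ℝ) : ℂ)
        = ((((l.factorial : ℝ) * l.factorial) / ((2 * l + 1).factorial : ℝ) : ℝ) : ℂ) := by
      push_cast
      exact h6
    exact_mod_cast h7
  rw [h5]
  have key : (2 * l + 1).factorial = (2 * l + 1) * (Nat.centralBinom l * (l.factorial * l.factorial)) := by
    rw [Nat.factorial_succ]
    congr 1
    have h := Nat.choose_mul_factorial_mul_factorial (show l ≤ 2 * l by omega)
    have h2l : 2 * l - l = l := by omega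
    rw [h2l] at h
    rw [Nat.centralBinom, ← h]
    ring
  rw [key]
  push_cast
  have hc : (Nat.centralBinom l : ℝ) ≠ 0 := by exact_mod_cast l.centralBinom_pos.ne'
  have hf : (l.factorial : ℝ) ≠ 0 := by exact_mod_cast (Nat.factorial_pos l).ne'
  field_simp


lemma sqrt3_pos : (0:ℝ) < Real.sqrt 3 := Real.sqrt_pos.mpr (by norm_num)

lemma arctan_inv_sqrt3 : Real.arctan (1 / Real.sqrt 3) = π / 6 := by
  rw [← Real.tan_pi_div_six]
  exact Real.arctan_tan (by linarith [Real.pi_pos]) (by linarith [Real.pi_pos])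

lemma denom_pos (x : ℝ) : 0 < 1 - x * (1 - x) := by nlinarith [sq_nonneg (x - 1/2)]

lemma final_integral :
    ∫ x in (0:ℝ)..1, (1 - x * (1 - x))⁻¹ = 2 * π * Real.sqrt 3 / 9 := by
  have hsq : Real.sqrt 3 ^ 2 = 3 := Real.sq_sqrt (by norm_num)
  have h3 := sqrt3_pos
  have hderiv : ∀ x ∈ Set.uIcc (0:ℝ) 1,
      HasDerivAt (fun y : ℝ => 2 / Real.sqrt 3 * Real.arctan ((2 * y - 1) / Real.sqrt 3))
        ((1 - x * (1 - x))⁻¹) x := by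
    intro x _
    have h1 : HasDerivAt (fun y : ℝ => (2 * y - 1) / Real.sqrt 3) (2 / Real.sqrt 3) x := by
      have := (((hasDerivAt_id x).const_mul 2).sub_const 1).div_const (Real.sqrt 3)
      simpa using this
    have h2 := (Real.hasDerivAt_arctan ((2 * x - 1) / Real.sqrt 3)).comp x h1
    have h4 := h2.const_mul (2 / Real.sqrt 3)
    refine h4.congr_deriv (Eq.symm ?_)
    have hd : (1:ℝ) - x + x ^ 2 ≠ 0 := by nlinarith [sq_nonneg (x - 1/2)]
    have he : (1:ℝ) - x * (1 - x) = 1 - x + x ^ 2 := by ring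
    rw [he, div_pow, hsq]
    field_simp
    linear_combination (3 + (2 * x - 1) ^ 2) * hsq
  rw [intervalIntegral.integral_eq_sub_of_hasDerivAt hderiv ?_]
  · norm_num
    have ha : Real.arctan (Real.sqrt 3)⁻¹ = π / 6 := by rw [← one_div]; exact arctan_inv_sqrt3
    rw [show (-1 : ℝ) / Real.sqrt 3 = -(Real.sqrt 3)⁻¹ by ring, Real.arctan_neg, ha]
    rw [eq_div_iff (show (9:ℝ) ≠ 0 by norm_num)]
    field_simp
    nlinarith [hsq, Real.pi_pos]
  · apply Continuous.intervalIntegrable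
    exact .inv₀ (by continuity) (fun x => (denom_pos x).ne')


theorem inverse_centralBinom_sum :
    ∑' l : ℕ, (1 : ℝ) / ((2 * (l : ℝ) + 1) * (Nat.centralBinom l : ℝ))
      = 2 * π * Real.sqrt 3 / 9 := by
  have key : ∀ l : ℕ, (1 : ℝ) / ((2 * (l : ℝ) + 1) * (Nat.centralBinom l : ℝ))
      = ∫ x in Set.Ioc (0:ℝ) 1, (x * (1 - x)) ^ l := by
    intro l
    rw [← beta_val l, intervalIntegral.integral_of_le zero_le_one]
    exact setIntegral_congr_fun measurableSet_Ioc fun x _ => (mul_pow x (1-x) l).symm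
  have hmeas : ∀ l : ℕ, AEStronglyMeasurable (fun x : ℝ => (x * (1 - x)) ^ l)
      (volume.restrict (Set.Ioc (0:ℝ) 1)) := fun l => (by continuity : Continuous
      (fun x : ℝ => (x * (1 - x)) ^ l)).aestronglyMeasurable
  have hfin : ∑' l : ℕ, ∫⁻ x in Set.Ioc (0:ℝ) 1, ‖(x * (1 - x)) ^ l‖₊ ∂volume ≠ ⊤ := by
    have hle : ∀ l : ℕ, ∫⁻ x in Set.Ioc (0:ℝ) 1, ‖(x * (1 - x)) ^ l‖₊ ∂volume
        ≤ (ENNReal.ofReal (1/4)) ^ l := by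
      intro l
      have hpt : ∀ x ∈ Set.Ioc (0:ℝ) 1,
          (‖(x * (1 - x)) ^ l‖₊ : ℝ≥0∞) ≤ (ENNReal.ofReal (1/4)) ^ l := by
        intro x hx
        rw [← ENNReal.ofReal_pow (by norm_num), ← enorm_eq_nnnorm, Real.enorm_eq_ofReal_abs]
        apply ENNReal.ofReal_le_ofReal
        rw [abs_pow, abs_of_nonneg (by nlinarith [hx.1, hx.2] : (0:ℝ) ≤ x * (1 - x))]
        exact pow_le_pow_left₀ (by nlinarith [hx.1, hx.2]) (by nlinarith [sq_nonneg (x - 1/2)]) l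
      calc ∫⁻ x in Set.Ioc (0:ℝ) 1, ‖(x * (1 - x)) ^ l‖₊ ∂volume
          ≤ ∫⁻ _ in Set.Ioc (0:ℝ) 1, (ENNReal.ofReal (1/4)) ^ l ∂volume :=
            setLIntegral_mono' measurableSet_Ioc hpt
        _ = (ENNReal.ofReal (1/4)) ^ l * volume (Set.Ioc (0:ℝ) 1) := setLIntegral_const _ _
        _ ≤ (ENNReal.ofReal (1/4)) ^ l := by
            rw [Real.volume_Ioc]
            simp
    have hgeo : (∑' l : ℕ, (ENNReal.ofReal (1/4)) ^ l) ≠ ⊤ := by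
      rw [ENNReal.tsum_geometric]
      refine ENNReal.inv_ne_top.mpr fun h => ?_
      exact absurd (tsub_eq_zero_iff_le.mp h)
        (not_le.mpr (ENNReal.ofReal_lt_one.mpr (by norm_num)))
    exact ne_top_of_le_ne_top hgeo (ENNReal.tsum_le_tsum hle)
  calc ∑' l : ℕ, (1 : ℝ) / ((2 * (l : ℝ) + 1) * (Nat.centralBinom l : ℝ))
      = ∑' l : ℕ, ∫ x in Set.Ioc (0:ℝ) 1, (x * (1 - x)) ^ l := tsum_congr key
    _ = ∫ x in Set.Ioc (0:ℝ) 1, ∑' l : ℕ, (x * (1 - x)) ^ l :=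
        (MeasureTheory.integral_tsum hmeas hfin).symm
    _ = ∫ x in Set.Ioc (0:ℝ) 1, (1 - x * (1 - x))⁻¹ := by
        refine setIntegral_congr_fun measurableSet_Ioc fun x hx => ?_
        exact tsum_geometric_of_lt_one (by nlinarith [hx.1, hx.2])
          (by nlinarith [sq_nonneg (x - 1/2)])
    _ = ∫ x in (0:ℝ)..1, (1 - x * (1 - x))⁻¹ :=
        (intervalIntegral.integral_of_le zero_le_one).symm
    _ = 2 * π * Real.sqrt 3 / 9 := final_integral
end

section
/- For every natural number n ≥ 1, ∫ from π/3 to 2π/3 of cos^{2n}θ dθ = (√3 / 4^n) · C(2n-1, n-1) · ∑_{l=n}^∞ 1/((2l+1) C(2l,l)). -/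
open Real


noncomputable def ff (l : ℕ) : ℝ := 1 / ((2 * (l : ℝ) + 1) * (Nat.centralBinom l : ℝ))

noncomputable def Ss (k : ℕ) : ℝ := ∑' l : ℕ, ff (l + k)

noncomputable def II (n : ℕ) : ℝ := ∫ θ in (π/3)..(2*π/3), (Real.cos θ) ^ (2 * n)

noncomputable def RR (m : ℕ) : ℝ :=
  Real.sqrt 3 / 4 ^ (m+1) * (Nat.choose (2*m+1) m : ℝ) * Ss (m+1)

lemma cb_pos_s15 (l : ℕ) : (0:ℝ) < (Nat.centralBinom l : ℝ) := by
  exact_mod_cast l.centralBinom_pos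

lemma ff_pos (l : ℕ) : 0 < ff l := by
  have := cb_pos_s15 l
  unfold ff
  positivity

lemma ff_le (l : ℕ) : ff l ≤ (1/4 : ℝ)^l := by
  have h1 : (4:ℕ)^l ≤ (2*l+1) * Nat.centralBinom l := by
    rcases Nat.eq_zero_or_pos l with h|h
    · subst h; simp
    · calc (4:ℕ)^l ≤ 2*l * Nat.centralBinom l :=
            Nat.four_pow_le_two_mul_self_mul_centralBinom l h
        _ ≤ (2*l+1) * Nat.centralBinom l := by
            exact Nat.mul_le_mul_right _ (by omega)
  have h1' : (4:ℝ)^l ≤ (2*(l:ℝ)+1) * Nat.centralBinom l := by exact_mod_cast h1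
  have h4 : (0:ℝ) < 4^l := by positivity
  have : ff l ≤ 1 / (4:ℝ)^l := by
    unfold ff
    exact one_div_le_one_div_of_le h4 h1'
  calc ff l ≤ 1 / (4:ℝ)^l := this
    _ = (1/4:ℝ)^l := by rw [div_pow, one_pow]

lemma summable_ff : Summable ff :=
  Summable.of_nonneg_of_le (fun l => (ff_pos l).le) ff_le
    (summable_geometric_of_lt_one (by norm_num) (by norm_num))

lemma summable_ff_add (k : ℕ) : Summable (fun l => ff (l + k)) :=
  (summable_nat_add_iff k).2 summable_ff

lemma Ss_nonneg (k : ℕ) : 0 ≤ Ss k :=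
  tsum_nonneg (fun l => (ff_pos _).le)

lemma Ss_le (k : ℕ) : Ss k ≤ (4/3 : ℝ) * (1/4)^k := by
  have hg : Summable (fun l : ℕ => (1/4:ℝ)^(l+k)) :=
    (summable_nat_add_iff k).2 (summable_geometric_of_lt_one (by norm_num) (by norm_num))
  have h1 : Ss k ≤ ∑' l : ℕ, (1/4:ℝ)^(l+k) :=
    Summable.tsum_le_tsum (fun l => ff_le (l+k)) (summable_ff_add k) hg
  have h2 : ∑' l : ℕ, (1/4:ℝ)^(l+k) = (4/3 : ℝ) * (1/4)^k := by
    simp only [pow_add]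
    rw [tsum_mul_right, tsum_geometric_of_lt_one (by norm_num) (by norm_num)]
    norm_num
  linarith

lemma Ss_succ (k : ℕ) : Ss k = ff k + Ss (k+1) := by
  have h := Summable.tsum_eq_zero_add (summable_ff_add k)
  simp only [zero_add] at h
  rw [Ss, h]
  congr 1
  rw [Ss]
  congr 1
  funext l
  congr 1
  omega
lemma II_succ (m : ℕ) :
    II (m+2) = (2*(m:ℝ)+3)/(2*m+4) * II (m+1) - Real.sqrt 3 / (4^(m+2) * (m+2)) := by
  have e : 2*(m+2) = (2*m+2)+2 := by ring
  have h := integral_cos_pow (a := π/3) (b := 2*π/3) (2*m+2)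
  have c2 : Real.cos (2*π/3) = -(1/2) := by
    have : 2*π/3 = π - π/3 := by ring
    rw [this, Real.cos_pi_sub, Real.cos_pi_div_three]
  have s2 : Real.sin (2*π/3) = Real.sqrt 3 / 2 := by
    have : 2*π/3 = π - π/3 := by ring
    rw [this, Real.sin_pi_sub, Real.sin_pi_div_three]
  rw [c2, s2, Real.cos_pi_div_three, Real.sin_pi_div_three] at h
  have hodd : Odd (2*m+2+1) := ⟨m+1, by ring⟩
  rw [hodd.neg_pow] at h
  have hpow : ((1:ℝ)/2)^(2*m+2+1) = (1/4)^(m+1) / 2 := by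
    rw [show 2*m+2+1 = 2*(m+1)+1 by ring, pow_succ, pow_mul]
    norm_num
    ring
  rw [hpow] at h
  have hII : II (m+1) = ∫ x in (π/3)..(2*π/3), Real.cos x ^ (2*m+2) := by
    rw [II, show 2*(m+1) = 2*m+2 from by ring]
  rw [II, e, h, ← hII]
  push_cast
  have h4 : (0:ℝ) < 4^(m+1) := by positivity
  have h42 : ((4:ℝ)^(m+2)) = 4 * 4^(m+1) := by rw [pow_succ]; ring
  have hp : ((1:ℝ)/4)^(m+1) = 1/4^(m+1) := by rw [div_pow, one_pow]
  rw [h42, hp]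
  have hm : (0:ℝ) < (m:ℝ) + 2 := by positivity
  field_simp
  ring
lemma choose_eq_half_cb (m : ℕ) : 2 * Nat.choose (2*m+1) m = Nat.centralBinom (m+1) := by
  have h1 : Nat.centralBinom (m+1) = Nat.choose (2*m+1) m + Nat.choose (2*m+1) (m+1) := by
    rw [Nat.centralBinom, show 2*(m+1) = (2*m+1)+1 from by ring, Nat.choose_succ_succ']
  have h2 : Nat.choose (2*m+1) (m+1) = Nat.choose (2*m+1) m := by
    rw [← Nat.choose_symm (show m+1 ≤ 2*m+1 by omega), show 2*m+1-(m+1) = m from by omega]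
  omega

lemma RR_succ (m : ℕ) :
    RR (m+1) = (2*(m:ℝ)+3)/(2*m+4) * RR m - Real.sqrt 3 / (4^(m+2) * (m+2)) := by
  have hB1 := cb_pos_s15 (m+1)
  have hc1 : (Nat.choose (2*m+1) m : ℝ) = (Nat.centralBinom (m+1) : ℝ)/2 := by
    have h := choose_eq_half_cb m
    have h' : (2:ℝ) * (Nat.choose (2*m+1) m : ℝ) = (Nat.centralBinom (m+1) : ℝ) := by
      exact_mod_cast h
    linarith
  have hc2 : (Nat.choose (2*(m+1)+1) (m+1) : ℝ) = (Nat.centralBinom (m+2) : ℝ)/2 := by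
    have h := choose_eq_half_cb (m+1)
    have h' : (2:ℝ) * (Nat.choose (2*(m+1)+1) (m+1) : ℝ) = (Nat.centralBinom (m+2) : ℝ) := by
      exact_mod_cast h
    linarith
  have h2 := Nat.succ_mul_centralBinom_succ (m+1)
  rw [show 2*(m+1)+1 = 2*m+3 from by ring] at h2
  have hB : ((m:ℝ)+2) * (Nat.centralBinom (m+2) : ℝ)
      = 2*(2*(m:ℝ)+3)*(Nat.centralBinom (m+1) : ℝ) := by exact_mod_cast h2
  have hS : Ss (m+1) = ff (m+1) + Ss (m+2) := Ss_succ (m+1)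
  have hfe : ff (m+1) = 1/((2*(m:ℝ)+3) * (Nat.centralBinom (m+1):ℝ)) := by
    rw [ff]; push_cast; ring_nf
  rw [RR, RR, hc2, hc1, show m+1+1 = m+2 from rfl, hS, hfe]
  have hm2 : ((m:ℝ)+2) ≠ 0 := by positivity
  have hb2 : (Nat.centralBinom (m+2) : ℝ)
      = 2*(2*(m:ℝ)+3)*(Nat.centralBinom (m+1) : ℝ)/((m:ℝ)+2) := by
    field_simp
    linarith [hB]
  rw [hb2, pow_succ (4:ℝ) (m+1)]
  have h4 : ((4:ℝ)^(m+1)) ≠ 0 := by positivity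
  have hB1' : (Nat.centralBinom (m+1) : ℝ) ≠ 0 := ne_of_gt hB1
  have hm3 : (2*(m:ℝ)+3) ≠ 0 := by positivity
  have hm4 : (2*(m:ℝ)+4) ≠ 0 := by positivity
  field_simp
  ring
lemma II_bound (m : ℕ) : |II (m+1)| ≤ (1/4:ℝ)^m := by
  have hb : ∀ x ∈ Set.uIoc (π/3) (2*π/3), ‖Real.cos x ^ (2*(m+1))‖ ≤ (1/4:ℝ)^(m+1) := by
    intro x hx
    have hle : π/3 ≤ 2*π/3 := by linarith [pi_pos]
    rw [Set.uIoc_of_le hle] at hx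
    have h1 : Real.cos x ≤ 1/2 := by
      calc Real.cos x ≤ Real.cos (π/3) := by
            apply Real.cos_le_cos_of_nonneg_of_le_pi
            · positivity
            · linarith [hx.2, pi_pos]
            · exact hx.1.le
        _ = 1/2 := Real.cos_pi_div_three
    have h2 : -(1/2) ≤ Real.cos x := by
      calc -(1/2) = -Real.cos (π/3) := by rw [Real.cos_pi_div_three]
        _ = Real.cos (π - π/3) := (Real.cos_pi_sub _).symm
        _ ≤ Real.cos x := by
            apply Real.cos_le_cos_of_nonneg_of_le_pi
            · linarith [hx.1, pi_pos]
            · linarith [pi_pos]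
            · linarith [hx.2]
    have habs : |Real.cos x| ≤ 1/2 := abs_le.2 ⟨h2, h1⟩
    calc ‖Real.cos x ^ (2*(m+1))‖ = |Real.cos x| ^ (2*(m+1)) := by
          rw [Real.norm_eq_abs, abs_pow]
      _ ≤ (1/2:ℝ) ^ (2*(m+1)) := by
          exact pow_le_pow_left₀ (abs_nonneg _) habs _
      _ = (1/4:ℝ)^(m+1) := by rw [pow_mul]; norm_num
  have h := intervalIntegral.norm_integral_le_of_norm_le_const hb
  rw [Real.norm_eq_abs] at h
  have hd : |2*π/3 - π/3| = π/3 := by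
    rw [abs_of_nonneg (by linarith [pi_pos])]
    ring
  rw [hd] at h
  calc |II (m+1)| ≤ (1/4:ℝ)^(m+1) * (π/3) := h
    _ ≤ (1/4:ℝ)^(m+1) * 4 := by
        have : π/3 ≤ 4 := by linarith [Real.pi_le_four]
        have h4 : (0:ℝ) ≤ (1/4:ℝ)^(m+1) := by positivity
        nlinarith
    _ = (1/4:ℝ)^m := by rw [pow_succ]; ring

lemma sqrt3_le_two : Real.sqrt 3 ≤ 2 := by
  nlinarith [Real.sq_sqrt (by norm_num : (0:ℝ) ≤ 3), Real.sqrt_nonneg 3]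

lemma RR_nonneg (m : ℕ) : 0 ≤ RR m := by
  rw [RR]
  have := Ss_nonneg (m+1)
  positivity

lemma RR_bound (m : ℕ) : RR m ≤ (1/4:ℝ)^m := by
  have hc : (Nat.choose (2*m+1) m : ℝ) ≤ 4^m := by
    exact_mod_cast Nat.choose_middle_le_pow m
  have hS := Ss_le (m+1)
  have hS0 := Ss_nonneg (m+1)
  have h1 : RR m ≤ 2/4^(m+1) * 4^m * ((4/3:ℝ)*(1/4)^(m+1)) := by
    rw [RR]
    gcongr
    all_goals first | exact hS0 | exact sqrt3_le_two | exact hc | exact hS | positivity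
  have ht : (0:ℝ) < 4^m := by positivity
  have h2 : (2:ℝ)/4^(m+1) * 4^m * ((4/3)*(1/4)^(m+1)) ≤ (1/4)^m := by
    rw [pow_succ, pow_succ, div_pow, one_pow]
    field_simp
    nlinarith [sq_nonneg ((4:ℝ)^m), ht]
  linarith

noncomputable def DD (m : ℕ) : ℝ := II (m+1) - RR m

lemma DD_succ (m : ℕ) : DD (m+1) = (2*(m:ℝ)+3)/(2*m+4) * DD m := by
  rw [DD, DD, show m+1+1 = m+2 from rfl, II_succ, RR_succ]
  ring

lemma DD_bound (m : ℕ) : |DD m| ≤ 2 * (1/4:ℝ)^m := by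
  rw [DD]
  have h1 := II_bound m
  have h2 := RR_bound m
  have h3 := RR_nonneg m
  have := abs_sub (II (m+1)) (RR m)
  rw [abs_of_nonneg h3] at *
  calc |II (m+1) - RR m| ≤ |II (m+1)| + |RR m| := abs_sub _ _
    _ ≤ (1/4:ℝ)^m + (1/4:ℝ)^m := by rw [abs_of_nonneg h3]; linarith
    _ = 2 * (1/4:ℝ)^m := by ring

lemma DD_zero : DD 0 = 0 := by
  have key : ∀ m : ℕ, |DD 0| ≤ 2^m * |DD m| := by
    intro m
    induction m with
    | zero => simp
    | succ m ih =>
      have hm0 : (0:ℝ) ≤ (m:ℝ) := Nat.cast_nonneg m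
      have hc : (1/2:ℝ) ≤ (2*(m:ℝ)+3)/(2*m+4) := by
        rw [div_le_div_iff₀ (by norm_num) (by positivity)]
        linarith
      have hc1 : (2*(m:ℝ)+3)/(2*m+4) ≤ 1 := by
        rw [div_le_one (by positivity)]
        linarith
      have habs : |DD (m+1)| = (2*(m:ℝ)+3)/(2*m+4) * |DD m| := by
        rw [DD_succ, abs_mul, abs_of_nonneg (by positivity)]
      have hstep : |DD m| ≤ 2 * |DD (m+1)| := by
        rw [habs]
        nlinarith [abs_nonneg (DD m)]
      calc |DD 0| ≤ 2^m * |DD m| := ih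
        _ ≤ 2^m * (2 * |DD (m+1)|) := by
            have : (0:ℝ) ≤ 2^m := by positivity
            nlinarith
        _ = 2^(m+1) * |DD (m+1)| := by rw [pow_succ]; ring
  have key2 : ∀ m : ℕ, |DD 0| ≤ 2 * (1/2:ℝ)^m := by
    intro m
    calc |DD 0| ≤ 2^m * |DD m| := key m
      _ ≤ 2^m * (2 * (1/4:ℝ)^m) := by
          have : (0:ℝ) ≤ 2^m := by positivity
          nlinarith [DD_bound m, abs_nonneg (DD m)]
      _ = 2 * (1/2:ℝ)^m := by
          rw [show (2:ℝ)^m * (2 * (1/4)^m) = 2 * (2 * (1/4))^m from by rw [mul_pow]; ring]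
          norm_num
  have hlim : Filter.Tendsto (fun m : ℕ => 2 * (1/2:ℝ)^m) Filter.atTop (nhds 0) := by
    have := (tendsto_pow_atTop_nhds_zero_of_lt_one
      (show (0:ℝ) ≤ 1/2 by norm_num) (show (1/2:ℝ) < 1 by norm_num)).const_mul (2:ℝ)
    simpa using this
  have h0 : |DD 0| ≤ 0 := ge_of_tendsto' hlim key2
  exact abs_eq_zero.mp (le_antisymm h0 (abs_nonneg _))

lemma DD_eq_zero (m : ℕ) : DD m = 0 := by
  induction m with
  | zero => exact DD_zero
  | succ m ih => rw [DD_succ, ih, mul_zero]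

lemma main_eq (m : ℕ) : II (m+1) = RR m := by
  have := DD_eq_zero m
  rw [DD, sub_eq_zero] at this
  exact this
theorem cos_pow_integral (n : ℕ) (hn : 1 ≤ n) :
    ∫ θ in (π/3)..(2*π/3), (Real.cos θ) ^ (2 * n)
      = Real.sqrt 3 / 4 ^ n * (Nat.choose (2 * n - 1) (n - 1) : ℝ) *
        ∑' l : ℕ, (1 : ℝ) / ((2 * ((l : ℝ) + (n : ℝ)) + 1) * (Nat.centralBinom (l + n) : ℝ)) := by
  obtain ⟨m, rfl⟩ : ∃ m, n = m + 1 := ⟨n - 1, by omega⟩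
  have h := main_eq m
  rw [II, RR] at h
  rw [h]
  rw [show 2*(m+1)-1 = 2*m+1 from by omega, show (m+1)-1 = m from by omega]
  congr 1
  rw [Ss]
  congr 1
  funext l
  rw [ff]
  push_cast
  ring
end

section
/- For real c > 4 and real s, the double integral over (θ₁, θ₂) ∈ [0,1]² of (2cos 2πθ₁ + 2cos 2πθ₂ + c)^s equals c^s · ∑_{j≥0} C(s, 2j) · C(2j,j)² / c^{2j}, where C(s,k) is the generalized binomial coefficient s(s-1)⋯(s-k+1)/k!. -/
open Real

/-- The generalized binomial coefficient `C(s, k) = s (s-1) ⋯ (s-k+1) / k!`. -/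
noncomputable def genBinom (s : ℝ) (k : ℕ) : ℝ :=
  (∏ i ∈ Finset.range k, (s - (i : ℝ))) / (Nat.factorial k : ℝ)

namespace ZMF

open Filter MeasureTheory intervalIntegral


lemma genBinom_zero (s : ℝ) : genBinom s 0 = 1 := by simp [genBinom]

lemma genBinom_succ (s : ℝ) (k : ℕ) :
    genBinom s (k + 1) = genBinom s k * (s - k) / (k + 1) := by
  unfold genBinom
  rw [Finset.prod_range_succ, Nat.factorial_succ]
  push_cast
  rw [div_mul_eq_mul_div, div_div, mul_comm (Nat.factorial k : ℝ) ((k:ℝ)+1)]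

noncomputable def dBound (s : ℝ) (k : ℕ) : ℝ :=
  (∏ i ∈ Finset.range k, (|s| + 1 + (i : ℝ))) / (Nat.factorial k : ℝ)

lemma dBound_pos (s : ℝ) (k : ℕ) : 0 < dBound s k := by
  apply div_pos
  · exact Finset.prod_pos fun i _ => by positivity
  · exact_mod_cast Nat.factorial_pos k

lemma dBound_succ (s : ℝ) (k : ℕ) :
    dBound s (k + 1) = dBound s k * (|s| + 1 + k) / (k + 1) := by
  unfold dBound
  rw [Finset.prod_range_succ, Nat.factorial_succ]
  push_cast
  rw [div_mul_eq_mul_div, div_div, mul_comm (Nat.factorial k : ℝ) ((k:ℝ)+1)]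

lemma abs_genBinom_le (s : ℝ) (k : ℕ) : |genBinom s k| ≤ dBound s k := by
  induction k with
  | zero => simp [genBinom_zero, dBound]
  | succ k ih =>
      rw [genBinom_succ, dBound_succ]
      have h1 : |genBinom s k * (s - k) / (k + 1)| = |genBinom s k| * |s - k| / (k + 1) := by
        rw [abs_div, abs_mul, abs_of_pos (show (0:ℝ) < (k:ℝ) + 1 by positivity)]
      rw [h1]
      apply div_le_div_of_nonneg_right ?_ (by positivity)
      have h2 : |s - (k:ℝ)| ≤ |s| + 1 + k := by
        calc |s - (k:ℝ)| ≤ |s| + |(k:ℝ)| := abs_sub s (k:ℝ)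
          _ ≤ |s| + 1 + k := by
              rw [abs_of_nonneg (show (0:ℝ) ≤ (k:ℝ) from Nat.cast_nonneg k)]; linarith
      exact mul_le_mul ih h2 (abs_nonneg _) (dBound_pos s k).le

/-- master summability -/
lemma summable_master (s : ℝ) {r : ℝ} (h0 : 0 < r) (hr : r < 1) :
    Summable (fun k : ℕ => ((k : ℝ) + 1) * dBound s k * r ^ k) := by
  apply summable_of_ratio_test_tendsto_lt_one hr
  · refine Filter.Eventually.of_forall fun n => ?_
    have := dBound_pos s n
    positivity
  · have key : ∀ k : ℕ, ‖(((k+1 : ℕ) : ℝ) + 1) * dBound s (k+1) * r ^ (k+1)‖ /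
        ‖((k : ℝ) + 1) * dBound s k * r ^ k‖
        = (((k:ℝ) + 2) / ((k:ℝ) + 1)) * ((|s| + 1 + (k:ℝ)) / ((k:ℝ) + 1)) * r := by
      intro k
      have hd := dBound_pos s k
      have hd1 := dBound_pos s (k+1)
      have h1 : (0:ℝ) < (k:ℝ) + 1 := by positivity
      have hrk : (0:ℝ) < r ^ k := by positivity
      rw [dBound_succ]
      rw [Real.norm_of_nonneg (by positivity), Real.norm_of_nonneg (by positivity)]
      rw [pow_succ]
      push_cast
      field_simp
      ring
    have hT : Filter.Tendsto (fun k : ℕ => ((k:ℝ)+1)) Filter.atTop Filter.atTop :=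
      Filter.tendsto_atTop_add_const_right _ 1 tendsto_natCast_atTop_atTop
    have h2 : Filter.Tendsto (fun k : ℕ => (((k:ℝ) + 2) / ((k:ℝ) + 1))) Filter.atTop (nhds 1) := by
      have h0' := hT.const_div_atTop (1 : ℝ)
      have h3 : ∀ k : ℕ, ((k:ℝ) + 2) / ((k:ℝ) + 1) = 1 + 1 / ((k:ℝ)+1) := by
        intro k
        field_simp
        ring
      simp_rw [h3]
      simpa using tendsto_const_nhds.add h0'
    have h4 : Filter.Tendsto (fun k : ℕ => ((|s| + 1 + (k:ℝ)) / ((k:ℝ) + 1))) Filter.atTop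
        (nhds 1) := by
      have h0' := hT.const_div_atTop (|s| : ℝ)
      have h3 : ∀ k : ℕ, (|s| + 1 + (k:ℝ)) / ((k:ℝ) + 1) = 1 + |s| / ((k:ℝ)+1) := by
        intro k
        field_simp
        ring
      simp_rw [h3]
      simpa using tendsto_const_nhds.add h0'
    have := (h2.mul h4).mul_const r
    simp only [one_mul] at this
    simp_rw [key]
    simpa using this

/-- Summability of the binomial series terms. -/
lemma summable_binomial (s : ℝ) {x r : ℝ} (hxr : |x| ≤ r) (h0 : 0 < r) (hr : r < 1) :
    Summable (fun k : ℕ => genBinom s k * x ^ k) := by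
  apply Summable.of_norm
  apply Summable.of_nonneg_of_le (fun k => norm_nonneg _) ?_ (summable_master s h0 hr)
  intro k
  have h1 : ‖genBinom s k * x ^ k‖ = |genBinom s k| * |x| ^ k := by
    rw [norm_mul, norm_pow]; rfl
  rw [h1]
  have h2 : |x| ^ k ≤ r ^ k := pow_le_pow_left₀ (abs_nonneg x) hxr k
  have hk1 : (1:ℝ) ≤ (k:ℝ) + 1 := by
    have : (0:ℝ) ≤ (k:ℝ) := Nat.cast_nonneg k
    linarith
  calc |genBinom s k| * |x| ^ k ≤ dBound s k * r ^ k :=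
      mul_le_mul (abs_genBinom_le s k) h2 (by positivity) (dBound_pos s k).le
    _ ≤ ((k : ℝ) + 1) * dBound s k * r ^ k := by
      have hd := dBound_pos s k
      have h5 : dBound s k ≤ ((k:ℝ)+1) * dBound s k := le_mul_of_one_le_left hd.le hk1
      exact mul_le_mul_of_nonneg_right h5 (pow_nonneg h0.le k)

/-- The binomial series. -/
theorem hasSum_binomial (s : ℝ) {x : ℝ} (hx : |x| < 1) :
    HasSum (fun k : ℕ => genBinom s k * x ^ k) ((1 + x) ^ s) := by
  set R : ℝ := (|x| + 1) / 2 with hR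
  have hR0 : 0 < R := by positivity
  have hxR : |x| < R := by rw [hR]; linarith
  have hR1 : R < 1 := by rw [hR]; linarith
  set F : ℝ → ℝ := fun y => ∑' k : ℕ, genBinom s k * y ^ k with hF
  set D : ℝ → ℝ := fun y => ∑' k : ℕ, genBinom s k * ((k : ℝ) * y ^ (k - 1)) with hD
  have hmaster := summable_master s hR0 hR1
  have hu : Summable (fun k : ℕ => dBound s k * ((k : ℝ) * R ^ (k - 1))) := by
    rw [← summable_nat_add_iff 1]
    have hw' := (hmaster.comp_injective Nat.succ_injective).mul_left R⁻¹
    have hw : Summable (fun k : ℕ =>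
        R⁻¹ * ((((k+1:ℕ):ℝ) + 1) * dBound s (k+1) * R ^ (k+1))) := by
      simpa [Function.comp] using hw'
    apply Summable.of_nonneg_of_le ?_ ?_ hw
    · intro k
      have := dBound_pos s (k+1)
      positivity
    · intro k
      have hd := dBound_pos s (k+1)
      have hRne : R ≠ 0 := hR0.ne'
      have heq : R⁻¹ * ((((k+1:ℕ):ℝ) + 1) * dBound s (k+1) * R ^ (k+1))
          = ((k:ℝ) + 2) * dBound s (k+1) * R ^ k := by
        push_cast
        rw [pow_succ]
        field_simp
        ring
      rw [heq, Nat.add_sub_cancel]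
      push_cast
      nlinarith [pow_pos hR0 k]
  have hball : ∀ y ∈ Metric.ball (0:ℝ) R, |y| < R := by
    intro y hy
    simpa [Real.norm_eq_abs] using mem_ball_zero_iff.1 hy
  have hderiv : ∀ y ∈ Metric.ball (0:ℝ) R, HasDerivAt F (D y) y := by
    intro y hy
    apply hasDerivAt_tsum_of_isPreconnected hu Metric.isOpen_ball
      (convex_ball (0:ℝ) R).isPreconnected
      (fun k z _ => (hasDerivAt_pow k z).const_mul (genBinom s k)) ?_
      (Metric.mem_ball_self hR0) ?_ hy
    · intro k z hz
      have hz' := (hball z hz).le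
      have h1 : ‖genBinom s k * ((k:ℝ) * z ^ (k-1))‖ = |genBinom s k| * ((k:ℝ) * |z| ^ (k-1)) := by
        rw [norm_mul, norm_mul, norm_pow]
        simp [Real.norm_eq_abs, abs_of_nonneg (show (0:ℝ) ≤ (k:ℝ) from Nat.cast_nonneg k)]
      rw [h1]
      apply mul_le_mul (abs_genBinom_le s k) ?_ (by positivity) (dBound_pos s k).le
      exact mul_le_mul_of_nonneg_left (pow_le_pow_left₀ (abs_nonneg z) hz' _) (Nat.cast_nonneg k)
    · apply summable_of_ne_finset_zero (s := {0})
      intro k hk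
      have : k ≠ 0 := by simpa using hk
      simp [zero_pow this]
  have hODE : ∀ y ∈ Metric.ball (0:ℝ) R, (1 + y) * D y = s * F y := by
    intro y hy
    have hyR := (hball y hy).le
    have hS1 : Summable (fun k : ℕ => genBinom s k * ((k : ℝ) * y ^ (k - 1))) := by
      apply Summable.of_norm
      apply Summable.of_nonneg_of_le (fun k => norm_nonneg _) ?_ hu
      intro k
      have h1 : ‖genBinom s k * ((k:ℝ) * y ^ (k-1))‖ = |genBinom s k| * ((k:ℝ) * |y| ^ (k-1)) := by
        rw [norm_mul, norm_mul, norm_pow]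
        simp [Real.norm_eq_abs, abs_of_nonneg (show (0:ℝ) ≤ (k:ℝ) from Nat.cast_nonneg k)]
      rw [h1]
      apply mul_le_mul (abs_genBinom_le s k) ?_ (by positivity) (dBound_pos s k).le
      exact mul_le_mul_of_nonneg_left (pow_le_pow_left₀ (abs_nonneg y) hyR _) (Nat.cast_nonneg k)
    have hS2 : Summable (fun k : ℕ => genBinom s k * ((k : ℝ) * y ^ k)) := by
      apply Summable.of_norm
      apply Summable.of_nonneg_of_le (fun k => norm_nonneg _) ?_ hmaster
      intro k
      have h1 : ‖genBinom s k * ((k:ℝ) * y ^ k)‖ = |genBinom s k| * ((k:ℝ) * |y| ^ k) := by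
        rw [norm_mul, norm_mul, norm_pow]
        simp [Real.norm_eq_abs, abs_of_nonneg (show (0:ℝ) ≤ (k:ℝ) from Nat.cast_nonneg k)]
      rw [h1]
      calc |genBinom s k| * ((k:ℝ) * |y| ^ k) ≤ dBound s k * (((k:ℝ)+1) * R ^ k) := by
            apply mul_le_mul (abs_genBinom_le s k) ?_ (by positivity) (dBound_pos s k).le
            apply mul_le_mul (by linarith) (pow_le_pow_left₀ (abs_nonneg y) hyR _)
              (by positivity) (by positivity)
        _ = ((k:ℝ)+1) * dBound s k * R ^ k := by ring
    have hyD : y * D y = ∑' k : ℕ, genBinom s k * ((k : ℝ) * y ^ k) := by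
      rw [hD]
      rw [← tsum_mul_left]
      congr 1
      funext k
      cases k with
      | zero => simp
      | succ k =>
          have hpow : y ^ (k + 1 - 1) * y = y ^ (k+1) := by
            rw [Nat.add_sub_cancel, pow_succ]
          calc y * (genBinom s (k+1) * ((((k:ℕ)+1:ℕ)) * y ^ (k+1-1)))
              = genBinom s (k+1) * ((((k:ℕ)+1:ℕ)) * (y ^ (k+1-1) * y)) := by ring
            _ = genBinom s (k+1) * ((((k:ℕ)+1:ℕ)) * y ^ (k+1)) := by rw [hpow]
    have hDshift : D y = ∑' k : ℕ, genBinom s (k+1) * (((k:ℝ)+1) * y ^ k) := by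
      have hDY : D y = ∑' k : ℕ, genBinom s k * ((k : ℝ) * y ^ (k - 1)) := rfl
      rw [hDY, hS1.tsum_eq_zero_add]
      push_cast
      simp
    have hterm : ∀ k : ℕ, genBinom s (k+1) * (((k:ℝ)+1) * y ^ k)
        + genBinom s k * ((k : ℝ) * y ^ k) = s * (genBinom s k * y ^ k) := by
      intro k
      have h1 : genBinom s (k+1) * ((k:ℝ)+1) = genBinom s k * (s - k) := by
        rw [genBinom_succ]
        have : ((k:ℝ)+1) ≠ 0 := by positivity
        field_simp
      calc genBinom s (k+1) * (((k:ℝ)+1) * y ^ k) + genBinom s k * ((k : ℝ) * y ^ k)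
          = (genBinom s (k+1) * ((k:ℝ)+1)) * y ^ k + genBinom s k * ((k : ℝ) * y ^ k) := by ring
        _ = (genBinom s k * (s - k)) * y ^ k + genBinom s k * ((k : ℝ) * y ^ k) := by rw [h1]
        _ = s * (genBinom s k * y ^ k) := by ring
    have hSshift : Summable (fun k : ℕ => genBinom s (k+1) * (((k:ℝ)+1) * y ^ k)) := by
      refine (hS1.comp_injective Nat.succ_injective).congr fun k => ?_
      simp [Function.comp, Nat.cast_succ]
    calc (1 + y) * D y = D y + y * D y := by ring
      _ = (∑' k : ℕ, genBinom s (k+1) * (((k:ℝ)+1) * y ^ k))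
          + ∑' k : ℕ, genBinom s k * ((k : ℝ) * y ^ k) := by rw [hyD, hDshift]
      _ = ∑' k : ℕ, (genBinom s (k+1) * (((k:ℝ)+1) * y ^ k)
          + genBinom s k * ((k : ℝ) * y ^ k)) := (Summable.tsum_add hSshift hS2).symm
      _ = ∑' k : ℕ, s * (genBinom s k * y ^ k) := by simp_rw [hterm]
      _ = s * F y := by rw [tsum_mul_left]
  set g : ℝ → ℝ := fun y => F y * (1 + y) ^ (-s) with hg
  have hgderiv : ∀ y ∈ Metric.ball (0:ℝ) R, HasDerivAt g 0 y := by
    intro y hy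
    have hy1 : 0 < 1 + y := by
      obtain ⟨hl, _⟩ := abs_lt.1 (hball y hy)
      linarith
    have h1 : HasDerivAt (fun z : ℝ => 1 + z) 1 y := by
      simpa using (hasDerivAt_id y).const_add (1:ℝ)
    have h2 : HasDerivAt (fun z : ℝ => (1 + z) ^ (-s)) (1 * (-s) * (1 + y) ^ (-s - 1)) y :=
      h1.rpow_const (Or.inl hy1.ne')
    have h3 := (hderiv y hy).mul h2
    refine h3.congr_deriv ?_
    have hpow : (1 + y) ^ (-s) = (1 + y) ^ (-s - 1) * (1 + y) := by
      nth_rewrite 1 [show -s = (-s - 1) + 1 by ring]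
      rw [Real.rpow_add hy1, Real.rpow_one]
    rw [hpow]
    linear_combination ((1 + y) ^ (-s - 1)) * hODE y hy
  have hgx : g x = g 0 := by
    rcases le_or_gt 0 x with hx0 | hx0
    · have key := constant_of_has_deriv_right_zero (f := g) (a := 0) (b := x) ?_ ?_
      · exact key x (Set.right_mem_Icc.2 hx0)
      · intro z hz
        have hzball : z ∈ Metric.ball (0:ℝ) R := by
          rw [mem_ball_zero_iff, Real.norm_eq_abs, abs_lt]
          have hxR' : x < R := lt_of_le_of_lt (le_abs_self x) hxR
          exact ⟨by linarith [hz.1], by linarith [hz.2]⟩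
        exact ((hgderiv z hzball).continuousAt).continuousWithinAt
      · intro z hz
        have hzball : z ∈ Metric.ball (0:ℝ) R := by
          rw [mem_ball_zero_iff, Real.norm_eq_abs, abs_lt]
          have hxR' : x < R := lt_of_le_of_lt (le_abs_self x) hxR
          exact ⟨by linarith [hz.1], by linarith [hz.2]⟩
        exact (hgderiv z hzball).hasDerivWithinAt
    · have key := constant_of_has_deriv_right_zero (f := g) (a := x) (b := 0) ?_ ?_
      · exact (key 0 (Set.right_mem_Icc.2 hx0.le)).symm
      · intro z hz
        have hzball : z ∈ Metric.ball (0:ℝ) R := by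
          rw [mem_ball_zero_iff, Real.norm_eq_abs, abs_lt]
          have hxR' : -R < x := (abs_lt.1 hxR).1
          exact ⟨by linarith [hz.1], by linarith [hz.2]⟩
        exact ((hgderiv z hzball).continuousAt).continuousWithinAt
      · intro z hz
        have hzball : z ∈ Metric.ball (0:ℝ) R := by
          rw [mem_ball_zero_iff, Real.norm_eq_abs, abs_lt]
          have hxR' : -R < x := (abs_lt.1 hxR).1
          exact ⟨by linarith [hz.1], by linarith [hz.2]⟩
        exact (hgderiv z hzball).hasDerivWithinAt
  have hF0 : F 0 = 1 := by
    rw [hF]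
    simp only []
    rw [tsum_eq_single 0 ?_]
    · simp [genBinom_zero]
    · intro k hk
      simp [zero_pow hk]
  have hg0' : g 0 = 1 := by
    simp [hg, hF0]
  have h1x : 0 < 1 + x := by
    obtain ⟨hl, _⟩ := abs_lt.1 hx
    linarith
  have h2 : F x * (1+x) ^ (-s) = 1 := hgx.trans hg0'
  rw [Real.rpow_neg h1x.le] at h2
  have h3 : (1+x) ^ s ≠ 0 := (Real.rpow_pos_of_pos h1x s).ne'
  have hFx : F x = (1 + x) ^ s := by
    field_simp at h2
    exact h2
  have hsum : Summable fun k : ℕ => genBinom s k * x ^ k := summable_binomial s hxR.le hR0 hR1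
  have hhs := hsum.hasSum
  rw [show (∑' k : ℕ, genBinom s k * x ^ k) = F x from rfl, hFx] at hhs
  exact hhs

lemma integral_cos_pow_two_pi_even (j : ℕ) :
    ∫ x in (0:ℝ)..(2*π), Real.cos x ^ (2*j) = 2*π * (Nat.centralBinom j : ℝ) / 4 ^ j := by
  induction j with
  | zero => simp
  | succ j ih =>
      have h2 : 2 * (j+1) = 2*j + 2 := by ring
      rw [h2, integral_cos_pow]
      rw [Real.sin_two_pi, Real.sin_zero]
      rw [ih]
      have hrec := Nat.succ_mul_centralBinom_succ j
      have hrec' : ((j:ℝ)+1) * (Nat.centralBinom (j+1) : ℝ)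
          = 2 * (2*(j:ℝ)+1) * (Nat.centralBinom j : ℝ) := by
        exact_mod_cast congrArg (Nat.cast : ℕ → ℝ) hrec
      have h4 : (4:ℝ) ^ (j+1) = 4 * 4 ^ j := by ring
      have hj1 : ((j:ℝ)+1) ≠ 0 := by positivity
      have h4j : (4:ℝ) ^ j ≠ 0 := by positivity
      rw [h4]
      push_cast
      field_simp
      linear_combination (-(4 * π)) * hrec'

lemma integral_cos_pow_two_pi_odd (j : ℕ) :
    ∫ x in (0:ℝ)..(2*π), Real.cos x ^ (2*j+1) = 0 := by
  induction j with
  | zero => simp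
  | succ j ih =>
      have h2 : 2 * (j+1) + 1 = (2*j+1) + 2 := by ring
      rw [h2, integral_cos_pow, Real.sin_two_pi, Real.sin_zero, ih]
      simp

/-- `Kv m = ∫_0^1 (2 cos (2π θ))^m dθ`. -/
noncomputable def Kv (m : ℕ) : ℝ := ∫ θ in (0:ℝ)..1, (2 * Real.cos (2*π*θ)) ^ m

lemma Kv_eq (m : ℕ) : Kv m = 2 ^ m / (2*π) * ∫ x in (0:ℝ)..(2*π), Real.cos x ^ m := by
  have hπ : (2*π) ≠ 0 := by positivity
  unfold Kv
  have h1 : ∀ θ : ℝ, (2 * Real.cos (2*π*θ)) ^ m = 2 ^ m * Real.cos (2*π*θ) ^ m := by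
    intro θ; rw [mul_pow]
  simp_rw [h1]
  rw [intervalIntegral.integral_const_mul]
  have h2 := intervalIntegral.integral_comp_mul_left (a := (0:ℝ)) (b := 1)
    (fun x => Real.cos x ^ m) hπ
  simp only [mul_zero, mul_one] at h2
  rw [h2]
  rw [smul_eq_mul]
  ring

lemma Kv_even (j : ℕ) : Kv (2*j) = (Nat.centralBinom j : ℝ) := by
  rw [Kv_eq, integral_cos_pow_two_pi_even]
  have hπ : (0:ℝ) < π := Real.pi_pos
  have h4 : (2:ℝ) ^ (2*j) = 4 ^ j := by
    rw [pow_mul]; norm_num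
  rw [h4]
  have h4j : (4:ℝ) ^ j ≠ 0 := by positivity
  field_simp

lemma Kv_odd (j : ℕ) : Kv (2*j+1) = 0 := by
  rw [Kv_eq, integral_cos_pow_two_pi_odd]
  simp

lemma Kv_of_odd {m : ℕ} (hm : Odd m) : Kv m = 0 := by
  obtain ⟨j, rfl⟩ := hm
  exact Kv_odd j

/-- the key combinatorial identity -/
lemma choose_identity (j i : ℕ) (hij : i ≤ j) :
    ((2*j).choose (2*i) : ℝ) * (Nat.centralBinom i : ℝ) * (Nat.centralBinom (j-i) : ℝ)
      = (Nat.centralBinom j : ℝ) * ((j.choose i : ℝ))^2 := by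
  have h1 : 2*i ≤ 2*j := by omega
  have h2 : i ≤ 2*i := by omega
  have h3 : j ≤ 2*j := by omega
  have h4 : j - i ≤ 2*(j-i) := by omega
  rw [Nat.centralBinom, Nat.centralBinom, Nat.centralBinom]
  rw [Nat.cast_choose ℝ h1, Nat.cast_choose ℝ h2, Nat.cast_choose ℝ h3, Nat.cast_choose ℝ h4,
    Nat.cast_choose ℝ hij]
  have e1 : 2*j - 2*i = 2*(j-i) := by omega
  have e2 : 2*i - i = i := by omega
  have e3 : 2*j - j = j := by omega
  have e4 : 2*(j-i) - (j-i) = j - i := by omega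
  rw [e1, e2, e3, e4]
  have f1 : ((2*j).factorial : ℝ) ≠ 0 := Nat.cast_ne_zero.2 (Nat.factorial_ne_zero _)
  have f2 : ((2*i).factorial : ℝ) ≠ 0 := Nat.cast_ne_zero.2 (Nat.factorial_ne_zero _)
  have f3 : ((2*(j-i)).factorial : ℝ) ≠ 0 := Nat.cast_ne_zero.2 (Nat.factorial_ne_zero _)
  have f4 : ((i).factorial : ℝ) ≠ 0 := Nat.cast_ne_zero.2 (Nat.factorial_ne_zero _)
  have f5 : ((j).factorial : ℝ) ≠ 0 := Nat.cast_ne_zero.2 (Nat.factorial_ne_zero _)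
  have f6 : ((j-i).factorial : ℝ) ≠ 0 := Nat.cast_ne_zero.2 (Nat.factorial_ne_zero _)
  field_simp

lemma sum_choose_sq (j : ℕ) :
    ∑ i ∈ Finset.range (j+1), (j.choose i)^2 = Nat.centralBinom j := by
  rw [Nat.centralBinom, two_mul, Nat.add_choose_eq]
  rw [Finset.Nat.sum_antidiagonal_eq_sum_range_succ_mk]
  apply Finset.sum_congr rfl
  intro i hi
  have hij : i ≤ j := Nat.lt_succ_iff.1 (Finset.mem_range.1 hi)
  rw [Nat.choose_symm hij, sq]

lemma inner_expand (p : ℝ) (k : ℕ) :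
    ∫ θ in (0:ℝ)..1, (p + 2 * Real.cos (2*π*θ)) ^ k
      = ∑ n ∈ Finset.range (k+1), ((k.choose n : ℕ) : ℝ) * p ^ n * Kv (k - n) := by
  have hexp : ∀ θ : ℝ, (p + 2 * Real.cos (2*π*θ)) ^ k
      = ∑ n ∈ Finset.range (k+1),
          (p ^ n * ((k.choose n : ℕ) : ℝ)) * (2 * Real.cos (2*π*θ)) ^ (k-n) := by
    intro θ
    rw [add_pow]
    apply Finset.sum_congr rfl
    intro n _
    ring
  simp_rw [hexp]
  rw [intervalIntegral.integral_finset_sum]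
  · apply Finset.sum_congr rfl
    intro n _
    rw [intervalIntegral.integral_const_mul]
    rw [show (∫ θ in (0:ℝ)..1, (2 * Real.cos (2*π*θ)) ^ (k-n)) = Kv (k-n) from rfl]
    ring
  · intro n _
    apply Continuous.intervalIntegrable
    fun_prop

lemma outer_expand (k : ℕ) :
    ∫ θ in (0:ℝ)..1, (∑ n ∈ Finset.range (k+1),
        ((k.choose n : ℕ) : ℝ) * (2 * Real.cos (2*π*θ)) ^ n * Kv (k - n))
      = ∑ n ∈ Finset.range (k+1), ((k.choose n : ℕ) : ℝ) * Kv n * Kv (k - n) := by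
  rw [intervalIntegral.integral_finset_sum]
  · apply Finset.sum_congr rfl
    intro n _
    have h1 : ∀ θ : ℝ, ((k.choose n : ℕ) : ℝ) * (2 * Real.cos (2*π*θ)) ^ n * Kv (k-n)
        = (2 * Real.cos (2*π*θ)) ^ n * (((k.choose n : ℕ) : ℝ) * Kv (k-n)) := by
      intro θ; ring
    simp_rw [h1]
    rw [intervalIntegral.integral_mul_const]
    rw [show (∫ θ in (0:ℝ)..1, (2 * Real.cos (2*π*θ)) ^ n) = Kv n from rfl]
    ring
  · intro n _
    apply Continuous.intervalIntegrable
    fun_prop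

lemma Lsum_odd (j : ℕ) :
    (∑ n ∈ Finset.range (2*j+1+1), (((2*j+1).choose n : ℕ) : ℝ) * Kv n * Kv (2*j+1 - n)) = 0 := by
  apply Finset.sum_eq_zero
  intro n hn
  have hn' : n < 2*j+2 := Finset.mem_range.1 hn
  rcases Nat.even_or_odd n with he | ho
  · have hodd : Odd (2*j+1 - n) := by
      apply Nat.Odd.sub_even (by omega) ⟨j, by ring⟩ he
    rw [Kv_of_odd hodd]
    ring
  · rw [Kv_of_odd ho]
    ring

lemma Lsum_even (j : ℕ) :
    (∑ n ∈ Finset.range (2*j+1), (((2*j).choose n : ℕ) : ℝ) * Kv n * Kv (2*j - n))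
      = ((Nat.centralBinom j : ℕ) : ℝ) ^ 2 := by
  have himg : (Finset.range (j+1)).image (fun i => 2*i) ⊆ Finset.range (2*j+1) := by
    intro n hn
    obtain ⟨i, hi, rfl⟩ := Finset.mem_image.1 hn
    have := Finset.mem_range.1 hi
    exact Finset.mem_range.2 (by omega)
  have hzero : ∀ n ∈ Finset.range (2*j+1), n ∉ (Finset.range (j+1)).image (fun i => 2*i) →
      (((2*j).choose n : ℕ) : ℝ) * Kv n * Kv (2*j - n) = 0 := by
    intro n hn hnot
    have hn' : n < 2*j+1 := Finset.mem_range.1 hn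
    rcases Nat.even_or_odd n with he | ho
    · exfalso
      obtain ⟨i, rfl⟩ := he
      exact hnot (Finset.mem_image.2 ⟨i, Finset.mem_range.2 (by omega), by omega⟩)
    · rw [Kv_of_odd ho]
      ring
  rw [← Finset.sum_subset himg hzero]
  rw [Finset.sum_image (by intro x _ y _ h; simp only at h; omega)]
  have hterm : ∀ i ∈ Finset.range (j+1),
      (((2*j).choose (2*i) : ℕ) : ℝ) * Kv (2*i) * Kv (2*j - 2*i)
        = (Nat.centralBinom j : ℝ) * ((j.choose i : ℕ) : ℝ)^2 := by
    intro i hi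
    have hij : i ≤ j := by have := Finset.mem_range.1 hi; omega
    have h1 : 2*j - 2*i = 2*(j-i) := by omega
    rw [h1, Kv_even, Kv_even]
    exact choose_identity j i hij
  rw [Finset.sum_congr rfl hterm, ← Finset.mul_sum]
  have hcast : ∑ i ∈ Finset.range (j+1), ((j.choose i : ℕ) : ℝ)^2
      = ((Nat.centralBinom j : ℕ) : ℝ) := by
    exact_mod_cast sum_choose_sq j
  rw [hcast, sq]
theorem zeta_mahler_four_var' (c s : ℝ) (hc : 4 < c) :
    ∫ θ₁ in (0:ℝ)..1, ∫ θ₂ in (0:ℝ)..1,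
      (2 * Real.cos (2 * π * θ₁) + 2 * Real.cos (2 * π * θ₂) + c) ^ s
      = c ^ s * ∑' j : ℕ, genBinom s (2 * j) * (Nat.centralBinom j : ℝ) ^ 2 / c ^ (2 * j) := by
  have hc0 : (0:ℝ) < c := by linarith
  have hρ0 : (0:ℝ) < 4/c := by positivity
  have hρ1 : 4/c < 1 := (div_lt_one hc0).2 (by linarith)
  have hmaster := summable_master s hρ0 hρ1
  have habs : ∀ θ : ℝ, |2 * Real.cos (2 * π * θ)| ≤ 2 := by
    intro θ
    rw [abs_mul, abs_two]
    have h := Real.abs_cos_le_one (2 * π * θ)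
    linarith
  have hfin : IsFiniteMeasure (volume.restrict (Set.Ioc (0:ℝ) 1)) := by
    constructor
    rw [Measure.restrict_apply_univ]
    simp [Real.volume_Ioc]
  have hIoc1 : ((volume.restrict (Set.Ioc (0:ℝ) 1)) Set.univ).toReal = 1 := by
    rw [Measure.restrict_apply_univ]
    simp [Real.volume_Ioc]
  -- norm bound for the series terms
  have hnorm : ∀ (k : ℕ) (v : ℝ), |v| ≤ 4 → ‖genBinom s k * (v / c) ^ k‖ ≤ dBound s k * (4/c)^k := by
    intro k v hv
    rw [norm_mul, norm_pow, Real.norm_eq_abs, Real.norm_eq_abs]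
    have h1 : |v / c| ≤ 4/c := by
      rw [abs_div, abs_of_pos hc0]
      gcongr
    exact mul_le_mul (abs_genBinom_le s k)
      (pow_le_pow_left₀ (abs_nonneg _) h1 k) (by positivity) (dBound_pos s k).le
  have hmono : ∀ k : ℕ, dBound s k * (4/c)^k ≤ ((k:ℝ)+1) * dBound s k * (4/c)^k := by
    intro k
    have hd := dBound_pos s k
    have hk1 : (1:ℝ) ≤ (k:ℝ)+1 := by
      have : (0:ℝ) ≤ (k:ℝ) := Nat.cast_nonneg k
      linarith
    exact mul_le_mul_of_nonneg_right (le_mul_of_one_le_left hd.le hk1) (by positivity)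
  -- inner integral identity
  have hinner : ∀ p : ℝ, |p| ≤ 2 →
      (∫ θ₂ in (0:ℝ)..1, (p + 2 * Real.cos (2 * π * θ₂) + c) ^ s)
      = c ^ s * ∑' k : ℕ, genBinom s k * (c ^ k)⁻¹ *
          (∑ n ∈ Finset.range (k+1), ((k.choose n : ℕ) : ℝ) * p ^ n * Kv (k - n)) := by
    intro p hp
    have habs4 : ∀ θ : ℝ, |p + 2 * Real.cos (2 * π * θ)| ≤ 4 := by
      intro θ
      calc |p + 2 * Real.cos (2 * π * θ)| ≤ |p| + |2 * Real.cos (2 * π * θ)| := abs_add_le _ _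
        _ ≤ 4 := by linarith [habs θ]
    have hpt : ∀ θ₂ : ℝ, (p + 2 * Real.cos (2 * π * θ₂) + c) ^ s
        = c ^ s * ∑' k : ℕ, genBinom s k * ((p + 2 * Real.cos (2 * π * θ₂)) / c) ^ k := by
      intro θ₂
      have huρ : |(p + 2 * Real.cos (2 * π * θ₂)) / c| ≤ 4/c := by
        rw [abs_div, abs_of_pos hc0]
        gcongr
        exact habs4 θ₂
      have hu1 : |(p + 2 * Real.cos (2 * π * θ₂)) / c| < 1 := lt_of_le_of_lt huρ hρ1
      have hpos : (0:ℝ) ≤ 1 + (p + 2 * Real.cos (2 * π * θ₂)) / c := by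
        have h1 := (abs_le.1 huρ).1
        linarith
      have h1pu : p + 2 * Real.cos (2 * π * θ₂) + c
          = c * (1 + (p + 2 * Real.cos (2 * π * θ₂)) / c) := by
        field_simp
        ring
      rw [h1pu, Real.mul_rpow hc0.le hpos]
      congr 1
      exact ((hasSum_binomial s hu1).tsum_eq).symm
    simp_rw [hpt]
    rw [intervalIntegral.integral_const_mul]
    congr 1
    rw [intervalIntegral.integral_of_le zero_le_one]
    have hint : ∀ k : ℕ, Integrable
        (fun θ => genBinom s k * ((p + 2 * Real.cos (2 * π * θ)) / c) ^ k)
        (volume.restrict (Set.Ioc (0:ℝ) 1)) := by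
      intro k
      exact Continuous.integrableOn_Ioc (by fun_prop)
    have hsum : Summable fun k : ℕ => ∫ θ,
        ‖genBinom s k * ((p + 2 * Real.cos (2 * π * θ)) / c) ^ k‖
          ∂(volume.restrict (Set.Ioc (0:ℝ) 1)) := by
      apply Summable.of_nonneg_of_le
        (fun k => integral_nonneg (fun θ => norm_nonneg _)) ?_ hmaster
      intro k
      have hb : ∀ θ : ℝ, ‖‖genBinom s k * ((p + 2 * Real.cos (2 * π * θ)) / c) ^ k‖‖
          ≤ dBound s k * (4/c)^k := by
        intro θ
        rw [norm_norm]
        exact hnorm k _ (habs4 θ)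
      calc (∫ θ, ‖genBinom s k * ((p + 2 * Real.cos (2 * π * θ)) / c) ^ k‖
            ∂(volume.restrict (Set.Ioc (0:ℝ) 1)))
          ≤ ‖∫ θ, ‖genBinom s k * ((p + 2 * Real.cos (2 * π * θ)) / c) ^ k‖
            ∂(volume.restrict (Set.Ioc (0:ℝ) 1))‖ := le_abs_self _
        _ ≤ dBound s k * (4/c)^k * ((volume.restrict (Set.Ioc (0:ℝ) 1)) Set.univ).toReal :=
            norm_integral_le_of_norm_le_const (Filter.Eventually.of_forall hb)
        _ = dBound s k * (4/c)^k := by rw [hIoc1, mul_one]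
        _ ≤ ((k:ℝ)+1) * dBound s k * (4/c)^k := hmono k
    have key := MeasureTheory.integral_tsum_of_summable_integral_norm
      (μ := volume.restrict (Set.Ioc (0:ℝ) 1))
      (F := fun k θ => genBinom s k * ((p + 2 * Real.cos (2 * π * θ)) / c) ^ k) hint hsum
    rw [← key]
    refine tsum_congr fun k => ?_
    rw [← intervalIntegral.integral_of_le zero_le_one]
    have hrew : ∀ θ : ℝ, genBinom s k * ((p + 2 * Real.cos (2 * π * θ)) / c) ^ k
        = genBinom s k * (c ^ k)⁻¹ * (p + 2 * Real.cos (2 * π * θ)) ^ k := by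
      intro θ
      rw [div_pow]
      ring
    simp_rw [hrew]
    rw [intervalIntegral.integral_const_mul, inner_expand]
  -- rewrite the outer integrand
  have houter : ∀ θ₁ : ℝ,
      (∫ θ₂ in (0:ℝ)..1, (2 * Real.cos (2 * π * θ₁) + 2 * Real.cos (2 * π * θ₂) + c) ^ s)
      = c ^ s * ∑' k : ℕ, genBinom s k * (c ^ k)⁻¹ *
          (∑ n ∈ Finset.range (k+1), ((k.choose n : ℕ) : ℝ)
            * (2 * Real.cos (2 * π * θ₁)) ^ n * Kv (k - n)) :=
    fun θ₁ => hinner (2 * Real.cos (2 * π * θ₁)) (habs θ₁)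
  simp_rw [houter]
  rw [intervalIntegral.integral_const_mul]
  congr 1
  -- bound on the partial expansions
  have hPbound : ∀ (k : ℕ) (θ : ℝ),
      |∑ n ∈ Finset.range (k+1), ((k.choose n : ℕ) : ℝ)
        * (2 * Real.cos (2 * π * θ)) ^ n * Kv (k - n)| ≤ 4 ^ k := by
    intro k θ
    rw [← inner_expand (2 * Real.cos (2 * π * θ)) k]
    have hb := intervalIntegral.norm_integral_le_of_norm_le_const (a := (0:ℝ)) (b := 1)
      (C := 4^k) (f := fun θ₂ => (2 * Real.cos (2 * π * θ) + 2 * Real.cos (2 * π * θ₂)) ^ k) ?_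
    · simpa using hb
    · intro x _
      rw [Real.norm_eq_abs, abs_pow]
      apply pow_le_pow_left₀ (abs_nonneg _)
      calc |2 * Real.cos (2 * π * θ) + 2 * Real.cos (2 * π * x)|
          ≤ |2 * Real.cos (2 * π * θ)| + |2 * Real.cos (2 * π * x)| := abs_add_le _ _
        _ ≤ 4 := by linarith [habs θ, habs x]
  rw [intervalIntegral.integral_of_le zero_le_one]
  have hint2 : ∀ k : ℕ, Integrable
      (fun θ => genBinom s k * (c ^ k)⁻¹ *
        (∑ n ∈ Finset.range (k+1), ((k.choose n : ℕ) : ℝ)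
          * (2 * Real.cos (2 * π * θ)) ^ n * Kv (k - n)))
      (volume.restrict (Set.Ioc (0:ℝ) 1)) := by
    intro k
    apply Continuous.integrableOn_Ioc
    apply Continuous.mul continuous_const
    apply continuous_finset_sum
    intro n _
    fun_prop
  have hsum2 : Summable fun k : ℕ => ∫ θ,
      ‖genBinom s k * (c ^ k)⁻¹ *
        (∑ n ∈ Finset.range (k+1), ((k.choose n : ℕ) : ℝ)
          * (2 * Real.cos (2 * π * θ)) ^ n * Kv (k - n))‖
        ∂(volume.restrict (Set.Ioc (0:ℝ) 1)) := by
    apply Summable.of_nonneg_of_le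
      (fun k => integral_nonneg (fun θ => norm_nonneg _)) ?_ hmaster
    intro k
    have hb : ∀ θ : ℝ, ‖‖genBinom s k * (c ^ k)⁻¹ *
        (∑ n ∈ Finset.range (k+1), ((k.choose n : ℕ) : ℝ)
          * (2 * Real.cos (2 * π * θ)) ^ n * Kv (k - n))‖‖ ≤ dBound s k * (4/c)^k := by
      intro θ
      rw [norm_norm, norm_mul, norm_mul, Real.norm_eq_abs, Real.norm_eq_abs, Real.norm_eq_abs]
      have h1 : |(c ^ k)⁻¹| = (c ^ k)⁻¹ := abs_of_pos (by positivity)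
      rw [h1]
      have h2 : dBound s k * (4/c)^k = dBound s k * (c ^ k)⁻¹ * 4 ^ k := by
        rw [div_pow]
        ring
      rw [h2]
      apply mul_le_mul ?_ (hPbound k θ) (abs_nonneg _) ?_
      · exact mul_le_mul_of_nonneg_right (abs_genBinom_le s k) (by positivity)
      · have := dBound_pos s k
        positivity
    calc (∫ θ, ‖genBinom s k * (c ^ k)⁻¹ *
          (∑ n ∈ Finset.range (k+1), ((k.choose n : ℕ) : ℝ)
            * (2 * Real.cos (2 * π * θ)) ^ n * Kv (k - n))‖
          ∂(volume.restrict (Set.Ioc (0:ℝ) 1)))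
        ≤ ‖∫ θ, ‖genBinom s k * (c ^ k)⁻¹ *
          (∑ n ∈ Finset.range (k+1), ((k.choose n : ℕ) : ℝ)
            * (2 * Real.cos (2 * π * θ)) ^ n * Kv (k - n))‖
          ∂(volume.restrict (Set.Ioc (0:ℝ) 1))‖ := le_abs_self _
      _ ≤ dBound s k * (4/c)^k * ((volume.restrict (Set.Ioc (0:ℝ) 1)) Set.univ).toReal :=
          norm_integral_le_of_norm_le_const (Filter.Eventually.of_forall hb)
      _ = dBound s k * (4/c)^k := by rw [hIoc1, mul_one]
      _ ≤ ((k:ℝ)+1) * dBound s k * (4/c)^k := hmono k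
  have key2 := MeasureTheory.integral_tsum_of_summable_integral_norm
    (μ := volume.restrict (Set.Ioc (0:ℝ) 1))
    (F := fun k θ => genBinom s k * (c ^ k)⁻¹ *
      (∑ n ∈ Finset.range (k+1), ((k.choose n : ℕ) : ℝ)
        * (2 * Real.cos (2 * π * θ)) ^ n * Kv (k - n))) hint2 hsum2
  rw [← key2]
  have hGk : ∀ k : ℕ, (∫ θ, genBinom s k * (c ^ k)⁻¹ *
      (∑ n ∈ Finset.range (k+1), ((k.choose n : ℕ) : ℝ)
        * (2 * Real.cos (2 * π * θ)) ^ n * Kv (k - n))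
        ∂(volume.restrict (Set.Ioc (0:ℝ) 1)))
      = genBinom s k * (c ^ k)⁻¹ *
        (∑ n ∈ Finset.range (k+1), ((k.choose n : ℕ) : ℝ) * Kv n * Kv (k - n)) := by
    intro k
    rw [← intervalIntegral.integral_of_le zero_le_one,
      intervalIntegral.integral_const_mul, outer_expand]
  rw [tsum_congr hGk]
  -- reindex over even integers
  have hinj : Function.Injective (fun j : ℕ => 2*j) := fun a b h => by dsimp at h; omega
  have hsupp : Function.support (fun k : ℕ => genBinom s k * (c ^ k)⁻¹ *
      (∑ n ∈ Finset.range (k+1), ((k.choose n : ℕ) : ℝ) * Kv n * Kv (k - n)))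
      ⊆ Set.range (fun j : ℕ => 2*j) := by
    intro k hk
    rcases Nat.even_or_odd k with he | ho
    · obtain ⟨m, rfl⟩ := he
      exact ⟨m, by simp [two_mul]⟩
    · exfalso
      apply hk
      obtain ⟨m, rfl⟩ := ho
      dsimp only
      rw [Lsum_odd m]
      ring
  rw [← Function.Injective.tsum_eq hinj hsupp]
  refine tsum_congr fun j => ?_
  rw [Lsum_even j]
  rw [div_eq_mul_inv]
  ring
end ZMF

theorem zeta_mahler_four_var (c s : ℝ) (hc : 4 < c) :
    ∫ θ₁ in (0:ℝ)..1, ∫ θ₂ in (0:ℝ)..1,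
      (2 * Real.cos (2 * π * θ₁) + 2 * Real.cos (2 * π * θ₂) + c) ^ s
      = c ^ s * ∑' j : ℕ, genBinom s (2 * j) * (Nat.centralBinom j : ℝ) ^ 2 / c ^ (2 * j) :=
  ZMF.zeta_mahler_four_var' c s hc
end
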